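/- arXiv:1309.5649 — 12 statements merged into one kernel-verified Lean document; each statement's English description precedes it below -/
import Mathlib

section
/- Let D be a directed set and F a functor from D to commutative rings such that each transition map F(d ≤ d') is faithfully flat and each F(d) is coherent. Then the colimit colim_D F is a coherent ring. -/
/-- A commutative ring is *coherent* if the kernel of every homomorphism between finitely
generated free modules is finitely generated. -/
def IsCoherentRing (A : Type*) [CommRing A] : Prop :=
  ∀ (n m : ℕ) (f : (Fin n → A) →ₗ[A] (Fin m → A)), (LinearMap.ker f).FG

/-- Base change of `mulVec` along a ring hom. -/
lemma mulVec_map_comp' {R S : Type*} [CommRing R] [CommRing S] (φ : R →+* S)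
    {n m : ℕ} (M₀ : Matrix (Fin m) (Fin n) R) (v : Fin n → R) :
    (M₀.map φ).mulVec (φ ∘ v) = φ ∘ (M₀.mulVec v) := by
  funext t
  simp [Matrix.mulVec, dotProduct, map_sum, Function.comp]

open TensorProduct in
set_option synthInstance.maxHeartbeats 1000000 in
set_option maxHeartbeats 1000000 in
/-- Flat base change of the kernel of a matrix. -/
lemma ker_mulVecLin_map {R S : Type*} [CommRing R] [CommRing S] [Algebra R S]
    [Module.Flat R S] {n m : ℕ} (M₀ : Matrix (Fin m) (Fin n) R) :
    LinearMap.ker (Matrix.mulVecLin (M₀.map (algebraMap R S))) =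
      Submodule.span S ((fun v => algebraMap R S ∘ v) ''
        (LinearMap.ker (Matrix.mulVecLin M₀))) := by
  classical
  set φ := algebraMap R S with hφ
  set f₀ := Matrix.mulVecLin M₀ with hf₀
  set eN := TensorProduct.piScalarRight R S S (Fin n) with heN
  set eM := TensorProduct.piScalarRight R S S (Fin m) with heM
  set B := AlgebraTensorModule.lTensor S S f₀ with hB
  have comm : ∀ z : S ⊗[R] (Fin n → R),
      Matrix.mulVecLin (M₀.map φ) (eN z) = eM (B z) := by
    intro z
    induction z using TensorProduct.induction_on with
    | zero => rw [map_zero, map_zero, map_zero, map_zero]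
    | tmul s v =>
        have h1 : eN (s ⊗ₜ v) = fun j => v j • s := by simp [heN]
        have h2 : eM (B (s ⊗ₜ v)) = fun j => (f₀ v) j • s := by simp [heM, hB]
        rw [h1, h2]
        funext t
        simp only [Matrix.mulVecLin_apply, hf₀]
        simp [Matrix.mulVec, dotProduct, Algebra.smul_def, Finset.sum_mul, map_sum,
          mul_assoc]
        rfl
    | add x y hx hy => rw [map_add, map_add, map_add, map_add, hx, hy]
  have hrange : ∀ w : S ⊗[R] (LinearMap.ker f₀),
      eN ((AlgebraTensorModule.lTensor S S (LinearMap.ker f₀).subtype) w) ∈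
        Submodule.span S ((fun v => φ ∘ v) '' (LinearMap.ker f₀)) := by
    intro w
    induction w using TensorProduct.induction_on with
    | zero => rw [map_zero, map_zero]; exact Submodule.zero_mem _
    | tmul s u =>
        have : eN ((AlgebraTensorModule.lTensor S S (LinearMap.ker f₀).subtype) (s ⊗ₜ u))
            = s • (φ ∘ (u : Fin n → R)) := by
          rw [AlgebraTensorModule.lTensor_tmul]
          funext j
          simp [heN, Algebra.smul_def, mul_comm]
          rfl
        rw [this]
        exact Submodule.smul_mem _ _ (Submodule.subset_span ⟨u, u.2, rfl⟩)
    | add a b ha hb =>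
        rw [map_add, map_add]
        exact Submodule.add_mem _ ha hb
  ext x
  constructor
  · intro hx
    obtain ⟨z, rfl⟩ := eN.surjective x
    have hz : B z = 0 := by
      have h := comm z
      rw [LinearMap.mem_ker] at hx
      rw [hx] at h
      exact eM.injective (by rw [← h, map_zero])
    have hzz : z ∈ LinearMap.ker B := hz
    rw [Module.Flat.ker_lTensor_eq S S f₀] at hzz
    obtain ⟨w, rfl⟩ := hzz
    exact hrange w
  · intro hx
    refine Submodule.span_le.2 ?_ hx
    rintro _ ⟨v, hv, rfl⟩
    rw [SetLike.mem_coe, LinearMap.mem_ker, Matrix.mulVecLin_apply, mulVec_map_comp' φ M₀ v]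
    have : M₀.mulVec v = 0 := hv
    rw [this]
    funext t
    simp

set_option maxHeartbeats 1000000 in
/-- Let `D` be a directed set and `F` a functor from `D` to commutative rings such that each
transition map is faithfully flat and each `F(d)` is coherent.  Then the colimit `colim_D F`
is a coherent ring. -/
theorem stmt3 (ι : Type*) [Preorder ι] [IsDirected ι (· ≤ ·)] [Nonempty ι]
    [DecidableEq ι]
    (G : ι → Type*) [∀ i, CommRing (G i)]
    (f : ∀ i j, i ≤ j → G i →+* G j)
    [DirectedSystem G fun i j h => f i j h]
    (hflat : ∀ i j (h : i ≤ j),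
      letI : Algebra (G i) (G j) := (f i j h).toAlgebra
      Module.FaithfullyFlat (G i) (G j))
    (hcoh : ∀ i, IsCoherentRing (G i)) :
    IsCoherentRing (Ring.DirectLimit G fun i j h => f i j h) := by
  classical
  intro n m F
  set A := Ring.DirectLimit G fun i j h => f i j h with hA
  let ofA : ∀ i, G i →+* A := fun i => Ring.DirectLimit.of G (fun i j h => f i j h) i
  set M : Matrix (Fin m) (Fin n) A := LinearMap.toMatrix' F with hMdef
  have hFM : ∀ x, F x = M.mulVec x := by
    intro x
    rw [← Matrix.toLin'_apply, hMdef, Matrix.toLin'_toMatrix']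
  -- lift the matrix entries to a single stage `i₀`
  have hlift : ∀ t j, ∃ i, ∃ x : G i, ofA i x = M t j := fun t j =>
    Ring.DirectLimit.exists_of (M t j)
  choose idx ent hent using hlift
  obtain ⟨i₀, hi₀⟩ := Finset.exists_le
    ((Finset.univ : Finset (Fin m × Fin n)).image fun p => idx p.1 p.2)
  have hle : ∀ t j, idx t j ≤ i₀ := fun t j =>
    hi₀ _ (Finset.mem_image_of_mem _ (Finset.mem_univ (t, j)))
  set M₀ : Matrix (Fin m) (Fin n) (G i₀) := fun t j => f (idx t j) i₀ (hle t j) (ent t j)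
    with hM₀
  have hM : M = M₀.map (ofA i₀) := by
    funext t j
    rw [Matrix.map_apply, hM₀]
    rw [show (ofA i₀) (f (idx t j) i₀ (hle t j) (ent t j)) = (ofA (idx t j)) (ent t j) from
      Ring.DirectLimit.of_f _ _]
    exact (hent t j).symm
  obtain ⟨T, hT⟩ := hcoh i₀ n m (Matrix.mulVecLin M₀)
  refine ⟨T.image (fun v => ⇑(ofA i₀) ∘ v), ?_⟩
  rw [Finset.coe_image]
  apply le_antisymm
  · rw [Submodule.span_le]
    rintro _ ⟨v, hv, rfl⟩
    rw [SetLike.mem_coe, LinearMap.mem_ker, hFM, hM]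
    have hv' : M₀.mulVec v = 0 := by
      have h1 : v ∈ Submodule.span (G i₀) (T : Set (Fin n → G i₀)) := Submodule.subset_span hv
      rw [hT, LinearMap.mem_ker, Matrix.mulVecLin_apply] at h1
      exact h1
    rw [mulVec_map_comp' (ofA i₀) M₀ v, hv']
    funext t
    simp
  · intro y hy
    rw [LinearMap.mem_ker, hFM] at hy
    have hylift : ∀ j, ∃ i, ∃ x : G i, ofA i x = y j := fun j =>
      Ring.DirectLimit.exists_of (y j)
    choose yidx yent hyent using hylift
    obtain ⟨j₁, hj₁⟩ := Finset.exists_le (insert i₀ (Finset.univ.image yidx))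
    have hij₁ : i₀ ≤ j₁ := hj₁ i₀ (Finset.mem_insert_self _ _)
    have hyle : ∀ j, yidx j ≤ j₁ := fun j =>
      hj₁ _ (Finset.mem_insert_of_mem (Finset.mem_image_of_mem _ (Finset.mem_univ j)))
    set w : Fin n → G j₁ := fun j => f (yidx j) j₁ (hyle j) (yent j) with hw
    have hwy : ∀ j, ofA j₁ (w j) = y j := fun j => by
      rw [hw]
      rw [show (ofA j₁) (f (yidx j) j₁ (hyle j) (yent j)) = (ofA (yidx j)) (yent j) from
        Ring.DirectLimit.of_f _ _]
      exact hyent j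
    set M₁ := M₀.map (f i₀ j₁ hij₁) with hM₁
    have hker1 : ⇑(ofA j₁) ∘ (M₁.mulVec w) = 0 := by
      rw [← mulVec_map_comp' (ofA j₁) M₁ w]
      have e1 : M₁.map (ofA j₁) = M₀.map (ofA i₀) := by
        funext t j
        simp only [Matrix.map_apply, hM₁]
        exact Ring.DirectLimit.of_f _ _
      have e2 : (⇑(ofA j₁)) ∘ w = y := funext hwy
      rw [e1, e2, ← hM]
      exact hy
    have hz : ∀ t, ∃ j₂, ∃ h : j₁ ≤ j₂, f j₁ j₂ h ((M₁.mulVec w) t) = 0 := by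
      intro t
      exact Ring.DirectLimit.of.zero_exact (congrFun hker1 t)
    choose tj₂ htj₂le htj₂ using hz
    obtain ⟨j₂, hj₂⟩ := Finset.exists_le (insert j₁ (Finset.univ.image tj₂))
    have hj₁j₂ : j₁ ≤ j₂ := hj₂ j₁ (Finset.mem_insert_self _ _)
    have htle : ∀ t, tj₂ t ≤ j₂ := fun t =>
      hj₂ _ (Finset.mem_insert_of_mem (Finset.mem_image_of_mem _ (Finset.mem_univ t)))
    have hi₀j₂ : i₀ ≤ j₂ := hij₁.trans hj₁j₂
    set w' : Fin n → G j₂ := fun j => f j₁ j₂ hj₁j₂ (w j) with hw'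
    letI : Algebra (G i₀) (G j₂) := (f i₀ j₂ hi₀j₂).toAlgebra
    haveI : Module.FaithfullyFlat (G i₀) (G j₂) := hflat i₀ j₂ hi₀j₂
    have halg : algebraMap (G i₀) (G j₂) = f i₀ j₂ hi₀j₂ := rfl
    have hker2 : w' ∈ LinearMap.ker (Matrix.mulVecLin (M₀.map (algebraMap (G i₀) (G j₂)))) := by
      rw [LinearMap.mem_ker, Matrix.mulVecLin_apply]
      have e3 : M₀.map (algebraMap (G i₀) (G j₂)) = M₁.map (f j₁ j₂ hj₁j₂) := by
        funext t j
        simp only [Matrix.map_apply, hM₁, halg]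
        exact (DirectedSystem.map_map (f := fun i j h => ⇑(f i j h)) hij₁ hj₁j₂ _).symm
      rw [e3, show w' = ⇑(f j₁ j₂ hj₁j₂) ∘ w from rfl, mulVec_map_comp']
      funext t
      have e4 : f j₁ j₂ hj₁j₂ ((M₁.mulVec w) t) =
          f (tj₂ t) j₂ (htle t) (f j₁ (tj₂ t) (htj₂le t) ((M₁.mulVec w) t)) :=
        (DirectedSystem.map_map (f := fun i j h => ⇑(f i j h)) (htj₂le t) (htle t) _).symm
      rw [Function.comp_apply, e4, htj₂ t, map_zero, Pi.zero_apply]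
    rw [ker_mulVecLin_map] at hker2
    -- now push down to `A`
    have inner : ∀ x, x ∈ Submodule.span (G i₀) (T : Set (Fin n → G i₀)) →
        ⇑(ofA i₀) ∘ x ∈ Submodule.span A ((fun v => ⇑(ofA i₀) ∘ v) '' (T : Set (Fin n → G i₀))) := by
      intro x hx
      induction hx using Submodule.span_induction with
      | mem x hx => exact Submodule.subset_span ⟨x, hx, rfl⟩
      | zero =>
          have : ⇑(ofA i₀) ∘ (0 : Fin n → G i₀) = 0 := by funext j; simp
          rw [this]; exact Submodule.zero_mem _
      | add a b ha hb iha ihb =>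
          have : ⇑(ofA i₀) ∘ (a + b) = ⇑(ofA i₀) ∘ a + ⇑(ofA i₀) ∘ b := by
            funext j; simp
          rw [this]; exact Submodule.add_mem _ iha ihb
      | smul r x hx ihx =>
          have : ⇑(ofA i₀) ∘ (r • x) = (ofA i₀ r) • (⇑(ofA i₀) ∘ x) := by
            funext j; simp [Algebra.smul_def]
          rw [this]; exact Submodule.smul_mem _ _ ihx
    have outer : ∀ u, u ∈ Submodule.span (G j₂)
        ((fun v => ⇑(algebraMap (G i₀) (G j₂)) ∘ v) '' (LinearMap.ker (Matrix.mulVecLin M₀) : Set (Fin n → G i₀))) →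
        ⇑(ofA j₂) ∘ u ∈ Submodule.span A ((fun v => ⇑(ofA i₀) ∘ v) '' (T : Set (Fin n → G i₀))) := by
      intro u hu
      induction hu using Submodule.span_induction with
      | mem x hx =>
          obtain ⟨v, hv, rfl⟩ := hx
          have : ⇑(ofA j₂) ∘ (⇑(algebraMap (G i₀) (G j₂)) ∘ v) = ⇑(ofA i₀) ∘ v := by
            funext j
            rw [Function.comp_apply, Function.comp_apply, halg]
            exact Ring.DirectLimit.of_f _ _
          rw [this]
          apply inner
          rw [hT]
          exact hv
      | zero =>
          have : ⇑(ofA j₂) ∘ (0 : Fin n → G j₂) = 0 := by funext j; simp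
          rw [this]; exact Submodule.zero_mem _
      | add a b ha hb iha ihb =>
          have : ⇑(ofA j₂) ∘ (a + b) = ⇑(ofA j₂) ∘ a + ⇑(ofA j₂) ∘ b := by
            funext j; simp
          rw [this]; exact Submodule.add_mem _ iha ihb
      | smul r x hx ihx =>
          have : ⇑(ofA j₂) ∘ (r • x) = (ofA j₂ r) • (⇑(ofA j₂) ∘ x) := by
            funext j; simp [Algebra.smul_def]
          rw [this]; exact Submodule.smul_mem _ _ ihx
    have hyw : y = ⇑(ofA j₂) ∘ w' := by
      funext j
      rw [Function.comp_apply, hw']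
      rw [show (ofA j₂) (f j₁ j₂ hj₁j₂ (w j)) = (ofA j₁) (w j) from Ring.DirectLimit.of_f _ _]
      exact (hwy j).symm
    rw [hyw]
    exact outer w' hker2
end

section
/- If f : A → B is a faithfully flat homomorphism of commutative rings and B is coherent, then A is coherent. -/
open TensorProduct

/-- If `f : A → B` is a faithfully flat homomorphism of commutative rings and `B` is coherent,
then `A` is coherent. -/
theorem stmt4 (A B : Type*) [CommRing A] [CommRing B] (f : A →+* B)
    (hff : letI : Algebra A B := f.toAlgebra; Module.FaithfullyFlat A B)
    (hB : IsCoherentRing B) : IsCoherentRing A := by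
  letI : Algebra A B := f.toAlgebra
  haveI : Module.FaithfullyFlat A B := hff
  intro n m g
  classical
  let en := TensorProduct.piScalarRight A B B (Fin n)
  let em := TensorProduct.piScalarRight A B B (Fin m)
  let gB := g.baseChange B
  let h : (Fin n → B) →ₗ[B] (Fin m → B) := em.toLinearMap ∘ₗ gB ∘ₗ en.symm.toLinearMap
  obtain ⟨s, hs⟩ := hB n m h
  set K := LinearMap.ker g with hK
  have hexact : Function.Exact (K.subtype.baseChange B) gB :=
    Module.Flat.lTensor_exact B g.exact_subtype_ker_map
  have hrange : LinearMap.range (K.subtype.baseChange B) = LinearMap.ker gB :=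
    (LinearMap.exact_iff.mp hexact).symm
  have hinj : Function.Injective (K.subtype.baseChange B) :=
    Module.Flat.lTensor_preserves_injective_linearMap K.subtype K.injective_subtype
  -- choose preimages of generators
  have hmem : ∀ x ∈ s, ∃ y : B ⊗[A] K, K.subtype.baseChange B y = en.symm x := by
    intro x hx
    have hxk : en.symm x ∈ LinearMap.ker gB := by
      have : x ∈ LinearMap.ker h := by rw [← hs]; exact Submodule.subset_span hx
      simp only [LinearMap.mem_ker, h, LinearMap.comp_apply, LinearEquiv.coe_coe] at this ⊢
      exact (em.map_eq_zero_iff).mp this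
    rw [← hrange] at hxk
    exact hxk
  choose y hy using hmem
  have hdec : ∀ x (hx : x ∈ s), ∃ T : Finset (B × K), y x hx = ∑ p ∈ T, p.1 ⊗ₜ p.2 :=
    fun x hx => TensorProduct.exists_finset (y x hx)
  choose T hT using hdec
  let S' : Finset K := s.attach.biUnion (fun x => (T x.1 x.2).image Prod.snd)
  let N' : Submodule A K := Submodule.span A (S' : Set K)
  -- ker gB is contained in the image of B ⊗ N'
  have h1 : LinearMap.ker gB
      = Submodule.map (en.symm : _ ≃ₗ[B] _).toLinearMap (LinearMap.ker h) := by
    ext z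
    rw [Submodule.mem_map_equiv]
    simp only [LinearMap.mem_ker, h, LinearMap.comp_apply, LinearEquiv.coe_coe,
      LinearEquiv.symm_symm, LinearEquiv.symm_apply_apply]
    exact (em.map_eq_zero_iff).symm
  have hC : LinearMap.ker gB ≤
      LinearMap.range ((K.subtype.baseChange B) ∘ₗ (N'.subtype.baseChange B)) := by
    rw [h1, ← hs, Submodule.map_span, Submodule.span_le]
    rintro _ ⟨x, hx, rfl⟩
    show en.symm x ∈ _
    rw [← hy x hx, hT x hx, map_sum]
    refine Submodule.sum_mem _ fun p hp => ?_
    have hp2 : p.2 ∈ N' := by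
      refine Submodule.subset_span ?_
      simp only [S', Finset.coe_biUnion, Finset.mem_coe, Finset.mem_attach, Set.iUnion_true,
        Set.mem_iUnion, Finset.mem_image]
      exact ⟨⟨x, hx⟩, p, hp, rfl⟩
    refine ⟨p.1 ⊗ₜ ⟨p.2, hp2⟩, ?_⟩
    simp [LinearMap.baseChange_tmul]
  have hsurj : Function.Surjective (N'.subtype.baseChange B) := by
    intro z
    have hz : K.subtype.baseChange B z ∈ LinearMap.ker gB := by
      rw [← hrange]; exact ⟨z, rfl⟩
    obtain ⟨w, hw⟩ := hC hz
    exact ⟨w, hinj hw⟩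
  have hq : Function.Surjective (N'.mkQ.baseChange B) :=
    LinearMap.lTensor_surjective B (Submodule.mkQ_surjective N')
  haveI : Subsingleton (B ⊗[A] (K ⧸ N')) := by
    refine subsingleton_of_forall_eq 0 fun e => ?_
    obtain ⟨z, rfl⟩ := hq e
    obtain ⟨w, rfl⟩ := hsurj z
    rw [← LinearMap.comp_apply, ← LinearMap.baseChange_comp]
    have h0 : N'.mkQ ∘ₗ N'.subtype = 0 := by ext x; simp
    rw [h0]
    simp
  haveI : Subsingleton (K ⧸ N') := Module.FaithfullyFlat.lTensor_reflects_triviality A B _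
  have hN' : N' = ⊤ := Submodule.Quotient.subsingleton_iff.mp this
  have htop : (⊤ : Submodule A K).FG := ⟨S', by rw [← hN']⟩
  exact (Submodule.fg_top K).mp htop
end

section
/- Let f : A → B be a faithfully flat homomorphism of commutative rings and M an A-module. Then M is finitely generated (respectively, finitely presented) if and only if B ⊗_A M is a finitely generated (respectively, finitely presented) B-module. -/
open scoped TensorProduct
set_option maxHeartbeats 1000000

private lemma finite_descent {A B : Type*} [CommRing A] [CommRing B] [Algebra A B]
    [Module.FaithfullyFlat A B] {M : Type*} [AddCommGroup M] [Module A M]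
    (h : Module.Finite B (B ⊗[A] M)) : Module.Finite A M := by
  classical
  obtain ⟨s, hs⟩ := h.fg_top
  choose T hT using fun x : s => TensorProduct.exists_finset (R := A) (x : B ⊗[A] M)
  set t : Finset M := s.attach.biUnion (fun x => (T x).image Prod.snd) with ht
  set N : Submodule A M := Submodule.span A (t : Set M) with hN
  have hgen : ∀ x : s, (x : B ⊗[A] M) ∈ N.baseChange B := by
    intro x
    rw [hT x]
    refine Submodule.sum_mem _ fun c hc => ?_
    refine Submodule.tmul_mem_baseChange_of_mem _ (Submodule.subset_span ?_)
    simp only [ht, Finset.coe_biUnion, Finset.coe_image]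
    exact Set.mem_biUnion (Finset.mem_attach _ x) ⟨c, hc, rfl⟩
  have htop : N.baseChange B = ⊤ := by
    rw [eq_top_iff, ← hs, Submodule.span_le]
    intro x hx
    exact hgen ⟨x, hx⟩
  have hsub : Subsingleton (B ⊗[A] (M ⧸ N)) := by
    have hq : Function.Surjective (N.mkQ.baseChange B) := by
      rw [LinearMap.baseChange_eq_ltensor]
      exact LinearMap.lTensor_surjective B N.mkQ_surjective
    have hker : N.baseChange B ≤ LinearMap.ker (N.mkQ.baseChange B) := by
      rw [show N.baseChange B = Submodule.span B (N.map (TensorProduct.mk A B M 1)) from Submodule.baseChange_eq_span _ _,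
        Submodule.span_le]
      rintro - ⟨m, hm, rfl⟩
      rw [SetLike.mem_coe, LinearMap.mem_ker]
      show N.mkQ.baseChange B ((1:B) ⊗ₜ[A] m) = 0
      rw [LinearMap.baseChange_tmul, Submodule.mkQ_apply,
        (Submodule.Quotient.mk_eq_zero N).mpr hm, TensorProduct.tmul_zero]
    refine subsingleton_of_forall_eq 0 fun y => ?_
    obtain ⟨x, rfl⟩ := hq y
    have : x ∈ LinearMap.ker (N.mkQ.baseChange B) := hker (htop ▸ Submodule.mem_top)
    exact this
  have := Module.FaithfullyFlat.lTensor_reflects_triviality A B (M ⧸ N)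
  have hNtop : N = ⊤ := Submodule.Quotient.subsingleton_iff.mp this
  exact ⟨⟨t, by rw [← hN, hNtop]⟩⟩

/-- Let `A → B` be a faithfully flat homomorphism of commutative rings and `M` an `A`-module.
Then `M` is finitely generated (resp. finitely presented) if and only if `B ⊗_A M` is a finitely
generated (resp. finitely presented) `B`-module. -/
theorem stmt5 (A B : Type*) [CommRing A] [CommRing B] [Algebra A B]
    [Module.FaithfullyFlat A B] (M : Type*) [AddCommGroup M] [Module A M] :
    (Module.Finite A M ↔ Module.Finite B (B ⊗[A] M)) ∧
    (Module.FinitePresentation A M ↔ Module.FinitePresentation B (B ⊗[A] M)) := by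
  constructor
  · constructor
    · intro h
      exact Module.Finite.base_change A B M
    · intro h
      exact finite_descent h
  constructor
  · intro h
    infer_instance
  · intro hfp
    have hfin : Module.Finite A M := finite_descent (B := B) (inferInstance : Module.Finite B (B ⊗[A] M))
    classical
    obtain ⟨n, π, hπ⟩ := Module.Finite.exists_fin' A M
    have hπB : Function.Surjective (π.baseChange B) := by
      rw [LinearMap.baseChange_eq_ltensor]
      exact LinearMap.lTensor_surjective B hπ
    have hexact : Function.Exact ((LinearMap.ker π).subtype.baseChange B) (π.baseChange B) := by
      have h1 : Function.Exact ((LinearMap.ker π).subtype.lTensor B) (π.lTensor B) :=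
        Module.Flat.lTensor_exact B π.exact_subtype_ker_map
      rwa [← LinearMap.baseChange_eq_ltensor (f := (LinearMap.ker π).subtype),
        ← LinearMap.baseChange_eq_ltensor (f := π)] at h1
    rw [LinearMap.exact_iff] at hexact
    have hkerfg : (LinearMap.ker (π.baseChange B)).FG :=
      Module.FinitePresentation.fg_ker (π.baseChange B) hπB
    have hinj : Function.Injective ((LinearMap.ker π).subtype.baseChange B) := by
      rw [LinearMap.baseChange_eq_ltensor]
      exact Module.Flat.lTensor_preserves_injective_linearMap _ (Submodule.injective_subtype _)
    have hfinker : Module.Finite B (B ⊗[A] (LinearMap.ker π)) := by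
      have e := LinearEquiv.ofInjective ((LinearMap.ker π).subtype.baseChange B) hinj
      have : Module.Finite B (LinearMap.range ((LinearMap.ker π).subtype.baseChange B)) := by
        rw [← hexact]
        exact ⟨(Submodule.fg_top _).mpr hkerfg⟩
      exact Module.Finite.equiv e.symm
    have : Module.Finite A (LinearMap.ker π) := finite_descent (A := A) (B := B) (M := ↥(LinearMap.ker π)) hfinker
    have hfg : (LinearMap.ker π).FG := (Submodule.fg_top _).mp this.fg_top
    exact (Module.FinitePresentation.fg_ker_iff π hπ).mp hfg
end

section
/- Let G be a profinite group acting continuously on a commutative ring A with the discrete topology, and let B = A^G. Then the induced map π : Spec(A) → Spec(B) is surjective, and G acts transitively on each fiber π⁻¹(𝔭). -/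
/-- The subring of elements of `A` fixed by every element of the subgroup `K`. -/
def fixedSubring (G : Type*) [Group G] (A : Type*) [CommRing A] [MulSemiringAction G A]
    (K : Subgroup G) : Subring A where
  carrier := {a | ∀ g ∈ K, g • a = a}
  mul_mem' := fun ha hb g hg => by rw [smul_mul', ha g hg, hb g hg]
  one_mem' := fun g _ => smul_one g
  add_mem' := fun ha hb g hg => by rw [smul_add, ha g hg, hb g hg]
  zero_mem' := fun g _ => smul_zero g
  neg_mem' := fun ha g hg => by rw [smul_neg, ha g hg]

section Aux

open MulAction Polynomial Pointwise

attribute [local instance] Classical.propDecidable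

set_option linter.unusedSectionVars false

variable (G : Type*) [Group G] [TopologicalSpace G] [IsTopologicalGroup G] [CompactSpace G]
  {A : Type*} [CommRing A] [TopologicalSpace A] [DiscreteTopology A]
  [MulSemiringAction G A] [ContinuousSMul G A]

lemma aux_stab_isOpen (a : A) : IsOpen ((MulAction.stabilizer G a : Subgroup G) : Set G) := by
  have : ((MulAction.stabilizer G a : Subgroup G) : Set G) = (fun g : G => g • a) ⁻¹' {a} := by
    ext g; simp [MulAction.mem_stabilizer_iff]
  rw [this]
  exact (isOpen_discrete _).preimage (continuous_id.smul continuous_const)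

lemma aux_orbit_finite (a : A) : (MulAction.orbit G a).Finite := by
  have : Finite (G ⧸ MulAction.stabilizer G a) :=
    Subgroup.quotient_finite_of_isOpen _ (aux_stab_isOpen G a)
  have : Finite (MulAction.orbit G a) := Finite.of_equiv _ (orbitEquivQuotientStabilizer G a).symm
  exact Set.toFinite _

/-- The "norm" of `a`: the product over its (finite) orbit. -/
noncomputable def orbProd (a : A) : A := ∏ b ∈ (aux_orbit_finite G a).toFinset, b

lemma aux_smul_finset (g : G) (a : A) :
    (aux_orbit_finite G a).toFinset.image (fun b => g • b) = (aux_orbit_finite G a).toFinset := by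
  ext x
  simp only [Finset.mem_image, Set.Finite.mem_toFinset]
  constructor
  · rintro ⟨b, hb, rfl⟩
    rw [← MulAction.smul_orbit g a]
    exact Set.smul_mem_smul_set hb
  · intro hx
    refine ⟨g⁻¹ • x, ?_, by simp⟩
    rw [← MulAction.smul_orbit g⁻¹ a]
    · exact Set.smul_mem_smul_set hx

lemma aux_smul_prod_finset (g : G) (s : Finset A)
    (hs : s.image (fun b => g • b) = s) : g • (∏ b ∈ s, b) = ∏ b ∈ s, b := by
  have h1 : g • (∏ b ∈ s, b) = ∏ b ∈ s, g • b :=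
    map_prod (MulSemiringAction.toRingHom G A g) _ _
  have h2 : ∏ x ∈ s.image (fun b => g • b), x = ∏ b ∈ s, g • b :=
    Finset.prod_image (fun x _ y _ h => MulAction.injective g h)
  rw [h1, ← h2, hs]

lemma orbProd_mem_fixed (a : A) : orbProd G a ∈ fixedSubring G A ⊤ := by
  intro g _
  exact aux_smul_prod_finset G g _ (aux_smul_finset G g a)

lemma dvd_orbProd (a : A) : a ∣ orbProd G a :=
  Finset.dvd_prod_of_mem _ ((aux_orbit_finite G a).mem_toFinset.mpr (MulAction.mem_orbit_self a))

lemma aux_isIntegral (a : A) : IsIntegral (fixedSubring G A ⊤) a := by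
  set s := (aux_orbit_finite G a).toFinset with hs
  set P : Polynomial A := ∏ b ∈ s, (X - C b) with hP
  have hmonic : P.Monic := monic_prod_of_monic _ _ (fun b _ => monic_X_sub_C b)
  have hroot : P.eval a = 0 := by
    rw [hP, eval_prod]
    apply Finset.prod_eq_zero ((aux_orbit_finite G a).mem_toFinset.mpr (MulAction.mem_orbit_self a))
    simp
  have hfix : ∀ g : G, P.map (MulSemiringAction.toRingHom G A g) = P := by
    intro g
    rw [hP, Polynomial.map_prod]
    have h2 : ∏ x ∈ s.image (fun b => g • b), (X - C x) = ∏ b ∈ s, (X - C (g • b)) :=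
      Finset.prod_image (fun x _ y _ h => MulAction.injective g h)
    have h3 : ∀ b : A, (X - C b).map (MulSemiringAction.toRingHom G A g) = X - C (g • b) := by
      intro b
      rw [Polynomial.map_sub, Polynomial.map_X, Polynomial.map_C]
      rfl
    calc ∏ i ∈ s, (X - C i).map (MulSemiringAction.toRingHom G A g)
        = ∏ b ∈ s, (X - C (g • b)) := Finset.prod_congr rfl (fun b _ => h3 b)
      _ = ∏ x ∈ s.image (fun b => g • b), (X - C x) := h2.symm
      _ = ∏ b ∈ s, (X - C b) := by
          rw [show s.image (fun b => g • b) = s from aux_smul_finset G g a]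
  have hcoeff : (↑P.coeffs : Set A) ⊆ (fixedSubring G A ⊤ : Set A) := by
    intro x hx
    rw [Finset.mem_coe, Polynomial.mem_coeffs_iff] at hx
    obtain ⟨n, -, rfl⟩ := hx
    intro g _
    conv_rhs => rw [← hfix g]
    rw [Polynomial.coeff_map]
    rfl
  refine ⟨P.toSubring _ hcoeff, (monic_toSubring _ _ _).mpr hmonic, ?_⟩
  have : algebraMap (fixedSubring G A ⊤) A = (fixedSubring G A ⊤).subtype := rfl
  rw [this, eval₂_eq_eval_map, Polynomial.map_toSubring, hroot]

instance : Algebra.IsIntegral (fixedSubring G A ⊤) A := ⟨fun a => aux_isIntegral G a⟩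

lemma aux_comap_smul (g : G) (q : Ideal A) :
    (g • q).comap (fixedSubring G A ⊤).subtype = q.comap (fixedSubring G A ⊤).subtype := by
  ext b
  simp only [Ideal.mem_comap]
  rw [Ideal.mem_pointwise_smul_iff_inv_smul_mem,
    show g⁻¹ • ((fixedSubring G A ⊤).subtype b) = (fixedSubring G A ⊤).subtype b
      from b.2 g⁻¹ trivial]

/-- The key finite step: given finitely many elements of `q`, there is a group element moving
all of them into `q'`. -/
lemma aux_finite_step (q q' : Ideal A) [q.IsPrime] [q'.IsPrime]
    (hqq' : q.comap (fixedSubring G A ⊤).subtype = q'.comap (fixedSubring G A ⊤).subtype)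
    (s : Finset A) (hsq : ∀ a ∈ s, a ∈ q) :
    ∃ g : G, ∀ a ∈ s, g • a ∈ q' := by
  classical
  -- the union of the orbits of elements of `s` : a finite G-invariant set
  set T : Set A := ⋃ a ∈ s, MulAction.orbit G a with hT
  have hTfin : T.Finite := Set.Finite.biUnion s.finite_toSet (fun a _ => aux_orbit_finite G a)
  have hTinv : ∀ g : G, ∀ t ∈ T, g • t ∈ T := by
    intro g t ht
    simp only [hT, Set.mem_iUnion] at ht ⊢
    obtain ⟨a, ha, hta⟩ := ht
    exact ⟨a, ha, by rw [← MulAction.smul_orbit g a]; exact Set.smul_mem_smul_set hta⟩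
  -- the subgroup fixing T pointwise: open, normal, finite index
  set K : Subgroup G := fixingSubgroup G T with hK
  have hKmem : ∀ g : G, g ∈ K ↔ ∀ t ∈ T, g • t = t := by
    intro g
    rw [hK, mem_fixingSubgroup_iff]
  have hKopen : IsOpen (K : Set G) := by
    have : (K : Set G) = ⋂ t ∈ T, ((MulAction.stabilizer G t : Subgroup G) : Set G) := by
      ext g
      simp [hKmem, MulAction.mem_stabilizer_iff]
    rw [this]
    exact hTfin.isOpen_biInter (fun t _ => aux_stab_isOpen G t)
  have hKnormal : K.Normal := by
    constructor
    intro k hk g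
    rw [hKmem] at hk ⊢
    intro t ht
    have h1 : g⁻¹ • t ∈ T := hTinv g⁻¹ t ht
    have := hk _ h1
    calc (g * k * g⁻¹) • t = g • k • g⁻¹ • t := by rw [mul_smul, mul_smul]
    _ = g • g⁻¹ • t := by rw [this]
    _ = t := by simp
  have : Finite (G ⧸ K) := Subgroup.quotient_finite_of_isOpen _ hKopen
  have : Fintype (G ⧸ K) := Fintype.ofFinite _
  -- work in the ring of K-fixed elements
  set AK : Subring A := fixedSubring G A K with hAK
  set I : Ideal AK := q.comap AK.subtype with hI
  set J : G ⧸ K → Ideal AK := fun c => ((Quotient.out c) • q').comap AK.subtype with hJ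
  have hJprime : ∀ c : G ⧸ K, (J c).IsPrime := by
    intro c
    have : ((Quotient.out c) • q').IsPrime := (Ideal.IsPrime.smul_iff (Quotient.out c)).mpr ‹q'.IsPrime›
    exact this.comap _
  -- prime avoidance input: I ⊆ ⋃ c, J c
  have hsub : (I : Set AK) ⊆ ⋃ c ∈ (Finset.univ : Finset (G ⧸ K)), ((J c : Ideal AK) : Set AK) := by
    intro a ha
    have haq : (a : A) ∈ q := ha
    -- the norm of a lies in q ∩ B hence in q'
    have hnorm_q : orbProd G (a : A) ∈ q := by
      obtain ⟨c, hc⟩ := dvd_orbProd G (a : A)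
      rw [hc]
      exact Ideal.mul_mem_right _ _ haq
    have hnorm_B : orbProd G (a : A) ∈ fixedSubring G A ⊤ := orbProd_mem_fixed G _
    have hnorm_q' : orbProd G (a : A) ∈ q' := by
      have h1 : (⟨orbProd G (a : A), hnorm_B⟩ : fixedSubring G A ⊤) ∈
          q.comap (fixedSubring G A ⊤).subtype := hnorm_q
      rw [hqq'] at h1
      exact h1
    -- some orbit element of a lies in q'
    have : ∃ b ∈ (aux_orbit_finite G (a : A)).toFinset, b ∈ q' := by
      rw [← Ideal.IsPrime.prod_mem_iff (x := fun b : A => b)]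
      exact hnorm_q'
    obtain ⟨b, hb, hbq'⟩ := this
    rw [Set.Finite.mem_toFinset] at hb
    obtain ⟨h, rfl⟩ := hb
    -- a belongs to (out (h⁻¹)) • q'
    refine Set.mem_biUnion (Finset.mem_univ ((h⁻¹ : G) : G ⧸ K)) ?_
    show a ∈ J ((h⁻¹ : G) : G ⧸ K)
    rw [hJ]
    simp only [Ideal.mem_comap]
    rw [Ideal.mem_pointwise_smul_iff_inv_smul_mem]
    -- out = h⁻¹ * k with k ∈ K
    set o : G := (((h⁻¹ : G) : G ⧸ K)).out with ho
    have hout : ((h⁻¹ : G) : G ⧸ K) = (o : G ⧸ K) := (QuotientGroup.out_eq' _).symm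
    have hk : h * o ∈ K := by
      rw [← inv_inv h, ← QuotientGroup.eq]
      exact hout
    have hk' : h⁻¹ * (h * o)⁻¹ * h ∈ K := hKnormal.conj_mem' _ (inv_mem hk) h
    have : o⁻¹ = h * (h⁻¹ * (h * o)⁻¹ * h) := by group
    rw [this, mul_smul]
    have hfix_a : (h⁻¹ * (h * o)⁻¹ * h) • (a : A) = (a : A) := a.2 _ hk'
    show h • ((h⁻¹ * (h * o)⁻¹ * h) • (a : A)) ∈ q'
    rw [hfix_a]
    exact hbq'
  -- prime avoidance
  have hmain : ∃ c : G ⧸ K, I ≤ J c := by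
    have := (Ideal.subset_union_prime (s := (Finset.univ : Finset (G ⧸ K))) (f := J)
      (Quotient.mk'' 1) (Quotient.mk'' 1) (fun c _ _ _ => hJprime c) (I := I)).mp hsub
    obtain ⟨c, -, hc⟩ := this
    exact ⟨c, hc⟩
  obtain ⟨c, hc⟩ := hmain
  refine ⟨(Quotient.out c)⁻¹, ?_⟩
  intro a ha
  have haAK : a ∈ AK := by
    intro g hg
    rw [hKmem] at hg
    exact hg a (Set.mem_biUnion ha (MulAction.mem_orbit_self a))
  have : (⟨a, haAK⟩ : AK) ∈ I := hsq a ha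
  have := hc this
  rw [hJ] at this
  simp only [Ideal.mem_comap] at this
  rwa [Ideal.mem_pointwise_smul_iff_inv_smul_mem] at this

end Aux

/-- Let `G` be a profinite group acting continuously on a commutative ring `A` with the discrete
topology, and let `B = A^G`.  Then the induced map `π : Spec(A) → Spec(B)` is surjective, and `G`
acts transitively on each fiber of `π`. -/
theorem stmt7 (G : Type*) [Group G] [TopologicalSpace G] [IsTopologicalGroup G]
    [CompactSpace G] [T2Space G] [TotallyDisconnectedSpace G]
    (A : Type*) [CommRing A] [TopologicalSpace A] [DiscreteTopology A]
    [MulSemiringAction G A] [ContinuousSMul G A] :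
    Function.Surjective (PrimeSpectrum.comap (fixedSubring G A ⊤).subtype) ∧
    ∀ q q' : PrimeSpectrum A,
      PrimeSpectrum.comap (fixedSubring G A ⊤).subtype q =
        PrimeSpectrum.comap (fixedSubring G A ⊤).subtype q' →
      ∃ g : G, PrimeSpectrum.comap (MulSemiringAction.toRingHom G A g) q = q' := by
  classical
  open Pointwise in
  constructor
  · -- surjectivity
    intro p
    have hker : (⊥ : Ideal A).comap (algebraMap (fixedSubring G A ⊤) A) ≤ p.asIdeal := by
      intro x hx
      have : (x : A) = 0 := hx
      have hx0 : x = 0 := Subtype.ext this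
      rw [hx0]; exact zero_mem _
    obtain ⟨Q, -, hQprime, hQ⟩ :=
      Ideal.exists_ideal_over_prime_of_isIntegral (S := A) p.asIdeal ⊥ hker
    exact ⟨⟨Q, hQprime⟩, PrimeSpectrum.ext hQ⟩
  · -- transitivity on fibers
    intro q q' hqq'
    have hqq'' : q.asIdeal.comap (fixedSubring G A ⊤).subtype =
        q'.asIdeal.comap (fixedSubring G A ⊤).subtype :=
      congrArg PrimeSpectrum.asIdeal hqq'
    -- compactness argument
    have key : ∃ g : G, ∀ a ∈ q.asIdeal, g • a ∈ q'.asIdeal := by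
      by_contra hcon
      push_neg at hcon
      set F : q.asIdeal → Set G := fun a => {g : G | g • (a : A) ∈ q'.asIdeal} with hF
      have hFclosed : ∀ a, IsClosed (F a) :=
        fun a => (isClosed_discrete _).preimage (continuous_id.smul continuous_const)
      have hempty : (Set.univ : Set G) ∩ ⋂ a, F a = ∅ := by
        rw [Set.univ_inter, Set.eq_empty_iff_forall_notMem]
        intro g hg
        simp only [Set.mem_iInter] at hg
        obtain ⟨a, ha, hna⟩ := hcon g
        exact hna (hg ⟨a, ha⟩)
      obtain ⟨u, hu⟩ := IsCompact.elim_finite_subfamily_closed isCompact_univ F hFclosed hempty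
      have hq := q.isPrime
      have hq' := q'.isPrime
      have husub : ∀ a ∈ u.image (fun a : q.asIdeal => (a : A)), a ∈ q.asIdeal := by
        intro a ha
        simp only [Finset.mem_image] at ha
        obtain ⟨b, -, rfl⟩ := ha
        exact b.2
      obtain ⟨g, hg⟩ := aux_finite_step G q.asIdeal q'.asIdeal hqq''
        (u.image (fun a : q.asIdeal => (a : A))) husub
      rw [Set.univ_inter, Set.eq_empty_iff_forall_notMem] at hu
      refine hu g ?_
      simp only [Set.mem_iInter]
      intro a ha
      exact hg (a : A) (Finset.mem_image_of_mem _ ha)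
    obtain ⟨g, hg⟩ := key
    have hq := q.isPrime
    have hq' := q'.isPrime
    -- g • q ≤ q'
    have hle : g • q.asIdeal ≤ q'.asIdeal := by
      intro x hx
      rw [Ideal.mem_pointwise_smul_iff_inv_smul_mem] at hx
      have := hg _ hx
      rwa [smul_inv_smul] at this
    have hsmul_prime : (g • q.asIdeal).IsPrime := (Ideal.IsPrime.smul_iff g).mpr hq
    -- equality by incomparability
    have heq : g • q.asIdeal = q'.asIdeal := by
      by_contra hne
      have hlt : g • q.asIdeal < q'.asIdeal := lt_of_le_of_ne hle hne
      obtain ⟨x, hxq', hxgq⟩ := SetLike.exists_of_lt hlt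
      have := Ideal.comap_lt_comap_of_integral_mem_sdiff
        (R := fixedSubring G A ⊤) (I := g • q.asIdeal) (J := q'.asIdeal)
        hle ⟨hxq', hxgq⟩ (aux_isIntegral G x)
      rw [show algebraMap (fixedSubring G A ⊤) A = (fixedSubring G A ⊤).subtype from rfl,
        aux_comap_smul, hqq''] at this
      exact lt_irrefl _ this
    refine ⟨g⁻¹, PrimeSpectrum.ext ?_⟩
    show q.asIdeal.comap (MulSemiringAction.toRingHom G A g⁻¹) = q'.asIdeal
    rw [← heq]
    ext x
    simp only [Ideal.mem_comap]
    rw [Ideal.mem_pointwise_smul_iff_inv_smul_mem]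
    rfl
end

section
/- Let k be a field containing all roots of unity, with absolute Galois group G_k. Then the abelianization G_k^{ab} of G_k is torsion free; consequently G_k is totally torsion free (every closed subgroup has torsion-free abelianization). -/
open IntermediateField Polynomial
open scoped Pointwise
open scoped commutatorElement

section Aux
variable {k K : Type*} [Field k] [Field K] [Algebra k K]

lemma aux_charZero (hroots : ∀ n : ℕ, n ≠ 0 → ∃ ζ : k, IsPrimitiveRoot ζ n) : CharZero k := by
  rcases CharP.char_is_prime_or_zero k (ringChar k) with hp | h0
  · exfalso
    obtain ⟨ζ, hζ⟩ := hroots (ringChar k) hp.ne_zero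
    have h1 : ζ = 1 := by
      have h2 : (ζ - 1) ^ (ringChar k) = 0 := by
        haveI : Fact (Nat.Prime (ringChar k)) := ⟨hp⟩
        rw [sub_pow_char, hζ.pow_eq_one, one_pow, sub_self]
      have := pow_eq_zero_iff (n := ringChar k) hp.ne_zero |>.mp h2
      exact sub_eq_zero.mp this
    have : ringChar k ∣ 1 := hζ.dvd_of_pow_eq_one 1 (by simp [h1])
    exact hp.one_lt.ne' (Nat.eq_one_of_dvd_one this) |>.elim
  · haveI := ringChar.eq_iff.mp h0
    exact CharP.charP_to_charZero k

lemma aux_root1_fixed (hroots : ∀ n : ℕ, n ≠ 0 → ∃ ζ : k, IsPrimitiveRoot ζ n)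
    {m : ℕ} (hm : m ≠ 0) {x : K} (hx : x ^ m = 1) (σ : K ≃ₐ[k] K) : σ x = x := by
  haveI : NeZero m := ⟨hm⟩
  obtain ⟨ζ, hζ⟩ := hroots m hm
  have hζK : IsPrimitiveRoot (algebraMap k K ζ) m :=
    hζ.map_of_injective (algebraMap k K).injective
  obtain ⟨i, -, hi⟩ := hζK.eq_pow_of_pow_eq_one hx
  rw [← hi, ← map_pow, AlgEquiv.commutes]

end Aux

set_option maxHeartbeats 1600000 in
set_option synthInstance.maxHeartbeats 400000 in
/-- Let `k` be a field containing all roots of unity, with absolute Galois group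
`G_k = Gal(K/k)` where `K` is a separable closure of `k`.  Then every closed subgroup `H` of
`G_k` has torsion-free abelianization (i.e. `G_k` is totally torsion free); in particular, taking
`H = G_k`, the abelianization of `G_k` is torsion free.  Torsion-freeness of the abelianization
`H/closure [H,H]` is expressed by: if `g ∈ H` and `g^n` lies in the closure of the commutator
subgroup for some `n ≠ 0`, then `g` itself lies in that closure. -/
theorem stmt8 (k K : Type*) [Field k] [Field K] [Algebra k K] [IsSepClosure k K]
    (hroots : ∀ n : ℕ, n ≠ 0 → ∃ ζ : k, IsPrimitiveRoot ζ n) :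
    ∀ H : Subgroup (K ≃ₐ[k] K), IsClosed (H : Set (K ≃ₐ[k] K)) →
      ∀ g ∈ H, ∀ n : ℕ, n ≠ 0 →
        g ^ n ∈ (⁅H, H⁆ : Subgroup (K ≃ₐ[k] K)).topologicalClosure →
        g ∈ (⁅H, H⁆ : Subgroup (K ≃ₐ[k] K)).topologicalClosure := by
  intro H hHcl g hg n hn hgn
  haveI : CharZero k := aux_charZero hroots
  haveI : CharZero K := charZero_of_injective_algebraMap (algebraMap k K).injective
  by_contra hgc
  set N : Subgroup (K ≃ₐ[k] K) := ⁅H, H⁆ with hN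
  set c : Subgroup (K ≃ₐ[k] K) := N.topologicalClosure with hc
  have hNH : N ≤ H := Subgroup.commutator_le.mpr fun a ha b hb =>
    H.mul_mem (H.mul_mem (H.mul_mem ha hb) (H.inv_mem ha)) (H.inv_mem hb)
  have hcH : c ≤ H := Subgroup.topologicalClosure_minimal N hNH hHcl
  -- find a finite-dimensional normal subfield F' whose fixing subgroup avoids `g`
  have hopen : (fun x : K ≃ₐ[k] K => g * x) ⁻¹' (↑c)ᶜ ∈ nhds (1 : K ≃ₐ[k] K) := by
    refine IsOpen.mem_nhds ?_ ?_
    · exact (N.isClosed_topologicalClosure).isOpen_compl.preimage (continuous_mul_left g)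
    · simpa using hgc
  obtain ⟨E, hEfd, hE⟩ := (krullTopology_mem_nhds_one_iff k K _).mp hopen
  haveI := hEfd
  set F' : IntermediateField k K := normalClosure k ↥E K with hF'
  have hEF : E ≤ F' := IntermediateField.le_normalClosure E
  set W : Subgroup (K ≃ₐ[k] K) := F'.fixingSubgroup with hW
  set ρ : (K ≃ₐ[k] K) →* (↥F' ≃ₐ[k] ↥F') := AlgEquiv.restrictNormalHom F' with hρ
  have hWker : W = ρ.ker := (IntermediateField.restrictNormalHom_ker F').symm
  haveI hWnormal : W.Normal := by rw [hWker]; infer_instance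
  have hgcW : g ∉ c ⊔ W := by
    intro hmem
    have hmem' : g ∈ (c : Set (K ≃ₐ[k] K)) * (W : Set (K ≃ₐ[k] K)) := by
      rw [← Subgroup.mul_normal]; exact_mod_cast hmem
    obtain ⟨x, hx, w, hw, hxw⟩ := hmem'
    have hw' : w⁻¹ ∈ E.fixingSubgroup :=
      E.fixingSubgroup.inv_mem (IntermediateField.fixingSubgroup_le hEF hw)
    have hnotin : g * w⁻¹ ∉ (c : Set (K ≃ₐ[k] K)) := hE hw'
    exact hnotin (by rw [show g * w⁻¹ = x by rw [← hxw]; group]; exact hx)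
  -- conjugation stability
  have hconjc : ∀ h ∈ H, ∀ x ∈ c, h * x * h⁻¹ ∈ c := by
    intro h hh x hx
    have hconjN : Set.MapsTo (fun y : K ≃ₐ[k] K => h * y * h⁻¹) (N : Set (K ≃ₐ[k] K))
        (N : Set (K ≃ₐ[k] K)) := by
      intro y hy
      have hmap : Subgroup.map (MulAut.conj h).toMonoidHom N ≤ N := by
        rw [hN, Subgroup.map_commutator]
        apply Subgroup.commutator_mono <;>
        · rintro z ⟨a, ha, rfl⟩
          simpa [MulAut.conj_apply] using H.mul_mem (H.mul_mem hh ha) (H.inv_mem hh)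
      have := hmap (Subgroup.mem_map_of_mem _ hy)
      simpa [MulAut.conj_apply] using this
    have hcont : Continuous (fun y : K ≃ₐ[k] K => h * y * h⁻¹) :=
      (continuous_mul_left h).mul continuous_const
    have hx' : x ∈ closure (N : Set (K ≃ₐ[k] K)) := hx
    exact map_mem_closure (f := fun y : K ≃ₐ[k] K => h * y * h⁻¹) hcont hx' hconjN
  have hconjcW : ∀ h ∈ H, ∀ x ∈ c ⊔ W, h * x * h⁻¹ ∈ c ⊔ W := by
    intro h hh x hx
    have hx' : x ∈ (c : Set (K ≃ₐ[k] K)) * (W : Set (K ≃ₐ[k] K)) := by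
      rw [← Subgroup.mul_normal]; exact_mod_cast hx
    obtain ⟨y, hy, w, hw, rfl⟩ := hx'
    have : h * (y * w) * h⁻¹ = (h * y * h⁻¹) * (h * w * h⁻¹) := by group
    rw [this]
    exact Subgroup.mul_mem _ (Subgroup.mem_sup_left (hconjc h hh y hy))
      (Subgroup.mem_sup_right (hWnormal.conj_mem w hw h))
  -- restriction to F'
  set Hb : Subgroup (↥F' ≃ₐ[k] ↥F') := H.map ρ with hHbdef
  set D : Subgroup (K ≃ₐ[k] K) := (c ⊔ W) ⊓ H with hD
  set Db : Subgroup (↥F' ≃ₐ[k] ↥F') := D.map ρ with hDb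
  have hρcmem : ∀ σ : ↥H, ρ σ.1 ∈ Hb := fun σ => ⟨σ.1, σ.2, rfl⟩
  set ρc : ↥H →* ↥Hb := (ρ.comp H.subtype).codRestrict Hb hρcmem with hρc
  have hρc_surj : Function.Surjective ρc := by
    rintro ⟨y, x, hx, rfl⟩
    exact ⟨⟨x, hx⟩, rfl⟩
  set DH : Subgroup ↥Hb := Db.subgroupOf Hb with hDH
  haveI hDHnormal : DH.Normal := by
    constructor
    intro u hmem h'
    rw [Subgroup.mem_subgroupOf] at hmem ⊢
    obtain ⟨x, hxD, hxeq⟩ := hmem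
    obtain ⟨h, hh, hheq⟩ := h'.2
    refine ⟨h * x * h⁻¹, ⟨hconjcW h hh x (Subgroup.mem_inf.mp hxD).1,
      H.mul_mem (H.mul_mem hh (Subgroup.mem_inf.mp hxD).2) (H.inv_mem hh)⟩, ?_⟩
    push_cast
    rw [map_mul, map_mul, map_inv, hxeq, hheq]
  haveI : Finite (↥F' ≃ₐ[k] ↥F') := by
    haveI := AlgEquiv.fintype k ↥F'
    infer_instance
  letI : CommGroup (↥Hb ⧸ DH) :=
    { (inferInstance : Group (↥Hb ⧸ DH)) with
      mul_comm := by
        intro a b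
        obtain ⟨x, rfl⟩ := QuotientGroup.mk_surjective a
        obtain ⟨y, rfl⟩ := QuotientGroup.mk_surjective b
        rw [← QuotientGroup.mk_mul, ← QuotientGroup.mk_mul, QuotientGroup.eq,
          Subgroup.mem_subgroupOf]
        obtain ⟨x', hx', hxe⟩ := x.2
        obtain ⟨y', hy', hye⟩ := y.2
        have hmemHb : ρ ⁅y'⁻¹, x'⁻¹⁆ ∈ Hb :=
          ⟨⁅y'⁻¹, x'⁻¹⁆, H.mul_mem (H.mul_mem (H.mul_mem (H.inv_mem hy') (H.inv_mem hx')) hy')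
            hx', rfl⟩
        have hcomm : ((x * y)⁻¹ * (y * x) : ↥Hb) = ⟨ρ ⁅y'⁻¹, x'⁻¹⁆, hmemHb⟩ := by
          apply Subtype.ext
          push_cast
          rw [map_commutatorElement, map_inv, map_inv, hxe, hye]
          group
        rw [hcomm]
        exact ⟨⁅y'⁻¹, x'⁻¹⁆,
          ⟨Subgroup.mem_sup_left (N.le_topologicalClosure
            (Subgroup.commutator_mem_commutator (H.inv_mem hy') (H.inv_mem hx'))),
           H.mul_mem (H.mul_mem (H.mul_mem (H.inv_mem hy') (H.inv_mem hx')) hy') hx'⟩, rfl⟩ }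
  haveI : Finite (↥Hb ⧸ DH) := Quotient.finite _
  haveI : NeZero (Monoid.exponent (↥Hb ⧸ DH)) := ⟨Monoid.exponent_ne_zero_of_finite⟩
  haveI : HasEnoughRootsOfUnity K (Monoid.exponent (↥Hb ⧸ DH)) := by
    constructor
    · obtain ⟨ζ, hζ⟩ := hroots _ (Monoid.exponent_ne_zero_of_finite (G := ↥Hb ⧸ DH))
      exact ⟨algebraMap k K ζ, hζ.map_of_injective (algebraMap k K).injective⟩
    · infer_instance
  have hgD : QuotientGroup.mk (s := DH) (ρc ⟨g, hg⟩) ≠ 1 := by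
    rw [Ne, QuotientGroup.eq_one_iff, Subgroup.mem_subgroupOf]
    rintro ⟨x, hxD, hxeq⟩
    have hker : g * x⁻¹ ∈ W := by
      rw [hWker, MonoidHom.mem_ker, map_mul, map_inv]
      have : ρ x = ρ g := hxeq
      rw [this, mul_inv_cancel]
    exact hgcW (by
      have hgx : g = (g * x⁻¹) * x := by group
      rw [hgx]
      exact Subgroup.mul_mem _ (Subgroup.mem_sup_right hker)
        ((Subgroup.mem_inf.mp hxD).1))
  obtain ⟨φ, hφ⟩ := CommGroup.exists_apply_ne_one_of_hasEnoughRootsOfUnity (↥Hb ⧸ DH) K hgD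
  set χ : ↥H →* Kˣ := (φ.comp (QuotientGroup.mk' DH)).comp ρc with hχ
  have hχg : χ ⟨g, hg⟩ ≠ 1 := hφ
  -- Galois setup over k inside F'
  haveI : Algebra.IsSeparable k ↥F' := Algebra.isSeparable_tower_bot_of_isSeparable k ↥F' K
  haveI : IsGalois k ↥F' := ⟨⟩
  set L' : IntermediateField k ↥F' := IntermediateField.fixedField Hb with hL'def
  have hL' : L'.fixingSubgroup = Hb := IntermediateField.fixingSubgroup_fixedField Hb
  set θ : ↥H →* (↥F' ≃ₐ[↥L'] ↥F') :=
    (IntermediateField.fixingSubgroupEquiv L').toMonoidHom.comp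
      ((MulEquiv.subgroupCongr hL'.symm).toMonoidHom.comp ρc) with hθ
  have hθ_surj : Function.Surjective θ := by
    intro y
    obtain ⟨x, hx⟩ := hρc_surj ((MulEquiv.subgroupCongr hL'.symm).symm
      ((IntermediateField.fixingSubgroupEquiv L').symm y))
    refine ⟨x, ?_⟩
    simp [hθ, MonoidHom.comp_apply, hx]
  have hθ_apply : ∀ (σ : ↥H) (x : ↥F'), (θ σ) x = ρ σ.1 x := fun σ x => rfl
  have hθ_ker : ∀ σ : ↥H, θ σ = 1 → χ σ = 1 := by
    intro σ hσ
    have h1 : ρ σ.1 = 1 := by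
      apply AlgEquiv.ext
      intro x
      have h2 := hθ_apply σ x
      rw [hσ, AlgEquiv.one_apply] at h2
      rw [AlgEquiv.one_apply]
      exact h2.symm
    have hσW : σ.1 ∈ W := by rw [hWker]; exact h1
    have hmem : ρc σ ∈ DH := by
      rw [Subgroup.mem_subgroupOf]
      exact ⟨σ.1, ⟨Subgroup.mem_sup_right hσW, σ.2⟩, rfl⟩
    show φ (QuotientGroup.mk' DH (ρc σ)) = 1
    rw [show QuotientGroup.mk' DH (ρc σ) = 1 from (QuotientGroup.eq_one_iff _).mpr hmem, map_one]
  set U : Subgroup (↥F' ≃ₐ[↥L'] ↥F') := χ.ker.map θ with hU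
  haveI hUn : U.Normal := by
    constructor
    rintro u hu σ
    obtain ⟨x, hx, rfl⟩ := hu
    obtain ⟨τ, rfl⟩ := hθ_surj σ
    refine ⟨τ * x * τ⁻¹, ?_, by rw [map_mul, map_mul, map_inv]⟩
    have hx' : χ x = 1 := hx
    show χ _ = 1
    rw [map_mul, map_mul, map_inv, hx', mul_one, mul_inv_cancel]
  set E0 : IntermediateField ↥L' ↥F' := IntermediateField.fixedField U with hE0
  haveI : IsGalois ↥L' ↥E0 := IsGalois.of_fixedField_normal_subgroup U
  -- cyclicity
  haveI hcyc1 : IsCyclic ↥χ.range := by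
    have hsub : (χ.range : Set Kˣ) ⊆ Set.range (fun q : ↥Hb ⧸ DH => φ q) := by
      rintro _ ⟨x, rfl⟩
      exact ⟨QuotientGroup.mk' DH (ρc x), rfl⟩
    haveI : Finite ↥χ.range := Set.Finite.to_subtype ((Set.finite_range _).subset hsub)
    exact isCyclic_of_subgroup_isDomain (R := K) ((Units.coeHom K).comp χ.range.subtype)
      (Units.val_injective.comp Subtype.val_injective)
  have hψker : ((QuotientGroup.mk' U).comp θ).ker = χ.ker := by
    have h1 : ((QuotientGroup.mk' U).comp θ).ker = Subgroup.comap θ U := by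
      ext σ
      simp [MonoidHom.mem_ker, QuotientGroup.eq_one_iff]
    rw [h1, hU, Subgroup.comap_map_eq, sup_eq_left]
    intro σ hσ
    exact hθ_ker σ hσ
  haveI hcyc2 : IsCyclic ((↥F' ≃ₐ[↥L'] ↥F') ⧸ U) := by
    have hsurj2 : Function.Surjective ((QuotientGroup.mk' U).comp θ) :=
      (QuotientGroup.mk'_surjective U).comp hθ_surj
    have e1 : ↥H ⧸ χ.ker ≃* (↥F' ≃ₐ[↥L'] ↥F') ⧸ U :=
      (QuotientGroup.quotientMulEquivOfEq hψker.symm).trans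
        (QuotientGroup.quotientKerEquivOfSurjective _ hsurj2)
    have e2 : ↥H ⧸ χ.ker ≃* ↥χ.range := QuotientGroup.quotientKerEquivRange χ
    exact isCyclic_of_surjective (e1.toMonoidHom.comp e2.symm.toMonoidHom)
      ((e1.surjective).comp (e2.symm.surjective))
  haveI hcyc3 : IsCyclic (↥E0 ≃ₐ[↥L'] ↥E0) :=
    isCyclic_of_surjective (IsGalois.normalAutEquivQuotient U).toMonoidHom
      (IsGalois.normalAutEquivQuotient U).surjective
  -- Kummer theory
  set d := Module.finrank ↥L' ↥E0 with hd
  have hdpos : 0 < d := Module.finrank_pos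
  have hK' : (primitiveRoots d ↥L').Nonempty := by
    obtain ⟨ζ, hζ⟩ := hroots d hdpos.ne'
    exact ⟨algebraMap k ↥L' ζ, (mem_primitiveRoots hdpos).mpr
      (hζ.map_of_injective (algebraMap k ↥L').injective)⟩
  obtain ⟨α, hαmem, hαadj⟩ := exists_root_adjoin_eq_top_of_isCyclic ↥L' ↥E0 hK'
  obtain ⟨a', ha'⟩ := hαmem
  -- push elements into K
  set ιF : ↥F' →ₐ[k] K := IsScalarTower.toAlgHom k ↥F' K with hιF
  set αF : ↥F' := algebraMap ↥E0 ↥F' α with hαF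
  set aF : ↥F' := algebraMap ↥L' ↥F' a' with haF
  set αK : K := ιF αF with hαK
  set aK : K := ιF aF with haK
  have hαFd : αF ^ d = aF := by
    rw [hαF, ← map_pow, ← ha', haF, ← IsScalarTower.algebraMap_apply]
  have hαKd : αK ^ d = aK := by rw [hαK, ← map_pow, hαFd]
  have haF_fix : ∀ τ, τ ∈ Hb → τ aF = aF := by
    intro τ hτ
    have hmem : aF ∈ L' := by
      rw [haF, IntermediateField.algebraMap_apply]
      exact a'.2
    exact hmem ⟨τ, hτ⟩
  have haK_fix : ∀ σ : K ≃ₐ[k] K, σ ∈ H → σ aK = aK := by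
    intro σ hσ
    have h1 : ρ σ aF = aF := haF_fix _ ⟨σ, hσ, rfl⟩
    have h2 : σ (ιF aF) = ιF (ρ σ aF) := (AlgEquiv.restrictNormalHom_apply F' σ aF).symm
    rw [haK, h2, h1]
  -- the radical argument: g fixes αK
  have hgαK : g αK = αK := by
    by_cases hα0 : αK = 0
    · rw [hα0, map_zero]
    have haK0 : aK ≠ 0 := by rw [← hαKd]; exact pow_ne_zero _ hα0
    have hnd : (n * d : ℕ) ≠ 0 := Nat.mul_ne_zero hn hdpos.ne'
    have hndK : ((n * d : ℕ) : K) ≠ 0 := Nat.cast_ne_zero.mpr hnd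
    haveI : IsSepClosed K := IsSepClosure.sep_closed (k := k)
    obtain ⟨β, hβroot⟩ := IsSepClosed.exists_root (k := K) (X ^ (n * d) - C aK)
      (by rw [Polynomial.degree_X_pow_sub_C (Nat.pos_of_ne_zero hnd)]
          exact_mod_cast Nat.cast_ne_zero.mpr hnd)
      (Polynomial.separable_X_pow_sub_C aK hndK haK0)
    have hβnd : β ^ (n * d) = aK := by
      have := hβroot
      rw [Polynomial.IsRoot, Polynomial.eval_sub, Polynomial.eval_pow, Polynomial.eval_X,
        Polynomial.eval_C, sub_eq_zero] at this
      exact this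
    have hβ0 : β ≠ 0 := by
      intro h0
      exact haK0 (by rw [← hβnd, h0, zero_pow hnd])
    have hfix : ∀ σ : K ≃ₐ[k] K, σ ∈ H → ∃ u : K, (∀ τ : K ≃ₐ[k] K, τ u = u) ∧ u ^ (n * d) = 1 ∧ σ β = u * β := by
      intro σ hσ
      have hu1 : (σ β * β⁻¹) ^ (n * d) = 1 := by
        rw [mul_pow, ← map_pow, hβnd, inv_pow, hβnd, haK_fix σ hσ, mul_inv_cancel₀ haK0]
      exact ⟨σ β * β⁻¹, fun τ => aux_root1_fixed hroots hnd hu1 τ, hu1, by field_simp⟩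
    have hMfd : FiniteDimensional k ↥(IntermediateField.adjoin k {β}) :=
      IntermediateField.adjoin.finiteDimensional (Algebra.IsIntegral.isIntegral β)
    have hNfix : N ≤ (IntermediateField.adjoin k {β}).fixingSubgroup := by
      rw [hN]
      apply Subgroup.commutator_le.mpr
      intro σ hσ τ hτ
      rw [IntermediateField.mem_fixingSubgroup_iff]
      intro x hx
      induction hx using IntermediateField.adjoin_induction with
      | mem z hz =>
        rw [Set.mem_singleton_iff] at hz
        rw [hz]
        obtain ⟨u1, hu1f, hu1, hσβ⟩ := hfix σ hσ
        obtain ⟨u2, hu2f, hu2, hτβ⟩ := hfix τ hτ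
        obtain ⟨u3, hu3f, hu3, hσ'β⟩ := hfix σ⁻¹ (H.inv_mem hσ)
        obtain ⟨u4, hu4f, hu4, hτ'β⟩ := hfix τ⁻¹ (H.inv_mem hτ)
        have hs : u1 * u3 = 1 := by
          have hss : σ (σ⁻¹ β) = β := by
            rw [← AlgEquiv.mul_apply, mul_inv_cancel, AlgEquiv.one_apply]
          rw [hσ'β, map_mul, hu3f σ, hσβ] at hss
          have h2 : (u1 * u3) * β = 1 * β := by linear_combination hss
          exact mul_right_cancel₀ hβ0 h2
        have ht : u2 * u4 = 1 := by
          have htt : τ (τ⁻¹ β) = β := by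
            rw [← AlgEquiv.mul_apply, mul_inv_cancel, AlgEquiv.one_apply]
          rw [hτ'β, map_mul, hu4f τ, hτβ] at htt
          have h2 : (u2 * u4) * β = 1 * β := by linear_combination htt
          exact mul_right_cancel₀ hβ0 h2
        show (⁅σ, τ⁆ : K ≃ₐ[k] K) β = β
        simp only [commutatorElement_def, AlgEquiv.mul_apply, map_mul, hτ'β, hσ'β, hτβ, hσβ,
          hu1f, hu2f, hu3f, hu4f]
        linear_combination u2 * u4 * β * hs + β * ht
      | algebraMap z => exact AlgEquiv.commutes _ z
      | add x y hx hy ihx ihy => rw [map_add, ihx, ihy]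
      | inv x hx ihx => rw [map_inv₀, ihx]
      | mul x y hx hy ihx ihy => rw [map_mul, ihx, ihy]
    have hc_fix : c ≤ (IntermediateField.adjoin k {β}).fixingSubgroup :=
      Subgroup.topologicalClosure_minimal N hNfix
        (IntermediateField.fixingSubgroup_isClosed _)
    have hgnβ : (g ^ n) β = β :=
      (IntermediateField.mem_fixingSubgroup_iff _ _).mp (hc_fix hgn) β
        (IntermediateField.mem_adjoin_simple_self k β)
    obtain ⟨u, huf, hu1, hgβ⟩ := hfix g hg
    have hpow : ∀ j : ℕ, (g ^ j) β = u ^ j * β := by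
      intro j
      induction j with
      | zero => simp
      | succ j ih =>
        rw [pow_succ, AlgEquiv.mul_apply, hgβ, map_mul, huf (g ^ j), ih, pow_succ]
        ring
    have hun : u ^ n = 1 := by
      have := hgnβ
      rw [hpow n] at this
      have h2 : u ^ n * β = 1 * β := by rw [one_mul]; exact this
      exact mul_right_cancel₀ hβ0 h2
    have hαβ : αK = (αK * (β ^ n)⁻¹) * β ^ n := by
      field_simp
    have hωd : (αK * (β ^ n)⁻¹) ^ d = 1 := by
      rw [mul_pow, hαKd, inv_pow, ← pow_mul, hβnd, mul_inv_cancel₀ haK0]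
    have hωf : g (αK * (β ^ n)⁻¹) = αK * (β ^ n)⁻¹ :=
      aux_root1_fixed hroots hdpos.ne' hωd g
    rw [hαβ, map_mul, hωf, map_pow, hgβ, mul_pow, hun, one_mul]
  -- conclude: θ ⟨g, hg⟩ lies in U, contradiction
  have hθgU : θ ⟨g, hg⟩ ∈ U := by
    rw [← IntermediateField.fixingSubgroup_fixedField U]
    rw [IntermediateField.mem_fixingSubgroup_iff]
    intro x hx
    have hx' : (⟨x, hx⟩ : ↥E0) ∈ (IntermediateField.adjoin ↥L' {α} : IntermediateField ↥L' ↥E0) := by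
      rw [hαadj]; trivial
    have key : ∀ (y : ↥E0), y ∈ (IntermediateField.adjoin ↥L' {α} : IntermediateField ↥L' ↥E0) →
        θ ⟨g, hg⟩ (algebraMap ↥E0 ↥F' y) = algebraMap ↥E0 ↥F' y := by
      intro y hy
      induction hy using IntermediateField.adjoin_induction with
      | mem z hz =>
        rw [Set.mem_singleton_iff] at hz
        rw [hz]
        have hinj : Function.Injective ιF := ιF.toRingHom.injective
        apply hinj
        have h2 : ιF ((θ ⟨g, hg⟩) αF) = g (ιF αF) := by
          rw [hθ_apply]
          exact AlgEquiv.restrictNormalHom_apply F' g αF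
        rw [show algebraMap ↥E0 ↥F' α = αF from rfl, h2, ← hαK, hgαK]
      | algebraMap z =>
        rw [← IsScalarTower.algebraMap_apply]
        exact AlgEquiv.commutes _ z
      | add x y hx hy ihx ihy => rw [map_add, map_add, ihx, ihy]
      | inv x hx ihx => rw [map_inv₀, map_inv₀, ihx]
      | mul x y hx hy ihx ihy => rw [map_mul, map_mul, ihx, ihy]
    have := key ⟨x, hx⟩ hx'
    rwa [show algebraMap ↥E0 ↥F' (⟨x, hx⟩ : ↥E0) = x from rfl] at this
  obtain ⟨x, hxker, hxeq⟩ := hθgU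
  have hθx : θ (⟨g, hg⟩ * x⁻¹) = 1 := by
    rw [map_mul, map_inv, hxeq, mul_inv_cancel]
  have h1 : χ (⟨g, hg⟩ * x⁻¹) = 1 := hθ_ker _ hθx
  rw [map_mul, map_inv, hxker, inv_one, mul_one] at h1
  exact hχg h1
end

section
/- The 2-adic Heisenberg group H (upper triangular 3×3 matrices over ℤ₂ with ones on the diagonal) is not totally torsion free: the closed subgroup of matrices whose (1,2)-entry lies in 2ℤ₂ has abelianization isomorphic to ℤ₂ ⊕ ℤ₂ ⊕ ℤ/2ℤ, which has torsion. -/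
/-! The 2-adic Heisenberg group: upper triangular 3×3 matrices `[[1,a,b],[0,1,c],[0,0,1]]`
over `ℤ₂`, encoded by the three entries `a`, `b`, `c`. -/

@[ext] structure Heis : Type where
  a : ℤ_[2]
  b : ℤ_[2]
  c : ℤ_[2]

namespace Heis

noncomputable instance : Mul Heis := ⟨fun x y => ⟨x.a + y.a, x.b + y.b + x.a * y.c, x.c + y.c⟩⟩
noncomputable instance : One Heis := ⟨⟨0, 0, 0⟩⟩
noncomputable instance : Inv Heis := ⟨fun x => ⟨-x.a, x.a * x.c - x.b, -x.c⟩⟩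

@[simp] lemma mul_a (x y : Heis) : (x * y).a = x.a + y.a := rfl
@[simp] lemma mul_b (x y : Heis) : (x * y).b = x.b + y.b + x.a * y.c := rfl
@[simp] lemma mul_c (x y : Heis) : (x * y).c = x.c + y.c := rfl
@[simp] lemma one_a : (1 : Heis).a = 0 := rfl
@[simp] lemma one_b : (1 : Heis).b = 0 := rfl
@[simp] lemma one_c : (1 : Heis).c = 0 := rfl
@[simp] lemma inv_a (x : Heis) : x⁻¹.a = -x.a := rfl
@[simp] lemma inv_b (x : Heis) : x⁻¹.b = x.a * x.c - x.b := rfl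
@[simp] lemma inv_c (x : Heis) : x⁻¹.c = -x.c := rfl

noncomputable instance : Group Heis where
  mul_assoc x y z := by ext <;> simp only [mul_a, mul_b, mul_c] <;> ring
  one_mul x := by ext <;> simp only [mul_a, mul_b, mul_c, one_a, one_b, one_c] <;> ring
  mul_one x := by ext <;> simp only [mul_a, mul_b, mul_c, one_a, one_b, one_c] <;> ring
  inv_mul_cancel x := by
    ext <;> simp only [mul_a, mul_b, mul_c, inv_a, inv_b, inv_c, one_a, one_b, one_c] <;> ring

/-- The topology inherited from `ℤ₂ × ℤ₂ × ℤ₂`. -/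
noncomputable instance : TopologicalSpace Heis :=
  TopologicalSpace.induced (fun x => (x.a, x.b, x.c)) inferInstance

lemma cont_coords : Continuous fun x : Heis => (x.a, x.b, x.c) := continuous_induced_dom

lemma cont_a : Continuous Heis.a := (continuous_fst).comp cont_coords
lemma cont_b : Continuous Heis.b := (continuous_fst.comp continuous_snd).comp cont_coords
lemma cont_c : Continuous Heis.c := (continuous_snd.comp continuous_snd).comp cont_coords

instance : IsTopologicalGroup Heis where
  continuous_mul := by
    apply continuous_induced_rng.2
    refine Continuous.prodMk ?_ (Continuous.prodMk ?_ ?_)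
    · exact ((cont_a.comp continuous_fst).add (cont_a.comp continuous_snd))
    · exact (((cont_b.comp continuous_fst).add (cont_b.comp continuous_snd)).add
        ((cont_a.comp continuous_fst).mul (cont_c.comp continuous_snd)))
    · exact ((cont_c.comp continuous_fst).add (cont_c.comp continuous_snd))
  continuous_inv := by
    apply continuous_induced_rng.2
    refine Continuous.prodMk ?_ (Continuous.prodMk ?_ ?_)
    · exact cont_a.neg
    · exact (cont_a.mul cont_c).sub cont_b
    · exact cont_c.neg

/-- The subgroup of matrices whose `(1,2)`-entry lies in `2ℤ₂`. -/
noncomputable def K : Subgroup Heis where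
  carrier := {x | ∃ y : ℤ_[2], x.a = 2 * y}
  mul_mem' := by
    rintro x y ⟨ya, ha⟩ ⟨yb, hb⟩
    exact ⟨ya + yb, by rw [mul_a, ha, hb]; ring⟩
  one_mem' := ⟨0, by rw [one_a]; ring⟩
  inv_mem' := by
    rintro x ⟨y, hy⟩
    exact ⟨-y, by rw [inv_a, hy]; ring⟩

instance : ((commutator ↥K).topologicalClosure).Normal :=
  Subgroup.is_normal_topologicalClosure (commutator ↥K)

lemma toZMod_two : (PadicInt.toZMod (2 : ℤ_[2]) : ZMod 2) = 0 := by
  rw [show (2 : ℤ_[2]) = ((2 : ℕ) : ℤ_[2]) by norm_num, map_natCast]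
  decide

open Classical in
/-- "Division by 2" on `ℤ₂`, defined on the even elements. -/
noncomputable def half (x : ℤ_[2]) : ℤ_[2] :=
  if h : ∃ y : ℤ_[2], x = 2 * y then h.choose else 0

lemma half_two_mul (y : ℤ_[2]) : half (2 * y) = y := by
  have h : ∃ z : ℤ_[2], 2 * y = 2 * z := ⟨y, rfl⟩
  rw [half, dif_pos h]
  have := h.choose_spec
  exact (mul_left_cancel₀ two_ne_zero this).symm

/-- The abelianization map on `K`. -/
noncomputable def φ : ↥K →* Multiplicative (ℤ_[2] × ℤ_[2] × ZMod 2) where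
  toFun x := Multiplicative.ofAdd (half (x : Heis).a, (x : Heis).c, PadicInt.toZMod (x : Heis).b)
  map_one' := by
    simp only [OneMemClass.coe_one, one_a, one_b, one_c, map_zero]
    have : half (0 : ℤ_[2]) = 0 := by simpa using half_two_mul 0
    rw [this]; rfl
  map_mul' x y := by
    obtain ⟨u, hu⟩ := x.2
    obtain ⟨v, hv⟩ := y.2
    have hcoe : ((x * y : ↥K) : Heis) = (x : Heis) * (y : Heis) := rfl
    have h1 : half ((x : Heis).a + (y : Heis).a) = half (x : Heis).a + half (y : Heis).a := by
      rw [hu, hv, ← mul_add, half_two_mul, half_two_mul, half_two_mul]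
    have h2 : PadicInt.toZMod ((x : Heis).b + (y : Heis).b + (x : Heis).a * (y : Heis).c)
        = PadicInt.toZMod (x : Heis).b + PadicInt.toZMod (y : Heis).b := by
      rw [hu]
      have : PadicInt.toZMod ((2 : ℤ_[2]) * u * (y : Heis).c) = 0 := by
        rw [map_mul, map_mul, toZMod_two, zero_mul, zero_mul]
      rw [map_add, map_add, this, add_zero]
    show Multiplicative.ofAdd _ = Multiplicative.ofAdd _ * Multiplicative.ofAdd _
    rw [← ofAdd_add, Prod.mk_add_mk, Prod.mk_add_mk]
    simp only [hcoe, mul_a, mul_b, mul_c, h1, h2]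

lemma φ_surjective : Function.Surjective φ := by
  rintro ⟨u, c, z⟩
  refine ⟨⟨⟨2 * u, (z.val : ℤ_[2]), c⟩, ⟨u, rfl⟩⟩, ?_⟩
  have h1 : half ((2 : ℤ_[2]) * u) = u := half_two_mul u
  have h2 : PadicInt.toZMod ((z.val : ℤ_[2])) = z := by
    rw [map_natCast, ZMod.natCast_val, ZMod.cast_id]
  show Multiplicative.ofAdd (half ((2:ℤ_[2]) * u), c, PadicInt.toZMod ((z.val : ℤ_[2]))) = _
  rw [h1, h2]
  rfl

/-- The subgroup of `K` of elements `(0, b, 0)` with `b` even. -/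
noncomputable def L : Subgroup ↥K where
  carrier := {x | (x : Heis).a = 0 ∧ (x : Heis).c = 0 ∧ ∃ t : ℤ_[2], (x : Heis).b = 2 * t}
  mul_mem' := by
    rintro x y ⟨hxa, hxc, t, hxb⟩ ⟨hya, hyc, s, hyb⟩
    refine ⟨?_, ?_, t + s, ?_⟩ <;>
      simp [Subgroup.coe_mul, mul_a, mul_b, mul_c, hxa, hxc, hya, hyc, hxb, hyb, mul_add]
  one_mem' := ⟨rfl, rfl, 0, by simp [Subgroup.coe_one]⟩
  inv_mem' := by
    rintro x ⟨hxa, hxc, t, hxb⟩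
    refine ⟨?_, ?_, -t, ?_⟩ <;>
      simp [inv_a, inv_b, inv_c, hxa, hxc, hxb]

lemma isClosed_L : IsClosed (L : Set ↥K) := by
  have hrange : IsClosed (Set.range (fun y : ℤ_[2] => 2 * y)) := by
    have : IsCompact (Set.range (fun y : ℤ_[2] => 2 * y)) :=
      isCompact_range (by continuity)
    exact this.isClosed
  have h1 : IsClosed {h : Heis | h.a = 0} := isClosed_singleton.preimage cont_a
  have h2 : IsClosed {h : Heis | h.c = 0} := isClosed_singleton.preimage cont_c
  have h3 : IsClosed {h : Heis | ∃ t : ℤ_[2], h.b = 2 * t} := by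
    have : {h : Heis | ∃ t : ℤ_[2], h.b = 2 * t}
        = Heis.b ⁻¹' Set.range (fun y : ℤ_[2] => 2 * y) := by
      ext h; simp [Set.range, eq_comm]
    rw [this]; exact hrange.preimage cont_b
  have : (L : Set ↥K) = (Subtype.val : ↥K → Heis) ⁻¹'
      ({h : Heis | h.a = 0} ∩ ({h : Heis | h.c = 0} ∩ {h : Heis | ∃ t : ℤ_[2], h.b = 2 * t})) := by
    ext x
    simp only [Set.mem_preimage, Set.mem_inter_iff, Set.mem_setOf_eq]
    exact ⟨fun ⟨h1, h2, h3⟩ => ⟨h1, h2, h3⟩, fun ⟨h1, h2, h3⟩ => ⟨h1, h2, h3⟩⟩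
  rw [this]
  exact ((h1.inter (h2.inter h3))).preimage continuous_subtype_val

open scoped commutatorElement in
lemma commutator_coords (x y : Heis) :
    ⁅x, y⁆ = ⟨0, x.a * y.c - y.a * x.c, 0⟩ := by
  show x * y * x⁻¹ * y⁻¹ = _
  ext <;> simp only [mul_a, mul_b, mul_c, inv_a, inv_b, inv_c] <;> ring

open scoped commutatorElement in
lemma commutator_le_L : commutator ↥K ≤ L := by
  rw [commutator, Subgroup.commutator_le]
  intro g _ h _
  obtain ⟨u, hu⟩ := g.2
  obtain ⟨v, hv⟩ := h.2
  have hcoe : ((⁅g, h⁆ : ↥K) : Heis) = ⁅(g : Heis), (h : Heis)⁆ := rfl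
  refine ⟨?_, ?_, u * (h : Heis).c - v * (g : Heis).c, ?_⟩ <;>
    rw [hcoe, commutator_coords]
  show (g : Heis).a * (h : Heis).c - (h : Heis).a * (g : Heis).c = _
  rw [hu, hv]; ring

open scoped commutatorElement in
lemma L_le_commutator : L ≤ commutator ↥K := by
  rintro x ⟨hxa, hxc, t, hxb⟩
  have hg : (⟨2, 0, 0⟩ : Heis) ∈ K := ⟨1, by norm_num⟩
  have hh : (⟨0, 0, t⟩ : Heis) ∈ K := ⟨0, by norm_num⟩
  have hx : x = ⁅(⟨⟨2, 0, 0⟩, hg⟩ : ↥K), (⟨⟨0, 0, t⟩, hh⟩ : ↥K)⁆ := by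
    apply Subtype.ext
    have : ((⁅(⟨⟨2, 0, 0⟩, hg⟩ : ↥K), (⟨⟨0, 0, t⟩, hh⟩ : ↥K)⁆ : ↥K) : Heis)
        = ⁅(⟨2, 0, 0⟩ : Heis), (⟨0, 0, t⟩ : Heis)⁆ := rfl
    rw [this, commutator_coords]
    ext
    · exact hxa
    · show (x : Heis).b = 2 * t - 0 * 0; rw [hxb]; ring
    · exact hxc
  rw [hx, commutator]
  exact Subgroup.commutator_mem_commutator (Subgroup.mem_top _) (Subgroup.mem_top _)

lemma closure_eq_L : (commutator ↥K).topologicalClosure = L :=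
  le_antisymm ((commutator ↥K).topologicalClosure_minimal commutator_le_L isClosed_L)
    (le_trans L_le_commutator (Subgroup.le_topologicalClosure _))

lemma ker_eq_L : φ.ker = L := by
  ext x
  obtain ⟨u, hu⟩ := x.2
  constructor
  · intro hx
    have h : (half (x : Heis).a, (x : Heis).c, PadicInt.toZMod (x : Heis).b)
        = ((0 : ℤ_[2]), (0 : ℤ_[2]), (0 : ZMod 2)) := hx
    have h1 : half (x : Heis).a = 0 := congrArg Prod.fst h
    have h2 : (x : Heis).c = 0 := congrArg (fun p => p.2.1) h
    have h3 : PadicInt.toZMod (x : Heis).b = 0 := congrArg (fun p => p.2.2) h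
    refine ⟨?_, h2, ?_⟩
    · rw [hu] at h1 ⊢
      rw [half_two_mul] at h1
      rw [h1, mul_zero]
    · have : (x : Heis).b ∈ RingHom.ker (PadicInt.toZMod : ℤ_[2] →+* ZMod 2) := h3
      rw [PadicInt.ker_toZMod, PadicInt.maximalIdeal_eq_span_p] at this
      obtain ⟨t, ht⟩ := Ideal.mem_span_singleton'.mp this
      exact ⟨t, by rw [← ht]; ring⟩
  · rintro ⟨hxa, hxc, t, hxb⟩
    have hhalf : half (x : Heis).a = 0 := by
      rw [hxa]; simpa using half_two_mul 0
    have hto : PadicInt.toZMod (x : Heis).b = 0 := by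
      rw [hxb, map_mul, toZMod_two, zero_mul]
    show Multiplicative.ofAdd (half (x : Heis).a, (x : Heis).c, PadicInt.toZMod (x : Heis).b) = 1
    rw [hhalf, hxc, hto]
    rfl

lemma not_mem_L {x : ↥K} (hb : (x : Heis).b = 1) : x ∉ L := by
  rintro ⟨-, -, t, ht⟩
  rw [hb] at ht
  have : PadicInt.toZMod ((1 : ℤ_[2])) = PadicInt.toZMod ((2 : ℤ_[2]) * t) := by rw [← ht]
  rw [map_one, map_mul, toZMod_two, zero_mul] at this
  exact one_ne_zero this

end Heis

/-- The 2-adic Heisenberg group is not totally torsion free: the closed subgroup `K` of matrices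
whose `(1,2)`-entry lies in `2ℤ₂` has abelianization (quotient by the closure of the commutator
subgroup) isomorphic to `ℤ₂ ⊕ ℤ₂ ⊕ ℤ/2ℤ`, which has torsion (a nontrivial element whose square
is trivial). -/
theorem stmt9 :
    IsClosed (Heis.K : Set Heis) ∧
    Nonempty ((↥Heis.K ⧸ (commutator ↥Heis.K).topologicalClosure) ≃*
      Multiplicative (ℤ_[2] × ℤ_[2] × ZMod 2)) ∧
    ∃ q : ↥Heis.K ⧸ (commutator ↥Heis.K).topologicalClosure, q ≠ 1 ∧ q ^ 2 = 1 := by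
  refine ⟨?_, ?_, ?_⟩
  · -- K is closed
    have hrange : IsClosed (Set.range (fun y : ℤ_[2] => 2 * y)) :=
      (isCompact_range (by continuity)).isClosed
    have : (Heis.K : Set Heis) = Heis.a ⁻¹' Set.range (fun y : ℤ_[2] => 2 * y) := by
      ext x; simp [Heis.K, Set.range, eq_comm]
    rw [this]
    exact hrange.preimage Heis.cont_a
  · -- abelianization iso
    refine ⟨?_⟩
    have h := Heis.closure_eq_L.trans Heis.ker_eq_L.symm
    exact (QuotientGroup.quotientMulEquivOfEq h).trans
      (QuotientGroup.quotientKerEquivOfSurjective Heis.φ Heis.φ_surjective)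
  · -- torsion element
    refine ⟨QuotientGroup.mk (⟨⟨0, 1, 0⟩, ⟨0, by norm_num⟩⟩ : ↥Heis.K), ?_, ?_⟩
    · intro h
      rw [QuotientGroup.eq_one_iff, Heis.closure_eq_L] at h
      exact Heis.not_mem_L rfl h
    · rw [← QuotientGroup.mk_pow, QuotientGroup.eq_one_iff, Heis.closure_eq_L]
      have hsq : ((⟨⟨0, 1, 0⟩, ⟨0, by norm_num⟩⟩ : ↥Heis.K) ^ 2 : ↥Heis.K)
          = ⟨⟨0, 2, 0⟩, ⟨0, by norm_num⟩⟩ := by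
        apply Subtype.ext
        rw [sq]
        show ((⟨0, 1, 0⟩ : Heis) * ⟨0, 1, 0⟩) = (⟨0, 2, 0⟩ : Heis)
        ext <;> simp only [Heis.mul_a, Heis.mul_b, Heis.mul_c] <;> ring
      rw [hsq]
      exact ⟨rfl, rfl, 1, by norm_num⟩
end

section
/- Let F be a finitely generated free ℤ_l-module with basis B, and let Σ_B ⋉ F act on F by (σ, f)·f' = σ·f' + f, where Σ_B permutes the basis. Then an element (σ, f) has a fixed point in F if and only if (σ, f) has finite order. -/
open Finset

private lemma stmt10_iter {p : ℕ} [Fact p.Prime] {B : Type*} [Fintype B]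
    (σ : Equiv.Perm B) (f : B → ℤ_[p]) :
    ∀ (n : ℕ) (w : B → ℤ_[p]) (b : B),
      (fun (v : B → ℤ_[p]) (b : B) => v (σ.symm b) + f b)^[n] w b
        = w ((σ ^ n).symm b) + ∑ k ∈ Finset.range n, f ((σ ^ k).symm b) := by
  intro n
  induction n with
  | zero => intro w b; simp [Equiv.Perm.one_symm]
  | succ n ih =>
    intro w b
    have key : ∀ (k : ℕ) (x : B), (σ ^ k).symm (σ.symm x) = (σ ^ (k + 1)).symm x := by
      intro k x
      simp [← Equiv.Perm.inv_def, pow_succ', mul_inv_rev, Equiv.Perm.mul_apply]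
    rw [Function.iterate_succ_apply']
    show (fun (v : B → ℤ_[p]) (b : B) => v (σ.symm b) + f b)^[n] w (σ.symm b) + f b = _
    rw [ih w (σ.symm b)]
    simp only [key]
    rw [Finset.sum_range_succ']
    simp [add_assoc, Equiv.Perm.one_symm]

private lemma stmt10_block {M : Type*} [AddCommMonoid M] (g : ℕ → M) (m : ℕ)
    (hg : ∀ i, g (i + m) = g i) (q : ℕ) :
    ∑ i ∈ Finset.range (q * m), g i = q • ∑ i ∈ Finset.range m, g i := by
  have aux : ∀ (j i : ℕ), g (i + j * m) = g i := by
    intro j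
    induction j with
    | zero => simp
    | succ j ih =>
      intro i
      rw [add_mul, one_mul, ← add_assoc, hg, ih]
  induction q with
  | zero => simp
  | succ q ih =>
    rw [add_mul, one_mul, Finset.sum_range_add, ih, succ_nsmul]
    congr 1
    refine Finset.sum_congr rfl fun i _ => ?_
    rw [add_comm (q * m) i, aux]

/-- Let `F = B → ℤ_p` be a finitely generated free module over the `l`-adic integers with (finite)
basis `B`, and let `Σ_B ⋉ F` act affinely on `F` by `(σ, f) · v = σ·v + f`, where
`(σ·v)(b) = v(σ⁻¹ b)`.  Then the element `(σ, f)` has a fixed point in `F` if and only if it has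
finite order (i.e. some positive iterate of the affine transformation is the identity). -/
theorem stmt10 (p : ℕ) [Fact p.Prime] (B : Type*) [Fintype B]
    (σ : Equiv.Perm B) (f : B → ℤ_[p]) :
    (∃ v : B → ℤ_[p], (fun b => v (σ.symm b) + f b) = v) ↔
      ∃ n : ℕ, 0 < n ∧ (fun (v : B → ℤ_[p]) (b : B) => v (σ.symm b) + f b)^[n] = id := by
  have key2 : ∀ (k : ℕ) (x : B), σ.symm ((σ ^ k).symm x) = (σ ^ (k + 1)).symm x := by
    intro k x
    simp [← Equiv.Perm.inv_def, pow_succ, mul_inv_rev, Equiv.Perm.mul_apply]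
  constructor
  · rintro ⟨v, hv⟩
    have hv' : ∀ b, v (σ.symm b) + f b = v b := fun b => congrFun hv b
    refine ⟨orderOf σ, orderOf_pos σ, ?_⟩
    funext w b
    rw [stmt10_iter σ f (orderOf σ) w b]
    have tele : ∑ k ∈ Finset.range (orderOf σ), f ((σ ^ k).symm b)
        = v ((σ ^ (0 : ℕ)).symm b) - v ((σ ^ orderOf σ).symm b) := by
      rw [← Finset.sum_range_sub' (fun k => v ((σ ^ k).symm b))]
      refine Finset.sum_congr rfl fun k _ => ?_
      have h1 := hv' ((σ ^ k).symm b)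
      rw [key2 k b] at h1
      exact eq_sub_of_add_eq' h1
    rw [tele]
    simp [pow_orderOf_eq_one, Equiv.Perm.one_symm]
  · rintro ⟨n, hn, h⟩
    classical
    have hiter := stmt10_iter σ f n
    have hc : ∀ b, ∑ k ∈ Finset.range n, f ((σ ^ k).symm b) = 0 := by
      intro b
      have h0 := congrFun (congrFun h 0) b
      rw [hiter 0 b] at h0
      simpa using h0
    have hσ : σ ^ n = 1 := by
      have hfix : ∀ b, (σ ^ n).symm b = b := by
        intro b
        by_contra hne
        have h0 := congrFun (congrFun h (fun x => if x = b then (1 : ℤ_[p]) else 0)) b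
        rw [hiter _ b, hc b, add_zero] at h0
        rw [if_neg hne] at h0
        simp at h0
      refine Equiv.ext fun b => ?_
      have h2 := hfix ((σ ^ n) b)
      rw [Equiv.symm_apply_apply] at h2
      simpa using h2.symm
    -- forward orbit sums vanish
    have hc' : ∀ x : B, ∑ i ∈ Finset.range n, f ((σ ^ i) x) = 0 := by
      intro x
      calc ∑ i ∈ Finset.range n, f ((σ ^ i) x)
          = ∑ j ∈ Finset.range n, f ((σ ^ (n - 1 - j)) x) :=
            (Finset.sum_range_reflect (fun i => f ((σ ^ i) x)) n).symm
        _ = ∑ j ∈ Finset.range n, f ((σ ^ j).symm ((σ ^ (n - 1)) x)) := by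
            refine Finset.sum_congr rfl fun j hj => ?_
            have hj' := Finset.mem_range.mp hj
            congr 1
            rw [eq_comm, Equiv.symm_apply_eq, ← Equiv.Perm.mul_apply, ← pow_add]
            congr 2
            omega
        _ = 0 := hc _
    -- the orbit setoid
    have hsymm : ∀ {x y : B}, (∃ k : ℕ, (σ ^ k) x = y) → ∃ k : ℕ, (σ ^ k) y = x := by
      rintro x y ⟨k, rfl⟩
      refine ⟨k * (n - 1), ?_⟩
      rw [← Equiv.Perm.mul_apply, ← pow_add]
      have he : k * (n - 1) + k = n * k := by
        rw [mul_comm n k, ← Nat.mul_succ]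
        congr 1
        omega
      rw [he, pow_mul, hσ, one_pow, Equiv.Perm.one_apply]
    have htrans : ∀ {x y z : B}, (∃ k : ℕ, (σ ^ k) x = y) → (∃ k : ℕ, (σ ^ k) y = z) →
        ∃ k : ℕ, (σ ^ k) x = z := by
      rintro x y z ⟨k, rfl⟩ ⟨j, rfl⟩
      exact ⟨j + k, by rw [pow_add, Equiv.Perm.mul_apply]⟩
    let st : Setoid B := ⟨fun x y => ∃ k : ℕ, (σ ^ k) x = y,
      ⟨fun x => ⟨0, rfl⟩, hsymm, htrans⟩⟩
    let rep : B → B := fun b => (Quotient.mk st b).out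
    have hex : ∀ b : B, ∃ k : ℕ, (σ ^ k) (rep b) = b := by
      intro b
      exact Quotient.exact ((Quotient.mk st b).out_eq)
    have hrep_symm : ∀ b : B, rep (σ.symm b) = rep b := by
      intro b
      have hq : Quotient.mk st (σ.symm b) = Quotient.mk st b :=
        Quotient.sound ⟨1, by simp⟩
      show (Quotient.mk st (σ.symm b)).out = (Quotient.mk st b).out
      rw [hq]
    let jf : B → ℕ := fun b => Nat.find (hex b)
    have hj_spec : ∀ b, (σ ^ (jf b)) (rep b) = b := fun b => Nat.find_spec (hex b)
    have hj_min : ∀ b k, (σ ^ k) (rep b) = b → jf b ≤ k := fun b k hk => Nat.find_min' (hex b) hk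
    refine ⟨fun b => ∑ i ∈ Finset.range (jf b), f ((σ ^ (i + 1)) (rep b)), funext fun b => ?_⟩
    show (∑ i ∈ Finset.range (jf (σ.symm b)), f ((σ ^ (i + 1)) (rep (σ.symm b)))) + f b
        = ∑ i ∈ Finset.range (jf b), f ((σ ^ (i + 1)) (rep b))
    rw [hrep_symm b]
    set r := rep b with hrdef
    have hr : (σ ^ (jf b)) r = b := hj_spec b
    -- period of r
    have hper : Function.IsPeriodicPt σ n r := by
      show σ^[n] r = r
      rw [Equiv.Perm.iterate_eq_pow, hσ]; rfl
    set m := Function.minimalPeriod σ r with hmdef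
    have hm_pos : 0 < m := hper.minimalPeriod_pos hn
    have hm_dvd : m ∣ n := hper.minimalPeriod_dvd
    have hm_fix : (σ ^ m) r = r := by
      exact Function.iterate_minimalPeriod
    have horb : ∑ i ∈ Finset.range m, f ((σ ^ i) r) = 0 := by
      obtain ⟨q, hq⟩ := hm_dvd
      have hqpos : 0 < q := by
        rcases Nat.eq_zero_or_pos q with h0 | h0
        · subst h0; simp at hq; omega
        · exact h0
      have hperiodic : ∀ i, f ((σ ^ (i + m)) r) = f ((σ ^ i) r) := by
        intro i
        rw [pow_add, Equiv.Perm.mul_apply, hm_fix]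
      have hb := stmt10_block (fun i => f ((σ ^ i) r)) m hperiodic q
      have h0 := hc' r
      rw [hq, mul_comm m q, hb] at h0
      have h1 : (q : ℤ_[p]) * ∑ i ∈ Finset.range m, f ((σ ^ i) r) = 0 := by
        rw [← nsmul_eq_mul]; exact h0
      rcases mul_eq_zero.mp h1 with h2 | h2
      · exact absurd h2 (by exact_mod_cast hqpos.ne')
      · exact h2
    rcases Nat.eq_zero_or_pos (jf b) with hj0 | hjpos
    · -- b = r
      have hbr : r = b := by
        have := hr
        rw [hj0, pow_zero, Equiv.Perm.one_apply] at this
        exact this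
      have hw : (σ ^ (m - 1)) r = σ.symm b := by
        apply σ.injective
        rw [Equiv.apply_symm_apply, ← Equiv.Perm.mul_apply, ← pow_succ']
        have : m - 1 + 1 = m := by omega
        rw [this, hm_fix, hbr]
      have hk_le : jf (σ.symm b) ≤ m - 1 := by
        apply hj_min
        rw [hrep_symm b, ← hrdef]
        exact hw
      have hk_ge : m ≤ jf (σ.symm b) + 1 := by
        have hk := hj_spec (σ.symm b)
        rw [hrep_symm b, ← hrdef] at hk
        have hper' : Function.IsPeriodicPt σ (jf (σ.symm b) + 1) r := by
          show σ^[jf (σ.symm b) + 1] r = r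
          have : (σ ^ (jf (σ.symm b) + 1)) r = r := by
            rw [pow_succ', Equiv.Perm.mul_apply, hk, Equiv.apply_symm_apply, ← hbr]
          exact this
        exact hper'.minimalPeriod_le (Nat.succ_pos _)
      have hk_eq : jf (σ.symm b) = m - 1 := by omega
      rw [hk_eq, hj0]
      simp only [Finset.range_zero, Finset.sum_empty]
      have hm1 : m - 1 + 1 = m := by omega
      have horb' := horb
      rw [← hm1, Finset.sum_range_succ', pow_zero, Equiv.Perm.one_apply] at horb'
      rw [← hbr]
      exact horb'
    · -- jf b = t + 1
      obtain ⟨t, ht⟩ : ∃ t, jf b = t + 1 := ⟨jf b - 1, by omega⟩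
      have hrt : (σ ^ (t + 1)) r = b := by rw [← ht]; exact hr
      have hsb : (σ ^ t) r = σ.symm b := by
        apply σ.injective
        rw [Equiv.apply_symm_apply, ← Equiv.Perm.mul_apply, ← pow_succ', hrt]
      have hk_le : jf (σ.symm b) ≤ t := by
        apply hj_min
        rw [hrep_symm b, ← hrdef]
        exact hsb
      have hk_ge : t ≤ jf (σ.symm b) := by
        have hk := hj_spec (σ.symm b)
        rw [hrep_symm b, ← hrdef] at hk
        have : (σ ^ (jf (σ.symm b) + 1)) r = b := by
          rw [pow_succ', Equiv.Perm.mul_apply, hk, Equiv.apply_symm_apply]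
        have := hj_min b _ this
        omega
      have hk_eq : jf (σ.symm b) = t := le_antisymm hk_le hk_ge
      rw [hk_eq, ht, Finset.sum_range_succ, hrt]
end

section
/- Let 0 → A → H → Q → 0 be a group extension with A abelian and Q cyclic of prime order l with generator σ. Define N(A) = {a + σ·a + ... + σ^{l-1}·a : a ∈ A} and c(σ) ∈ A/N(A) as the class of σ̄^l for any lift σ̄ of σ. Then σ lifts to an element of order l in H if and only if c(σ) = 0. -/
/-- Let `1 → A → H → Q → 1` be a group extension with `A` abelian and `Q = H/A` cyclic of prime
order `l`, generated by `σ`.  Then `σ` lifts to an element of order `l` in `H` if and only if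
`c(σ) = 0`, i.e. some lift `h` of `σ` satisfies `h^l = a · (h a h⁻¹) · (h² a h⁻²) ⋯` for some
`a ∈ A` (that is, `h^l` lies in the norm subgroup `N(A)`). -/
theorem stmt12 (H : Type*) [Group H] (A : Subgroup H) [A.Normal]
    (habelian : ∀ a ∈ A, ∀ b ∈ A, a * b = b * a)
    (l : ℕ) (hl : l.Prime) (σ : H ⧸ A) (hord : orderOf σ = l)
    (hgen : ∀ q : H ⧸ A, q ∈ Subgroup.zpowers σ) :
    (∃ h : H, QuotientGroup.mk h = σ ∧ orderOf h = l) ↔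
      ∃ h a : H, QuotientGroup.mk h = σ ∧ a ∈ A ∧
        h ^ l = ((List.range l).map fun i => h ^ i * a * (h ^ i)⁻¹).prod := by
  constructor
  · rintro ⟨h, hh, hord'⟩
    refine ⟨h, 1, hh, A.one_mem, ?_⟩
    have h1 : h ^ l = 1 := by rw [← hord']; exact pow_orderOf_eq_one h
    rw [h1]
    have : ∀ i : ℕ, h ^ i * 1 * (h ^ i)⁻¹ = 1 := by intro i; group
    simp [this]
  · rintro ⟨h, a, hh, ha, heq⟩
    have hmem : ∀ i : ℕ, h ^ i * a * (h ^ i)⁻¹ ∈ A :=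
      fun i => (inferInstance : A.Normal).conj_mem a ha (h ^ i)
    have hPmem : ∀ n : ℕ, ((List.range n).map fun i => h ^ i * a * (h ^ i)⁻¹).prod ∈ A := by
      intro n
      refine Subgroup.list_prod_mem _ ?_
      intro x hx
      simp only [List.mem_map] at hx
      obtain ⟨i, _, rfl⟩ := hx
      exact hmem i
    have hinv : ∀ n : ℕ, ((List.range n).map fun i => h ^ i * a⁻¹ * (h ^ i)⁻¹).prod
        = (((List.range n).map fun i => h ^ i * a * (h ^ i)⁻¹).prod)⁻¹ := by
      intro n
      induction n with
      | zero => simp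
      | succ n ih =>
        rw [List.range_succ, List.map_append, List.prod_append, List.map_append,
          List.prod_append, ih]
        simp only [List.map_cons, List.map_nil, List.prod_cons, List.prod_nil, mul_one]
        have h1 : h ^ n * a⁻¹ * (h ^ n)⁻¹ = (h ^ n * a * (h ^ n)⁻¹)⁻¹ := by group
        rw [h1, mul_inv_rev]
        have hc := habelian _ (hmem n) _ (hPmem n)
        have := congrArg Inv.inv hc
        simpa [mul_inv_rev] using this
    have key : ∀ (b : H) (n : ℕ),
        (b * h) ^ n = ((List.range n).map fun i => h ^ i * b * (h ^ i)⁻¹).prod * h ^ n := by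
      intro b n
      induction n with
      | zero => simp
      | succ n ih =>
        rw [pow_succ, ih, List.range_succ, List.map_append, List.prod_append]
        simp only [List.map_cons, List.map_nil, List.prod_cons, List.prod_nil, mul_one]
        simp only [mul_assoc, pow_succ]
        congr 2
        rw [inv_mul_cancel_left]
    have hgl : (a⁻¹ * h) ^ l = 1 := by
      rw [key a⁻¹ l, hinv l, ← heq]
      group
    have hgσ : QuotientGroup.mk (a⁻¹ * h) = σ := by
      rw [QuotientGroup.mk_mul, (QuotientGroup.eq_one_iff _).mpr (A.inv_mem ha), one_mul, hh]
    refine ⟨a⁻¹ * h, hgσ, ?_⟩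
    have hdvd : orderOf (a⁻¹ * h) ∣ l := orderOf_dvd_of_pow_eq_one hgl
    rcases hl.eq_one_or_self_of_dvd _ hdvd with h1 | h1
    · exfalso
      have hg1 : a⁻¹ * h = 1 := orderOf_eq_one_iff.mp h1
      rw [hg1] at hgσ
      have hσ1 : orderOf σ = 1 := by rw [← hgσ]; simp
      rw [hord] at hσ1
      exact hl.one_lt.ne' hσ1
    · exact h1
end

section
/- Let k be a field of characteristic l, and let A be an augmented k-algebra in which every element has an l-th root. Then for any subgroup G of Σ_n of l-power order, every element of the invariant subalgebra B^G of B = A^{⊗n} (with Σ_n permuting tensor factors) also has an l-th root in B^G. -/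
open scoped TensorProduct

/-- The subring of invariants of `B` under the action (through `ρ`) of the subgroup `G`. -/
def invariants {k B : Type*} [CommSemiring k] [CommRing B] [Algebra k B] {n : ℕ}
    (ρ : Equiv.Perm (Fin n) →* (B ≃ₐ[k] B)) (G : Subgroup (Equiv.Perm (Fin n))) :
    Subring B where
  carrier := {b | ∀ g ∈ G, ρ g b = b}
  mul_mem' := fun ha hb g hg => by rw [map_mul, ha g hg, hb g hg]
  one_mem' := fun g _ => map_one (ρ g)
  add_mem' := fun ha hb g hg => by rw [map_add, ha g hg, hb g hg]
  zero_mem' := fun g _ => map_zero (ρ g)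
  neg_mem' := fun ha g hg => by rw [map_neg, ha g hg]

/-- Let `k` be a field of characteristic `l`, and `A` an augmented `k`-algebra in which every
element has an `l`-th root.  Let `G ⊆ Σ_n` be a subgroup of `l`-power order, acting on
`B = A^{⊗n}` by permuting the tensor factors (the action `ρ` is pinned down by its values on
pure tensors).  Then every element of the invariant subring `B^G` has an `l`-th root in `B^G`. -/
theorem stmt13 (l n : ℕ) (hl : l.Prime) (k : Type*) [Field k] [CharP k l]
    (A : Type*) [CommRing A] [Algebra k A] (ε : A →ₐ[k] k)
    (hroots : ∀ a : A, ∃ b : A, b ^ l = a)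
    (G : Subgroup (Equiv.Perm (Fin n))) (hG : IsPGroup l G)
    (ρ : Equiv.Perm (Fin n) →* ((⨂[k] _ : Fin n, A) ≃ₐ[k] ⨂[k] _ : Fin n, A))
    (hρ : ∀ (g : Equiv.Perm (Fin n)) (v : Fin n → A),
      ρ g (PiTensorProduct.tprod k v) = PiTensorProduct.tprod k fun i => v (g⁻¹ i)) :
    ∀ b ∈ invariants ρ G, ∃ c ∈ invariants ρ G, c ^ l = b := by
  classical
  intro b hb
  haveI : Fact l.Prime := ⟨hl⟩
  haveI : Nontrivial A := by
    refine nontrivial_of_ne 1 0 fun h => ?_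
    have h2 := congrArg ε h
    rw [map_one, map_zero] at h2
    exact one_ne_zero h2
  -- `k` is perfect
  haveI : PerfectRing k l := by
    refine PerfectRing.ofSurjective k l fun x => ?_
    obtain ⟨a, ha⟩ := hroots (algebraMap k A x)
    exact ⟨ε a, by rw [frobenius_def, ← map_pow, ha, ε.commutes]; simp⟩
  set φ := frobeniusEquiv k l with hφ
  let bA := Module.Basis.ofVectorSpace k A
  set ι := Module.Basis.ofVectorSpaceIndex k A with hι
  -- the monomial family
  set E : (Fin n → ι) → (⨂[k] _ : Fin n, A) := fun f => PiTensorProduct.tprod k (fun i => bA (f i)) with hE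
  -- dual functionals
  set L : (Fin n → ι) → ((⨂[k] _ : Fin n, A) →ₗ[k] k) := fun f₀ => PiTensorProduct.lift
    ((MultilinearMap.mkPiAlgebra k (Fin n) k).compLinearMap (fun i => bA.coord (f₀ i))) with hL
  have hLE : ∀ f₀ f, L f₀ (E f) = if f = f₀ then 1 else 0 := by
    intro f₀ f
    simp only [hL, hE, PiTensorProduct.lift.tprod, MultilinearMap.compLinearMap_apply,
      MultilinearMap.mkPiAlgebra_apply, Module.Basis.coord_apply, Module.Basis.repr_self]
    by_cases h : f = f₀
    · subst h; simp [Finsupp.single_eq_same]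
    · obtain ⟨i, hi⟩ := Function.ne_iff.1 h
      rw [if_neg h]
      apply Finset.prod_eq_zero (Finset.mem_univ i)
      rw [Finsupp.single_apply, if_neg hi]
  have hLI : LinearIndependent k E := by
    rw [linearIndependent_iff']
    intro s g hsum f hf
    have := congrArg (L f) hsum
    rw [map_sum, map_zero] at this
    simp only [map_smul, hLE, smul_eq_mul, mul_ite, mul_one, mul_zero] at this
    rwa [Finset.sum_ite_eq' s f g, if_pos hf] at this
  have hSpan : ⊤ ≤ Submodule.span k (Set.range E) := by
    rintro x -
    induction x using PiTensorProduct.induction_on with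
    | smul_tprod r v =>
      refine Submodule.smul_mem _ r ?_
      have hv : v = fun i => ∑ j ∈ (bA.repr (v i)).support, bA.repr (v i) j • bA j := by
        funext i
        conv_lhs => rw [← bA.linearCombination_repr (v i)]
        rw [Finsupp.linearCombination_apply, Finsupp.sum]
      rw [hv, MultilinearMap.map_sum_finset]
      refine Submodule.sum_mem _ fun r hr => ?_
      rw [MultilinearMap.map_smul_univ]
      exact Submodule.smul_mem _ _ (Submodule.subset_span ⟨fun i => r i, rfl⟩)
    | add x y hx hy => exact Submodule.add_mem _ hx hy
  let e : Module.Basis (Fin n → ι) k (⨂[k] _ : Fin n, A) := Module.Basis.mk hLI hSpan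
  have he : ∀ f, e f = E f := fun f => Module.Basis.mk_apply hLI hSpan f
  -- nontriviality and characteristic of B
  haveI : Nonempty ι := bA.index_nonempty
  haveI : Nontrivial (⨂[k] _ : Fin n, A) := Equiv.nontrivial e.repr.toEquiv
  haveI : ExpChar k l := inferInstance
  haveI : ExpChar (⨂[k] _ : Fin n, A) l := expChar_of_injective_algebraMap (algebraMap k (⨂[k] _ : Fin n, A)).injective l
  -- chosen roots of basis vectors
  set rt : ι → A := fun j => (hroots (bA j)).choose with hrt
  have hrtl : ∀ j, rt j ^ l = bA j := fun j => (hroots (bA j)).choose_spec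
  set z : (Fin n → ι) → (⨂[k] _ : Fin n, A) := fun f => PiTensorProduct.tprod k (fun i => rt (f i)) with hz
  -- the root operator
  set ψ : (⨂[k] _ : Fin n, A) → (⨂[k] _ : Fin n, A) := fun x => (e.repr x).sum fun f c => φ.symm c • z f with hψ
  have h0 : ∀ f : Fin n → ι, φ.symm (0 : k) • z f = 0 := by
    intro f; rw [map_zero, zero_smul]
  have hψadd : ∀ x y : ⨂[k] _ : Fin n, A, ψ (x + y) = ψ x + ψ y := by
    intro x y
    show (e.repr (x + y)).sum _ = (e.repr x).sum _ + (e.repr y).sum _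
    rw [map_add]
    exact Finsupp.sum_add_index' h0 (fun f c d => by rw [map_add, add_smul])
  have hψsmul : ∀ (c : k) (x : ⨂[k] _ : Fin n, A), ψ (c • x) = φ.symm c • ψ x := by
    intro c x
    show (e.repr (c • x)).sum _ = φ.symm c • (e.repr x).sum _
    rw [map_smul, Finsupp.sum_smul_index (fun f => h0 f), Finsupp.smul_sum]
    exact Finsupp.sum_congr fun f _ => by rw [map_mul, mul_smul]
  have hψe : ∀ f, ψ (e f) = z f := by
    intro f
    show (e.repr (e f)).sum _ = z f
    rw [Module.Basis.repr_self, Finsupp.sum_single_index (h0 f), map_one, one_smul]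
  have hzl : ∀ f, z f ^ l = e f := by
    intro f
    rw [he, hz, hE]
    show ((PiTensorProduct.tprodMonoidHom k) fun i => rt (f i)) ^ l = _
    rw [← map_pow]
    have hfn : ((fun i => rt (f i)) ^ l) = fun i => bA (f i) := by
      funext i; rw [Pi.pow_apply, hrtl]
    show PiTensorProduct.tprod k ((fun i => rt (f i)) ^ l) = _
    rw [hfn]
  -- l-th power of ψ x is x
  have hψpow : ∀ x : ⨂[k] _ : Fin n, A, ψ x ^ l = x := by
    intro x
    have h1 : ψ x ^ l = frobenius (⨂[k] _ : Fin n, A) l (ψ x) := rfl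
    have h2 : ψ x = (e.repr x).sum fun f c => φ.symm c • z f := rfl
    rw [h1, h2, map_finsuppSum]
    have h3 : ∀ f c, frobenius (⨂[k] _ : Fin n, A) l (φ.symm c • z f) = c • e f := by
      intro f c
      rw [frobenius_def, smul_pow, hzl]
      have h4 : φ.symm c ^ l = frobenius k l (φ.symm c) := rfl
      rw [h4, hφ, frobenius_apply_frobeniusEquiv_symm]
    simp_rw [h3]
    conv_rhs => rw [← e.linearCombination_repr x]
    rw [Finsupp.linearCombination_apply]
  -- equivariance of ψ
  have hψρ : ∀ g : Equiv.Perm (Fin n), ∀ x : ⨂[k] _ : Fin n, A, ρ g (ψ x) = ψ (ρ g x) := by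
    intro g x
    have hze : ∀ f : Fin n → ι, (ρ g) (z f) = z fun i => f (g⁻¹ i) := fun f => hρ g _
    have hEe : ∀ f : Fin n → ι, (ρ g) (e f) = e fun i => f (g⁻¹ i) := by
      intro f
      rw [he, he, hE]
      exact hρ g _
    have hψ0 : ψ 0 = 0 := by
      show (e.repr 0).sum _ = 0
      rw [map_zero, Finsupp.sum_zero_index]
    have hx : x ∈ Submodule.span k (Set.range e) := by rw [e.span_eq]; trivial
    induction hx using Submodule.span_induction with
    | mem y hy =>
      obtain ⟨f, rfl⟩ := hy
      rw [hψe, hze, hEe, hψe]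
    | zero =>
      simp only [hψ0, map_zero]
    | add y z hy hz ihy ihz => rw [hψadd, map_add, map_add, hψadd, ihy, ihz]
    | smul c y hy ihy => rw [hψsmul, map_smul, map_smul, hψsmul, ihy]
  refine ⟨ψ b, fun g hg => ?_, hψpow b⟩
  rw [hψρ g b, hb g hg]
end

section
/- Let k be a field of characteristic l, A an augmented k-algebra in which every element has an l-th root, and G ⊆ G' ⊆ Σ_n subgroups of l-power order. Let B = A^{⊗n} with the permutation Σ_n-action and tensor product augmentation, and let I_{B^G}, I_{B^{G'}} be the augmentation ideals of the invariant subrings B^G, B^{G'}. Then I_{B^G} = I_{B^{G'}} · B^G. -/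
open scoped TensorProduct

lemma invariants_antitone {k B : Type*} [CommSemiring k] [CommRing B] [Algebra k B] {n : ℕ}
    (ρ : Equiv.Perm (Fin n) →* (B ≃ₐ[k] B)) {G G' : Subgroup (Equiv.Perm (Fin n))}
    (h : G ≤ G') : invariants ρ G' ≤ invariants ρ G :=
  fun _ hb g hg => hb g (h hg)

lemma mem_invariants {k B : Type*} [CommSemiring k] [CommRing B] [Algebra k B] {n : ℕ}
    (ρ : Equiv.Perm (Fin n) →* (B ≃ₐ[k] B)) (G : Subgroup (Equiv.Perm (Fin n))) (b : B) :
    b ∈ invariants ρ G ↔ ∀ g ∈ G, ρ g b = b := Iff.rfl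


open scoped TensorProduct

namespace Stmt14Aux

open PiTensorProduct Polynomial

variable {k : Type*} [Field k] {A : Type*} [CommRing A] [Algebra k A] {n : ℕ}

section Coords

variable {S : Type*} (bA : Module.Basis S k A)

/-- monomial -/
noncomputable def M (v : Fin n → S) : ⨂[k] (_ : Fin n), A :=
  tprod k fun i => bA (v i)

/-- coordinate functional -/
noncomputable def Φ (u : Fin n → S) : (⨂[k] (_ : Fin n), A) →ₗ[k] k :=
  PiTensorProduct.lift
    ((MultilinearMap.mkPiAlgebra k (Fin n) k).compLinearMap fun i => bA.coord (u i))

lemma Φ_tprod (u : Fin n → S) (w : Fin n → A) :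
    Φ bA u (tprod k w) = ∏ i, bA.repr (w i) (u i) := by
  simp [Φ, Module.Basis.coord]

lemma Φ_M_self (u : Fin n → S) : Φ bA u (M bA u) = 1 := by
  rw [M, Φ_tprod]; simp

lemma Φ_M_ne {u v : Fin n → S} (h : u ≠ v) : Φ bA u (M bA v) = 0 := by
  classical
  rw [M, Φ_tprod]
  obtain ⟨i, hi⟩ := Function.ne_iff.mp h
  refine Finset.prod_eq_zero (Finset.mem_univ i) ?_
  rw [Module.Basis.repr_self, Finsupp.single_apply, if_neg (fun hh => hi hh.symm)]

lemma mem_span_M (x : ⨂[k] (_ : Fin n), A) : x ∈ Submodule.span k (Set.range (M bA)) := by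
  classical
  have hx : x ∈ Submodule.span k (Set.range ⇑(tprod k (s := fun _ : Fin n => A))) := by
    rw [PiTensorProduct.span_tprod_eq_top]; trivial
  refine Submodule.span_le.mpr ?_ hx
  rintro _ ⟨w, rfl⟩
  have hw : (tprod k w : ⨂[k] (_ : Fin n), A)
      = tprod k fun i => ∑ s ∈ (bA.repr (w i)).support, bA.repr (w i) s • bA s := by
    congr 1
    funext i
    conv_lhs => rw [← bA.linearCombination_repr (w i)]
    rw [Finsupp.linearCombination_apply, Finsupp.sum]
  rw [hw, MultilinearMap.map_sum_finset (PiTensorProduct.tprod k)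
    (fun i s => bA.repr (w i) s • bA s) (fun i => (bA.repr (w i)).support)]
  refine Submodule.sum_mem _ fun r hr => ?_
  have : (tprod k fun i => bA.repr (w i) (r i) • bA (r i))
      = (∏ i, bA.repr (w i) (r i)) • M bA r := by
    rw [M, MultilinearMap.map_smul_univ]
  rw [this]
  exact Submodule.smul_mem _ _ (Submodule.subset_span ⟨r, rfl⟩)

end Coords

lemma tprod_pow (w : Fin n → A) (m : ℕ) :
    (tprod k w : ⨂[k] (_ : Fin n), A) ^ m = tprod k fun i => w i ^ m := by
  induction m with
  | zero => simp [PiTensorProduct.one_def, Pi.one_def]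
  | succ m ih =>
    rw [pow_succ, ih, PiTensorProduct.tprod_mul_tprod]
    congr 1; funext i; rw [Pi.mul_apply, ← pow_succ]

lemma root_iter {A : Type*} [CommRing A] (l : ℕ) (r : A → A) (hr : ∀ a : A, r a ^ l = a)
    (e : ℕ) (a : A) : (r^[e] a) ^ l ^ e = a := by
  induction e generalizing a with
  | zero => simp
  | succ e ihe =>
    rw [Function.iterate_succ_apply, pow_succ, pow_mul, ihe (r a), hr]

variable
  (ρ : Equiv.Perm (Fin n) →* ((⨂[k] (_ : Fin n), A) ≃ₐ[k] ⨂[k] (_ : Fin n), A))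
  (hρ : ∀ (g : Equiv.Perm (Fin n)) (v : Fin n → A),
      ρ g (tprod k v) = tprod k fun i => v (g⁻¹ i))

include hρ

lemma eps_inv (ε : A →ₐ[k] k) (εB : (⨂[k] (_ : Fin n), A) →ₐ[k] k)
    (hεB : ∀ v : Fin n → A, εB (tprod k v) = ∏ i, ε (v i))
    (g : Equiv.Perm (Fin n)) (y : ⨂[k] (_ : Fin n), A) : εB (ρ g y) = εB y := by
  induction y using PiTensorProduct.induction_on with
  | smul_tprod c w =>
    rw [map_smul, map_smul, map_smul, hρ, hεB, hεB]
    congr 1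
    exact Equiv.prod_comp (g⁻¹ : Equiv.Perm (Fin n)) (fun i => ε (w i))
  | add a b ha hb => rw [map_add, map_add, map_add, ha, hb]

lemma Φ_equiv {S : Type*} (bA : Module.Basis S k A) (g : Equiv.Perm (Fin n)) (u : Fin n → S)
    (y : ⨂[k] (_ : Fin n), A) : Φ bA u (ρ g y) = Φ bA (u ∘ ⇑g) y := by
  induction y using PiTensorProduct.induction_on with
  | smul_tprod c w =>
    rw [map_smul, map_smul, map_smul, hρ, Φ_tprod, Φ_tprod]
    congr 1
    rw [← Equiv.prod_comp (g⁻¹ : Equiv.Perm (Fin n))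
      (fun i => bA.repr (w i) ((u ∘ ⇑g) i))]
    refine Finset.prod_congr rfl fun i _ => ?_
    simp
  | add a b ha hb => rw [map_add, map_add, map_add, ha, hb]

lemma sum_orbit_invariant {S : Type*} {G : Subgroup (Equiv.Perm (Fin n))}
    (O : Finset (Fin n → S)) (hO : ∀ g ∈ G, ∀ u ∈ O, u ∘ ⇑g ∈ O)
    (f : (Fin n → S) → ⨂[k] (_ : Fin n), A)
    (hf : ∀ (u : Fin n → S) (g : Equiv.Perm (Fin n)), ρ g (f u) = f (u ∘ ⇑g⁻¹))
    {g : Equiv.Perm (Fin n)} (hg : g ∈ G) :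
    ρ g (∑ u ∈ O, f u) = ∑ u ∈ O, f u := by
  classical
  rw [map_sum]
  simp_rw [hf]
  refine Finset.sum_nbij' (fun u => u ∘ ⇑g⁻¹) (fun u => u ∘ ⇑g) ?_ ?_ ?_ ?_ ?_
  · exact fun u hu => hO g⁻¹ (inv_mem hg) u hu
  · exact fun u hu => hO g hg u hu
  · intro u _; funext i; simp
  · intro u _; funext i; simp
  · intro u _; rfl

lemma repA {S : Type*} (bA : Module.Basis S k A) (l e : ℕ) (hl : l.Prime) [CharP k l]
    (hch : CharP (⨂[k] (_ : Fin n), A) l)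
    (r : A → A) (hr : ∀ a : A, r a ^ l = a)
    (G : Subgroup (Equiv.Perm (Fin n)))
    (c : (Fin n → S) → k) (hc : ∀ g ∈ G, ∀ u, c (u ∘ ⇑g) = c u)
    (N : ℕ) (F : Finset (Fin n → S)) (hcard : F.card ≤ N)
    (hF : ∀ g ∈ G, ∀ u ∈ F, u ∘ ⇑g ∈ F) :
    ∃ (m : ℕ) (co : Fin m → k) (z : Fin m → ⨂[k] (_ : Fin n), A),
      (∀ j, ∀ g ∈ G, ρ g (z j) = z j) ∧
      ∑ v ∈ F, c v • M bA v = ∑ j, co j • z j ^ l ^ e := by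
  classical
  haveI : Fact l.Prime := ⟨hl⟩
  haveI := hch
  induction N generalizing F with
  | zero =>
    refine ⟨0, Fin.elim0, Fin.elim0, fun j => j.elim0, ?_⟩
    rw [Finset.card_eq_zero.mp (Nat.le_zero.mp hcard)]
    simp
  | succ N ih =>
    rcases F.eq_empty_or_nonempty with rfl | ⟨v, hv⟩
    · refine ⟨0, Fin.elim0, Fin.elim0, fun j => j.elim0, ?_⟩
      simp
    haveI : Fintype ↥G := Fintype.ofFinite _
    set O : Finset (Fin n → S) :=
      Finset.image (fun g : ↥G => v ∘ ⇑(g : Equiv.Perm (Fin n))) Finset.univ with hO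
    have hvO : v ∈ O := by
      refine Finset.mem_image.mpr ⟨1, Finset.mem_univ _, ?_⟩
      funext i; simp
    have hOF : O ⊆ F := by
      intro u hu
      obtain ⟨g, -, rfl⟩ := Finset.mem_image.mp hu
      exact hF g g.2 v hv
    have hOstab : ∀ g ∈ G, ∀ u ∈ O, u ∘ ⇑g ∈ O := by
      intro g hg u hu
      obtain ⟨g', -, rfl⟩ := Finset.mem_image.mp hu
      refine Finset.mem_image.mpr ⟨⟨(g' : Equiv.Perm (Fin n)) * g, mul_mem g'.2 hg⟩,
        Finset.mem_univ _, ?_⟩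
      funext i; simp [Equiv.Perm.mul_apply]
    have hcO : ∀ u ∈ O, c u = c v := by
      intro u hu
      obtain ⟨g, -, rfl⟩ := Finset.mem_image.mp hu
      exact hc g g.2 v
    set z0 : ⨂[k] (_ : Fin n), A := ∑ u ∈ O, tprod k (fun i => r^[e] (bA (u i))) with hz0
    have hz0inv : ∀ g ∈ G, ρ g z0 = z0 := by
      intro g hg
      exact sum_orbit_invariant ρ hρ O hOstab _ (fun u g' => by rw [hρ]; rfl) hg
    have hz0pow : z0 ^ l ^ e = ∑ u ∈ O, M bA u := by
      rw [hz0, sum_pow_char_pow]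
      refine Finset.sum_congr rfl fun u _ => ?_
      rw [tprod_pow]
      congr 1; funext i; rw [root_iter l r hr]
    have hsplit : ∑ v ∈ F, c v • M bA v
        = (∑ u ∈ F \ O, c u • M bA u) + c v • z0 ^ l ^ e := by
      rw [hz0pow, Finset.smul_sum, ← Finset.sum_sdiff hOF]
      congr 1
      exact Finset.sum_congr rfl fun u hu => by rw [hcO u hu]
    have hFO1 : ∀ g ∈ G, ∀ u ∈ F \ O, u ∘ ⇑g ∈ F \ O := by
      intro g hg u hu
      rcases Finset.mem_sdiff.mp hu with ⟨huF, huO⟩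
      refine Finset.mem_sdiff.mpr ⟨hF g hg u huF, fun hmem => huO ?_⟩
      have := hOstab g⁻¹ (inv_mem hg) _ hmem
      have he : (u ∘ ⇑g) ∘ ⇑g⁻¹ = u := by funext i; simp
      rwa [he] at this
    have hcard' : (F \ O).card ≤ N := by
      have h1 : (F \ O).card = F.card - O.card := Finset.card_sdiff_of_subset hOF
      have h2 : 0 < O.card := Finset.card_pos.mpr ⟨v, hvO⟩
      omega
    obtain ⟨m, co, z, hzinv, hrep⟩ := ih (F \ O) hcard' hFO1
    refine ⟨m + 1, Fin.cons (c v) co, Fin.cons z0 z, ?_, ?_⟩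
    · intro j g hg
      refine Fin.cases ?_ ?_ j
      · exact hz0inv g hg
      · intro j'; simpa using hzinv j' g hg
    · rw [hsplit, hrep, Fin.sum_univ_succ]
      simp [add_comm]

lemma normB (ε : A →ₐ[k] k) (εB : (⨂[k] (_ : Fin n), A) →ₐ[k] k)
    (hεB : ∀ v : Fin n → A, εB (tprod k v) = ∏ i, ε (v i))
    (G' : Subgroup (Equiv.Perm (Fin n)))
    (y : ⨂[k] (_ : Fin n), A) (hy : εB y = 0) :
    ∃ d : ℕ → ⨂[k] (_ : Fin n), A,
      (∀ i, ∀ g ∈ G', ρ g (d i) = d i) ∧ (∀ i, εB (d i) = 0) ∧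
      y ^ (Nat.card ↥G') = ∑ i ∈ Finset.range (Nat.card ↥G'), d i * y ^ i := by
  classical
  haveI : Nontrivial (⨂[k] (_ : Fin n), A) := εB.toRingHom.domain_nontrivial
  haveI : Fintype ↥G' := Fintype.ofFinite _
  set q := Nat.card ↥G' with hqdef
  have hq : q = Fintype.card ↥G' := Nat.card_eq_fintype_card
  set P : Polynomial (⨂[k] (_ : Fin n), A) :=
    ∏ g : ↥G', (X - C (ρ (g : Equiv.Perm (Fin n)) y)) with hP
  have hmon : P.Monic := monic_prod_of_monic _ _ (fun _ _ => monic_X_sub_C _)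
  have hdeg : P.natDegree = q := by
    rw [hP, natDegree_prod_of_monic _ _ (fun _ _ => monic_X_sub_C _)]
    simp [hq, natDegree_X_sub_C, natDegree_X]
  have heval : P.eval y = 0 := by
    rw [hP, eval_prod]
    refine Finset.prod_eq_zero (Finset.mem_univ (1 : ↥G')) ?_
    simp
  have hinv : ∀ i, ∀ g ∈ G', ρ g (P.coeff i) = P.coeff i := by
    intro i g hg
    have hmap : P.map ((ρ g).toAlgHom.toRingHom) = P := by
      rw [hP, Polynomial.map_prod]
      have h1 : ∀ g' : ↥G',
          (X - C (ρ (g' : Equiv.Perm (Fin n)) y)).map ((ρ g).toAlgHom.toRingHom)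
          = X - C (ρ (((⟨g, hg⟩ * g' : ↥G') : Equiv.Perm (Fin n))) y) := by
        intro g'
        rw [Polynomial.map_sub, Polynomial.map_X, Polynomial.map_C]
        congr 1
        have : (((⟨g, hg⟩ * g' : ↥G') : Equiv.Perm (Fin n))) = g * (g' : Equiv.Perm (Fin n)) := rfl
        rw [this, map_mul ρ, AlgEquiv.mul_apply]
        rfl
      rw [Finset.prod_congr rfl (fun g' _ => h1 g')]
      exact Fintype.prod_equiv (Equiv.mulLeft (⟨g, hg⟩ : ↥G')) _ _ (fun g' => rfl)
    conv_rhs => rw [← hmap]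
    rw [Polynomial.coeff_map]
    rfl
  have hz : ∀ i, i < q → εB (P.coeff i) = 0 := by
    intro i hi
    have hmap : P.map εB.toRingHom = X ^ q := by
      rw [hP, Polynomial.map_prod]
      have h1 : ∀ g' : ↥G',
          (X - C (ρ (g' : Equiv.Perm (Fin n)) y)).map εB.toRingHom = X := by
        intro g'
        rw [Polynomial.map_sub, Polynomial.map_X, Polynomial.map_C]
        have h0 : εB.toRingHom (ρ (g' : Equiv.Perm (Fin n)) y) = 0 := by
          show εB _ = 0
          rw [eps_inv ρ hρ ε εB hεB, hy]
        rw [h0, map_zero, sub_zero]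
      rw [Finset.prod_congr rfl (fun g' _ => h1 g')]
      simp [hq]
    have : εB (P.coeff i) = (P.map εB.toRingHom).coeff i := by
      rw [Polynomial.coeff_map]; rfl
    rw [this, hmap, Polynomial.coeff_X_pow, if_neg (by omega)]
  have hkey : y ^ q = ∑ i ∈ Finset.range q, (-(P.coeff i)) * y ^ i := by
    have h0 : (0 : ⨂[k] (_ : Fin n), A)
        = ∑ i ∈ Finset.range (P.natDegree + 1), P.coeff i * y ^ i := by
      rw [← Polynomial.eval_eq_sum_range, heval]
    rw [hdeg, Finset.sum_range_succ] at h0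
    have hlead : P.coeff q = 1 := by
      rw [← hdeg]; exact hmon.coeff_natDegree
    rw [hlead, one_mul] at h0
    have := eq_neg_of_add_eq_zero_right h0.symm
    rw [this, ← Finset.sum_neg_distrib]
    exact Finset.sum_congr rfl (fun i _ => (neg_mul _ _).symm)
  refine ⟨fun i => if i < q then -(P.coeff i) else 0, ?_, ?_, ?_⟩
  · intro i g hg
    dsimp only
    by_cases hi : i < q
    · rw [if_pos hi, map_neg, hinv i g hg]
    · rw [if_neg hi, map_zero]
  · intro i
    dsimp only
    by_cases hi : i < q
    · rw [if_pos hi, map_neg, hz i hi, neg_zero]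
    · rw [if_neg hi, map_zero]
  · rw [hkey]
    exact Finset.sum_congr rfl fun i hi => by
      dsimp only
      rw [if_pos (Finset.mem_range.mp hi)]

end Stmt14Aux



/-- Let `k` be a field of characteristic `l`, `A` an augmented `k`-algebra in which every element
has an `l`-th root, and `G ⊆ G' ⊆ Σ_n` subgroups of `l`-power order acting on `B = A^{⊗n}` by
permuting the tensor factors, with the tensor product augmentation `ε_B`.  Then the augmentation
ideals of the invariant subrings satisfy `I_{B^G} = I_{B^{G'}} · B^G`. -/
theorem stmt14 (l n : ℕ) (hl : l.Prime) (k : Type*) [Field k] [CharP k l]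
    (A : Type*) [CommRing A] [Algebra k A] (ε : A →ₐ[k] k)
    (hroots : ∀ a : A, ∃ b : A, b ^ l = a)
    (G G' : Subgroup (Equiv.Perm (Fin n))) (hGG' : G ≤ G')
    (hG : IsPGroup l G) (hG' : IsPGroup l G')
    (ρ : Equiv.Perm (Fin n) →* ((⨂[k] _ : Fin n, A) ≃ₐ[k] ⨂[k] _ : Fin n, A))
    (hρ : ∀ (g : Equiv.Perm (Fin n)) (v : Fin n → A),
      ρ g (PiTensorProduct.tprod k v) = PiTensorProduct.tprod k fun i => v (g⁻¹ i))
    (εB : (⨂[k] _ : Fin n, A) →ₐ[k] k)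
    (hεB : ∀ v : Fin n → A, εB (PiTensorProduct.tprod k v) = ∏ i, ε (v i)) :
    RingHom.ker (εB.toRingHom.comp (invariants ρ G).subtype) =
      Ideal.map (Subring.inclusion (invariants_antitone ρ hGG'))
        (RingHom.ker (εB.toRingHom.comp (invariants ρ G').subtype)) := by
  classical
  haveI : Nontrivial (⨂[k] (_ : Fin n), A) := εB.toRingHom.domain_nontrivial
  haveI : Fact l.Prime := ⟨hl⟩
  have hchB : CharP (⨂[k] (_ : Fin n), A) l := charP_of_injective_ringHom (algebraMap k (⨂[k] (_ : Fin n), A)).injective l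
  obtain ⟨e, he⟩ := IsPGroup.iff_card.mp hG'
  choose r hr using hroots
  set bA : Module.Basis ↥(Module.Basis.ofVectorSpaceIndex k A) k A := Module.Basis.ofVectorSpace k A with hbA
  refine le_antisymm ?_ ?_
  · -- hard direction
    intro x hx
    have hx0 : εB (x : ⨂[k] (_ : Fin n), A) = 0 := by
      simpa [RingHom.mem_ker] using hx
    have hxinv : ∀ g ∈ G, ρ g (x : ⨂[k] (_ : Fin n), A) = x := x.2
    set c : (Fin n → ↥(Module.Basis.ofVectorSpaceIndex k A)) → k :=
      fun u => Stmt14Aux.Φ bA u (x : ⨂[k] (_ : Fin n), A) with hcdef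
    obtain ⟨d, hd⟩ := Finsupp.mem_span_range_iff_exists_finsupp.mp
      (Stmt14Aux.mem_span_M bA (x : ⨂[k] (_ : Fin n), A))
    rw [Finsupp.sum] at hd
    have hcu0 : ∀ u, u ∉ d.support → c u = 0 := by
      intro u hu
      show Stmt14Aux.Φ bA u (x : ⨂[k] (_ : Fin n), A) = 0
      rw [← hd, map_sum]
      refine Finset.sum_eq_zero fun v hv => ?_
      rw [map_smul, Stmt14Aux.Φ_M_ne bA (fun hh => hu (by rw [hh]; exact hv)), smul_zero]
    have hdc : ∀ v ∈ d.support, d v = c v := by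
      intro v hv
      show d v = Stmt14Aux.Φ bA v (x : ⨂[k] (_ : Fin n), A)
      rw [← hd, map_sum]
      rw [Finset.sum_eq_single_of_mem v hv]
      · rw [map_smul, Stmt14Aux.Φ_M_self, smul_eq_mul, mul_one]
      · intro v' _ hne
        rw [map_smul, Stmt14Aux.Φ_M_ne bA (fun hh => hne hh.symm), smul_zero]
    have hcinv : ∀ g ∈ G, ∀ u, c (u ∘ ⇑g) = c u := by
      intro g hg u
      have h1 := Stmt14Aux.Φ_equiv ρ hρ bA g u (x : ⨂[k] (_ : Fin n), A)
      rw [hxinv g hg] at h1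
      exact h1.symm
    set F₀ : Finset (Fin n → ↥(Module.Basis.ofVectorSpaceIndex k A)) :=
      d.support.filter (fun u => c u ≠ 0) with hF₀
    have hrep : (x : ⨂[k] (_ : Fin n), A) = ∑ v ∈ F₀, c v • Stmt14Aux.M bA v := by
      rw [hF₀, Finset.sum_filter_of_ne, ← hd]
      · exact (Finset.sum_congr rfl fun v hv => by rw [hdc v hv]).symm
      · intro v hv hne hc0
        exact hne (by rw [hc0, zero_smul])
    have hstab : ∀ g ∈ G, ∀ u ∈ F₀, u ∘ ⇑g ∈ F₀ := by
      intro g hg u hu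
      rcases Finset.mem_filter.mp hu with ⟨hus, huc⟩
      have hcg : c (u ∘ ⇑g) ≠ 0 := by rw [hcinv g hg u]; exact huc
      refine Finset.mem_filter.mpr ⟨?_, hcg⟩
      by_contra hns
      exact hcg (hcu0 _ hns)
    obtain ⟨m, co, z, hzinv, hrepz⟩ := Stmt14Aux.repA ρ hρ bA l e hl hchB r hr G c hcinv
      F₀.card F₀ le_rfl hstab
    have hxz : (x : ⨂[k] (_ : Fin n), A) = ∑ j, co j • z j ^ l ^ e := hrep.trans hrepz
    set t : Fin m → k := fun j => εB (z j) with ht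
    set y : Fin m → ⨂[k] (_ : Fin n), A :=
      fun j => z j - algebraMap k _ (t j) with hy
    have hyinv : ∀ j, ∀ g ∈ G, ρ g (y j) = y j := by
      intro j g hg
      rw [hy]
      dsimp only
      rw [map_sub, hzinv j g hg, AlgEquiv.commutes]
    have hy0 : ∀ j, εB (y j) = 0 := by
      intro j
      rw [hy]
      dsimp only
      rw [map_sub, AlgHom.commutes, ht]
      simp
    have hzy : ∀ j, z j ^ l ^ e = y j ^ l ^ e + algebraMap k _ (t j ^ l ^ e) := by
      intro j
      have h2 : z j = y j + algebraMap k _ (t j) := by rw [hy]; ring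
      rw [h2, add_pow_char_pow, map_pow]
    have hxy : (x : ⨂[k] (_ : Fin n), A)
        = (∑ j, co j • y j ^ l ^ e) + algebraMap k _ (∑ j, co j * t j ^ l ^ e) := by
      rw [hxz, map_sum, ← Finset.sum_add_distrib]
      refine Finset.sum_congr rfl fun j _ => ?_
      rw [hzy j, smul_add, map_mul, ← Algebra.smul_def]
    have hs0 : (∑ j, co j * t j ^ l ^ e) = 0 := by
      have h3 := congrArg εB hxy
      rw [hx0, map_add, map_sum] at h3
      have h4 : ∀ j ∈ Finset.univ, εB (co j • y j ^ l ^ e) = 0 := by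
        intro j _
        rw [map_smul, map_pow, hy0 j, zero_pow (pow_ne_zero e hl.ne_zero), smul_zero]
      rw [Finset.sum_eq_zero h4, zero_add] at h3
      have h5 : εB (algebraMap k _ (∑ j, co j * t j ^ l ^ e))
          = ∑ j, co j * t j ^ l ^ e := by
        rw [AlgHom.commutes]; simp
      rw [h5] at h3
      exact h3.symm
    have hxy2 : (x : ⨂[k] (_ : Fin n), A) = ∑ j, co j • y j ^ l ^ e := by
      rw [hxy, hs0, map_zero, add_zero]
    -- memberships
    have hyinvmem : ∀ j, y j ∈ invariants ρ G := fun j => (mem_invariants ρ G (y j)).mpr (hyinv j)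
    set Y : Fin m → ↥(invariants ρ G) := fun j => ⟨y j, hyinvmem j⟩ with hY
    set ι := Subring.inclusion (invariants_antitone ρ hGG') with hι
    set K := RingHom.ker (εB.toRingHom.comp (invariants ρ G').subtype) with hK
    have hmemq : ∀ j, Y j ^ l ^ e ∈ Ideal.map ι K := by
      intro j
      obtain ⟨dd, hddinv, hdd0, hddkey⟩ := Stmt14Aux.normB ρ hρ ε εB hεB G' (y j) (hy0 j)
      rw [he] at hddkey
      have hddG' : ∀ i, dd i ∈ invariants ρ G' :=
        fun i => (mem_invariants ρ G' (dd i)).mpr (hddinv i)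
      have hkey2 : Y j ^ l ^ e
          = ∑ i ∈ Finset.range (l ^ e), ι ⟨dd i, hddG' i⟩ * Y j ^ i := by
        apply Subtype.ext
        push_cast
        rw [hddkey]
        rfl
      rw [hkey2]
      refine Ideal.sum_mem _ fun i _ => ?_
      refine Ideal.mul_mem_right _ _ (Ideal.mem_map_of_mem ι ?_)
      rw [hK, RingHom.mem_ker]
      show εB (dd i) = 0
      exact hdd0 i
    have hscalinv : ∀ j, algebraMap k (⨂[k] (_ : Fin n), A) (co j) ∈ invariants ρ G :=
      fun j => (mem_invariants ρ G _).mpr (fun g _ => AlgEquiv.commutes _ _)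
    have hxfin : x = ∑ j, (⟨algebraMap k _ (co j), hscalinv j⟩ : ↥(invariants ρ G)) * Y j ^ l ^ e := by
      apply Subtype.ext
      push_cast
      rw [hxy2]
      refine Finset.sum_congr rfl fun j _ => ?_
      rw [Algebra.smul_def]
    rw [hxfin]
    exact Ideal.sum_mem _ fun j _ => Ideal.mul_mem_left _ _ (hmemq j)
  · -- easy direction
    rw [Ideal.map_le_iff_le_comap]
    intro w hw
    simp only [RingHom.mem_ker, RingHom.comp_apply] at hw
    simp only [Ideal.mem_comap, RingHom.mem_ker, RingHom.comp_apply]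
    exact hw
end

section
/- Let k be a field of characteristic l, B a commutative augmented k-algebra with a G'-action (G ⊆ G' ⊆ Σ_n l-groups, B = A^{⊗n} with A having l-th roots of all elements), and suppose given a commutative square of augmented rings with surjections π' : R' → B^{G'} and π : R → B^G, f : R' → R, such that the kernel 𝔍_R of π satisfies 𝔍_R^N = 0 for some N. Then there is an integer M with I_R^M ⊆ I_{R'}·R, where I_R and I_{R'} are the augmentation ideals. -/
open scoped TensorProduct

set_option maxHeartbeats 1000000
set_option synthInstance.maxHeartbeats 400000

private lemma tprod_pow' {k : Type*} [CommSemiring k] {n : ℕ} {A : Type*} [CommRing A]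
    [Algebra k A] (u : Fin n → A) (m : ℕ) :
    (PiTensorProduct.tprod k u) ^ m = PiTensorProduct.tprod k (fun i => u i ^ m) := by
  induction m with
  | zero =>
    rw [pow_zero, PiTensorProduct.one_def]
    exact congrArg _ (funext fun i => (pow_zero (u i)).symm)
  | succ m ih =>
    rw [pow_succ, ih, PiTensorProduct.tprod_mul_tprod]
    exact congrArg _ (funext fun i => (pow_succ (u i) m).symm)

private lemma ideal_add_pow_le {R : Type*} [CommRing R] (I J : Ideal R) (N : ℕ) :
    (I + J) ^ N ≤ I + J ^ N := by
  induction N with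
  | zero => simp
  | succ n ih =>
    rw [pow_succ]
    refine le_trans (Ideal.mul_mono ih le_rfl) ?_
    rw [add_mul, mul_add, mul_add]
    simp only [Submodule.add_eq_sup]
    refine sup_le (sup_le ?_ ?_) (sup_le ?_ ?_)
    · exact le_sup_of_le_left Ideal.mul_le_left
    · exact le_sup_of_le_left Ideal.mul_le_left
    · exact le_sup_of_le_left Ideal.mul_le_right
    · exact le_sup_of_le_right (le_of_eq (pow_succ J n).symm)

section Poly

variable {l n : ℕ} {k : Type*} [Field k] [CharP k l] {A : Type*} [CommRing A] [Algebra k A]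
  (ρ : Equiv.Perm (Fin n) →* ((⨂[k] _ : Fin n, A) ≃ₐ[k] ⨂[k] _ : Fin n, A))
  (εB : (⨂[k] _ : Fin n, A) →ₐ[k] k)

-- equivariance of εB
lemma eps_equivariant
    (hρ : ∀ (g : Equiv.Perm (Fin n)) (v : Fin n → A),
      ρ g (PiTensorProduct.tprod k v) = PiTensorProduct.tprod k fun i => v (g⁻¹ i))
    (ε : A →ₐ[k] k)
    (hεB : ∀ v : Fin n → A, εB (PiTensorProduct.tprod k v) = ∏ i, ε (v i))
    (g : Equiv.Perm (Fin n)) (x : ⨂[k] _ : Fin n, A) : εB (ρ g x) = εB x := by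
  induction x using PiTensorProduct.induction_on with
  | smul_tprod r v =>
    rw [map_smul, map_smul, map_smul, hρ, hεB, hεB]
    congr 1
    exact Equiv.prod_comp g⁻¹ (fun i => ε (v i))
  | add x y hx hy => rw [map_add, map_add, map_add, hx, hy]

lemma poly_key (hl : l.Prime)
    {G G' : Subgroup (Equiv.Perm (Fin n))} (hGG' : G ≤ G') [Fintype ↥G']
    (hρ : ∀ (g : Equiv.Perm (Fin n)) (v : Fin n → A),
      ρ g (PiTensorProduct.tprod k v) = PiTensorProduct.tprod k fun i => v (g⁻¹ i))
    (ε : A →ₐ[k] k)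
    (hεB : ∀ v : Fin n → A, εB (PiTensorProduct.tprod k v) = ∏ i, ε (v i))
    (hq : ∃ e, Fintype.card ↥G' = l ^ e)
    (hroot : ∀ x : ⨂[k] _ : Fin n, A, ∃ c, c ^ (Fintype.card ↥G') = x)
    (F : ⨂[k] _ : Fin n, A) (hF : F ∈ invariants ρ G) (hεF : εB F = 0) :
    (⟨F, hF⟩ : ↥(invariants ρ G)) ^ (Fintype.card ↥G') ∈
      Ideal.map (Subring.inclusion (invariants_antitone ρ hGG'))
        (RingHom.ker (εB.toRingHom.comp (invariants ρ G').subtype)) := by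
  classical
  haveI := Fact.mk hl
  haveI : Nontrivial (⨂[k] _ : Fin n, A) := εB.toRingHom.domain_nontrivial
  haveI : CharP (⨂[k] _ : Fin n, A) l :=
    charP_of_injective_algebraMap (algebraMap k _).injective l
  set q := Fintype.card ↥G' with hqdef
  have hq0 : q ≠ 0 := Fintype.card_ne_zero
  obtain ⟨c, hc⟩ := hroot F
  set P : Polynomial (⨂[k] _ : Fin n, A) :=
    ∏ g : ↥G', (Polynomial.X - Polynomial.C (ρ ↑g c)) with hP
  have hmon : ∀ g ∈ (Finset.univ : Finset ↥G'),
      (Polynomial.X - Polynomial.C (ρ (↑g : Equiv.Perm (Fin n)) c)).Monic :=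
    fun g _ => Polynomial.monic_X_sub_C _
  have hPmonic : P.Monic := Polynomial.monic_prod_of_monic _ _ hmon
  have hdeg : P.natDegree = q := by
    rw [hP, Polynomial.natDegree_prod_of_monic _ _ hmon]
    simp [Polynomial.natDegree_X_sub_C, hqdef]
  have hev : P.eval c = 0 := by
    rw [hP, Polynomial.eval_prod]
    refine Finset.prod_eq_zero (Finset.mem_univ (1 : ↥G')) ?_
    simp
  have hrel : c ^ q = - ∑ i ∈ Finset.range q, P.coeff i * c ^ i := by
    have h1 := Polynomial.eval_eq_sum_range (p := P) c
    rw [hev, hdeg, Finset.sum_range_succ] at h1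
    have h2 : P.coeff q = 1 := by
      have := hPmonic.coeff_natDegree
      rwa [hdeg] at this
    rw [h2, one_mul] at h1
    exact eq_neg_of_add_eq_zero_right h1.symm
  have hcoeffinv : ∀ (i : ℕ), ∀ h' ∈ G', ρ h' (P.coeff i) = P.coeff i := by
    intro i h' hh'
    have hmap : P.map (ρ h').toAlgHom.toRingHom = P := by
      rw [hP, Polynomial.map_prod]
      have h3 : ∀ g : ↥G',
          (Polynomial.X - Polynomial.C (ρ ↑g c)).map (ρ h').toAlgHom.toRingHom
          = Polynomial.X - Polynomial.C (ρ (↑((⟨h', hh'⟩ : ↥G') * g)) c) := by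
        intro g
        rw [Polynomial.map_sub, Polynomial.map_X, Polynomial.map_C]
        have h3' : ρ h' ((ρ ↑g) c) = (ρ (↑((⟨h', hh'⟩ : ↥G') * g))) c := by
          rw [Subgroup.coe_mul, map_mul, AlgEquiv.mul_apply]
        exact congrArg (fun z => Polynomial.X - Polynomial.C z) h3'
      rw [Finset.prod_congr rfl (fun g _ => h3 g)]
      exact Fintype.prod_equiv (Equiv.mulLeft (⟨h', hh'⟩ : ↥G')) _ _ (fun g => rfl)
    have h7 := Polynomial.coeff_map (p := P) (ρ h').toAlgHom.toRingHom i
    rw [hmap] at h7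
    exact h7.symm
  have hc0 : εB c = 0 := by
    have h4 : (εB c) ^ q = 0 := by rw [← map_pow, hc, hεF]
    exact pow_eq_zero_iff hq0 |>.mp h4
  have hcoeffeps : ∀ i, i < q → εB (P.coeff i) = 0 := by
    have hmapε : P.map εB.toRingHom = Polynomial.X ^ q := by
      rw [hP, Polynomial.map_prod]
      have h5 : ∀ g : ↥G',
          (Polynomial.X - Polynomial.C (ρ ↑g c)).map εB.toRingHom = Polynomial.X := by
        intro g
        rw [Polynomial.map_sub, Polynomial.map_X, Polynomial.map_C]
        show _ - Polynomial.C (εB (ρ ↑g c)) = _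
        rw [eps_equivariant ρ εB hρ ε hεB, hc0, map_zero, sub_zero]
      rw [Finset.prod_congr rfl (fun g _ => h5 g), Finset.prod_const, Finset.card_univ, ← hqdef]
    intro i hi
    have h6 := Polynomial.coeff_map (p := P) εB.toRingHom i
    rw [hmapε, Polynomial.coeff_X_pow, if_neg (Nat.ne_of_lt hi)] at h6
    exact h6.symm
  have hFq : F ^ q = - ∑ i ∈ Finset.range q, (P.coeff i) ^ q * F ^ i := by
    obtain ⟨e, he⟩ := hq
    calc F ^ q = (c ^ q) ^ q := by rw [hc]
      _ = (- ∑ i ∈ Finset.range q, P.coeff i * c ^ i) ^ q := by rw [hrel]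
      _ = - ∑ i ∈ Finset.range q, (P.coeff i) ^ q * F ^ i := by
          rw [he, neg_pow, neg_one_pow_char_pow, sum_pow_char_pow, neg_one_mul]
          congr 1
          refine Finset.sum_congr rfl fun i _ => ?_
          rw [mul_pow, pow_right_comm, ← he, hc]
  have hterm : ∀ i : ℕ, (P.coeff i) ^ q ∈ invariants ρ G' := by
    intro i h' hh'; rw [map_pow, hcoeffinv i h' hh']
  have hkerterm : ∀ i, i < q → (⟨(P.coeff i) ^ q, hterm i⟩ : ↥(invariants ρ G')) ∈
      RingHom.ker (εB.toRingHom.comp (invariants ρ G').subtype) := by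
    intro i hi
    rw [RingHom.mem_ker]
    show εB ((P.coeff i) ^ q) = 0
    rw [map_pow, hcoeffeps i hi, zero_pow hq0]
  have hinclcoe : ∀ (x : ↥(invariants ρ G')),
      ((Subring.inclusion (invariants_antitone ρ hGG') x :
        ↥(invariants ρ G)) : ⨂[k] _ : Fin n, A) = ↑x := fun x => rfl
  have hkey : (⟨F, hF⟩ : ↥(invariants ρ G)) ^ q =
      - ∑ i ∈ Finset.range q,
        (Subring.inclusion (invariants_antitone ρ hGG')) ⟨(P.coeff i) ^ q, hterm i⟩
          * (⟨F, hF⟩ : ↥(invariants ρ G)) ^ i := by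
    apply Subtype.ext
    show (invariants ρ G).subtype ((⟨F, hF⟩ : ↥(invariants ρ G)) ^ q) =
      (invariants ρ G).subtype (- ∑ i ∈ Finset.range q,
        (Subring.inclusion (invariants_antitone ρ hGG')) ⟨(P.coeff i) ^ q, hterm i⟩
          * (⟨F, hF⟩ : ↥(invariants ρ G)) ^ i)
    rw [map_pow, map_neg, map_sum]
    simp only [map_mul, map_pow]
    exact hFq
  rw [hkey]
  exact neg_mem (Ideal.sum_mem _ fun i hi => Ideal.mul_mem_right _ _
    (Ideal.mem_map_of_mem _ (hkerterm i (Finset.mem_range.mp hi))))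



lemma key_mem (hl : l.Prime)
    {G G' : Subgroup (Equiv.Perm (Fin n))} (hGG' : G ≤ G') (hG' : IsPGroup l G')
    (hρ : ∀ (g : Equiv.Perm (Fin n)) (v : Fin n → A),
      ρ g (PiTensorProduct.tprod k v) = PiTensorProduct.tprod k fun i => v (g⁻¹ i))
    (ε : A →ₐ[k] k) (hroots : ∀ a : A, ∃ b : A, b ^ l = a)
    (hεB : ∀ v : Fin n → A, εB (PiTensorProduct.tprod k v) = ∏ i, ε (v i))
    (b : ↥(invariants ρ G)) (hεb : εB ↑b = 0) :
    b ∈ Ideal.map (Subring.inclusion (invariants_antitone ρ hGG'))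
        (RingHom.ker (εB.toRingHom.comp (invariants ρ G').subtype)) := by
  classical
  haveI := Fact.mk hl
  haveI : Fintype ↥G' := Fintype.ofFinite _
  haveI : Fintype ↥G := Fintype.ofFinite _
  haveI : Nontrivial (⨂[k] _ : Fin n, A) := εB.toRingHom.domain_nontrivial
  haveI : CharP (⨂[k] _ : Fin n, A) l :=
    charP_of_injective_algebraMap (algebraMap k _).injective l
  set q := Fintype.card ↥G' with hqdef
  have hq0 : q ≠ 0 := Fintype.card_ne_zero
  have hq : ∃ e, q = l ^ e := by
    obtain ⟨e, he⟩ := hG'.exists_card_eq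
    exact ⟨e, by rw [hqdef, ← Nat.card_eq_fintype_card, he]⟩
  have hrootB : ∀ x : ⨂[k] _ : Fin n, A, ∃ c, c ^ q = x := by
    obtain ⟨e, he⟩ := hq
    rcases Nat.eq_zero_or_pos e with he0 | hepos
    · subst he0; intro x; exact ⟨x, by rw [he, pow_zero, pow_one]⟩
    · have hn : Nonempty (Fin n) := by
        by_contra hemp
        rw [not_nonempty_iff] at hemp
        have h1 : ∀ x : ↥G', x = 1 := fun x => Subtype.ext (Equiv.ext fun i => (hemp.false i).elim)
        have h2 : q = 1 := by rw [hqdef]; exact Fintype.card_eq_one_iff.mpr ⟨1, fun x => h1 x⟩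
        rw [he] at h2
        have h3 : 1 < l ^ e := Nat.one_lt_pow (by omega) hl.one_lt
        omega
      have hfrob : ∀ x : ⨂[k] _ : Fin n, A, ∃ c, c ^ l = x := by
        intro x
        induction x using PiTensorProduct.induction_on with
        | smul_tprod r v =>
          obtain ⟨i0⟩ := hn
          have h1 : r • PiTensorProduct.tprod k v
              = PiTensorProduct.tprod k (Function.update v i0 (r • v i0)) := by
            rw [MultilinearMap.map_update_smul, Function.update_eq_self]
          choose u hu using fun i => hroots (Function.update v i0 (r • v i0) i)
          refine ⟨PiTensorProduct.tprod k u, ?_⟩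
          rw [tprod_pow', h1]
          exact congrArg _ (funext hu)
        | add y z hy hz =>
          obtain ⟨c1, h1⟩ := hy; obtain ⟨c2, h2⟩ := hz
          exact ⟨c1 + c2, by rw [add_pow_char, h1, h2]⟩
      have hiter : ∀ (e' : ℕ) (x : ⨂[k] _ : Fin n, A), ∃ c, c ^ l ^ e' = x := by
        intro e'
        induction e' with
        | zero => exact fun x => ⟨x, by rw [pow_zero, pow_one]⟩
        | succ e' ih =>
          intro x
          obtain ⟨d, hd⟩ := ih x
          obtain ⟨c, hc⟩ := hfrob d
          exact ⟨c, by rw [pow_succ, mul_comm, pow_mul, hc, hd]⟩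
      intro x; rw [he]; exact hiter e x
  have hrootA : ∀ a : A, ∃ r, r ^ q = a := by
    obtain ⟨e, he⟩ := hq
    have hiterA : ∀ (e' : ℕ) (a : A), ∃ r, r ^ l ^ e' = a := by
      intro e'
      induction e' with
      | zero => exact fun a => ⟨a, by rw [pow_zero, pow_one]⟩
      | succ e' ih =>
        intro a
        obtain ⟨d, hd⟩ := ih a
        obtain ⟨r, hr⟩ := hroots d
        exact ⟨r, by rw [pow_succ, mul_comm, pow_mul, hr, hd]⟩
    intro a; rw [he]; exact hiterA e a
  choose rt hrt using hrootA
  -- adapted basis of A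
  set V : Submodule k A := LinearMap.ker ε.toLinearMap with hV
  set bV : Module.Basis _ k ↥V := Module.Basis.ofVectorSpace k ↥V with hbV
  set vec : Unit ⊕ ↥(Module.Basis.ofVectorSpaceIndex k ↥V) → A :=
    Sum.elim (fun _ => (1 : A)) (fun α => ↑(bV α)) with hvec
  have hpmem : ∀ a : A, a - ε a • (1:A) ∈ V := by
    intro a
    rw [hV, LinearMap.mem_ker, map_sub, map_smul]
    show ε a - ε a • ε 1 = 0
    rw [map_one, smul_eq_mul, mul_one, sub_self]
  set pV : A →ₗ[k] ↥V :=
    { toFun := fun a => ⟨a - ε a • 1, hpmem a⟩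
      map_add' := by
        intro a b; apply Subtype.ext
        show (a + b) - ε (a + b) • 1 = (a - ε a • 1) + (b - ε b • 1)
        rw [map_add, add_smul]; abel
      map_smul' := by
        intro r a; apply Subtype.ext
        show (r • a) - ε (r • a) • 1 = r • (a - ε a • 1)
        rw [map_smul, smul_sub, smul_smul, smul_eq_mul] } with hpV
  set coordA : (Unit ⊕ ↥(Module.Basis.ofVectorSpaceIndex k ↥V)) → (A →ₗ[k] k) :=
    Sum.elim (fun _ => ε.toLinearMap) (fun α => (bV.coord α) ∘ₗ pV) with hcoordA
  have hεvec1 : ε (vec (Sum.inl ())) = 1 := map_one ε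
  have hεvec0 : ∀ α, ε (vec (Sum.inr α)) = 0 := by
    intro α
    exact LinearMap.mem_ker.mp (bV α).2
  have hbiorth : ∀ j j', coordA j (vec j') = if j = j' then 1 else 0 := by
    rintro (u | α) (u' | β)
    · cases u; cases u'
      rw [if_pos rfl]
      exact hεvec1
    · cases u
      rw [if_neg (by simp)]
      exact hεvec0 β
    · cases u'
      rw [if_neg (by simp)]
      show bV.coord α (pV 1) = 0
      have hp1 : pV (1:A) = 0 := by
        apply Subtype.ext
        show (1:A) - ε 1 • 1 = 0
        rw [map_one, one_smul, sub_self]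
      rw [hp1, map_zero]
    · show bV.coord α (pV (vec (Sum.inr β))) = _
      have h8 : pV (vec (Sum.inr β)) = bV β := by
        apply Subtype.ext
        show vec (Sum.inr β) - ε (vec (Sum.inr β)) • 1 = ↑(bV β)
        rw [hεvec0 β, zero_smul, sub_zero]
        rfl
      rw [h8, Module.Basis.coord_apply, Module.Basis.repr_self, Finsupp.single_apply]
      by_cases hab : α = β
      · subst hab; rw [if_pos rfl, if_pos rfl]
      · rw [if_neg (fun h => hab h.symm), if_neg (fun h => hab (Sum.inr_injective h))]
  set eW : (Fin n → Unit ⊕ ↥(Module.Basis.ofVectorSpaceIndex k ↥V)) → ⨂[k] _ : Fin n, A :=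
    fun w => PiTensorProduct.tprod k (fun i => vec (w i)) with heW
  have hspanA : ∀ a : A, a ∈ Submodule.span k (Set.range vec) := by
    intro a
    have h11 : a = ε a • vec (Sum.inl ()) + ↑(pV a) := by
      show a = ε a • (1:A) + (a - ε a • 1)
      abel
    rw [h11]
    refine Submodule.add_mem _
      (Submodule.smul_mem _ _ (Submodule.subset_span ⟨Sum.inl (), rfl⟩)) ?_
    have h12 : (pV a : A) ∈ Submodule.span k (V.subtype '' Set.range ⇑bV) := by
      rw [← Submodule.map_span]
      exact ⟨pV a, Module.Basis.mem_span bV _, rfl⟩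
    refine Submodule.span_mono ?_ h12
    rintro _ ⟨_, ⟨α, rfl⟩, rfl⟩
    exact ⟨Sum.inr α, rfl⟩
  have hspanB : ∀ x : ⨂[k] _ : Fin n, A, x ∈ Submodule.span k (Set.range eW) := by
    have htp : ∀ v : Fin n → A,
        PiTensorProduct.tprod k v ∈ Submodule.span k (Set.range eW) := by
      intro v
      choose cf hcf using fun i => Finsupp.mem_span_range_iff_exists_finsupp.mp (hspanA (v i))
      have h13 : PiTensorProduct.tprod k v = PiTensorProduct.tprod k
          (fun i => ∑ j ∈ (cf i).support, cf i j • vec j) := by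
        congr 1
        funext i
        rw [← hcf i]
        rfl
      rw [h13, MultilinearMap.map_sum_finset]
      refine Submodule.sum_mem _ fun r _ => ?_
      rw [MultilinearMap.map_smul_univ]
      exact Submodule.smul_mem _ _ (Submodule.subset_span ⟨fun i => r i, rfl⟩)
    intro x
    have h14 : x ∈ Submodule.span k (Set.range ⇑(PiTensorProduct.tprod k)) := by
      rw [PiTensorProduct.span_tprod_eq_top]; trivial
    refine Submodule.span_le.mpr ?_ h14
    rintro _ ⟨v, rfl⟩
    exact htp v
  set phi : (Fin n → Unit ⊕ ↥(Module.Basis.ofVectorSpaceIndex k ↥V)) →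
      ((⨂[k] _ : Fin n, A) →ₗ[k] k) :=
    fun w => PiTensorProduct.lift
      ((MultilinearMap.mkPiAlgebra k (Fin n) k).compLinearMap (fun i => coordA (w i))) with hphi
  have hphit : ∀ w u, phi w (PiTensorProduct.tprod k u) = ∏ i, coordA (w i) (u i) := by
    intro w u
    rw [hphi]
    rw [PiTensorProduct.lift.tprod]
    rfl
  have hphie : ∀ w v, phi w (eW v) = if w = v then 1 else 0 := by
    intro w v
    rw [heW, hphit]
    by_cases h : w = v
    · subst h
      rw [if_pos rfl]
      refine Finset.prod_eq_one fun i _ => ?_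
      rw [hbiorth, if_pos rfl]
    · rw [if_neg h]
      obtain ⟨i, hi⟩ : ∃ i, w i ≠ v i := by
        by_contra hno; push_neg at hno; exact h (funext hno)
      exact Finset.prod_eq_zero (Finset.mem_univ i) (by rw [hbiorth, if_neg hi])
  have hphiequiv : ∀ (g : Equiv.Perm (Fin n)) w (x0 : ⨂[k] _ : Fin n, A),
      phi w (ρ g x0) = phi (w ∘ ⇑g) x0 := by
    intro g w x0
    induction x0 using PiTensorProduct.induction_on with
    | smul_tprod r u =>
      rw [map_smul, map_smul, map_smul, hρ, hphit, hphit]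
      congr 1
      calc ∏ i, coordA (w i) (u (g⁻¹ i))
          = ∏ i, coordA (w (g i)) (u (g⁻¹ (g i))) :=
            (Equiv.prod_comp g fun i => coordA (w i) (u (g⁻¹ i))).symm
        _ = ∏ i, coordA ((w ∘ ⇑g) i) (u i) := by
            refine Finset.prod_congr rfl fun i _ => ?_
            rw [← Equiv.Perm.mul_apply, inv_mul_cancel, Equiv.Perm.one_apply]
            rfl
    | add y z hy hz => rw [map_add, map_add, map_add, hy, hz]
  have hεe : ∀ w, εB (eW w) = if w = (fun _ => Sum.inl ()) then 1 else 0 := by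
    intro w
    rw [heW, hεB]
    by_cases h : w = fun _ => Sum.inl ()
    · subst h
      rw [if_pos rfl]
      exact Finset.prod_eq_one fun i _ => hεvec1
    · rw [if_neg h]
      obtain ⟨i, hi⟩ : ∃ i, w i ≠ Sum.inl () := by
        by_contra hno; push_neg at hno
        exact h (funext fun i => hno i)
      refine Finset.prod_eq_zero (Finset.mem_univ i) ?_
      rcases hw : w i with u | α
      · cases u; exact absurd hw hi
      · exact hεvec0 α
  set fV : (Fin n → Unit ⊕ ↥(Module.Basis.ofVectorSpaceIndex k ↥V)) → ⨂[k] _ : Fin n, A :=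
    fun v => PiTensorProduct.tprod k (fun i => rt (vec (v i))) with hfV
  have hfq : ∀ v, fV v ^ q = eW v := by
    intro v
    rw [hfV, heW, tprod_pow']
    exact congrArg _ (funext fun i => hrt (vec (v i)))
  have hρf : ∀ (g : Equiv.Perm (Fin n)) v, ρ g (fV v) = fV (v ∘ ⇑g⁻¹) := by
    intro g v
    rw [hfV, hρ]
    rfl
  have hεf : ∀ v, (∃ i, v i ≠ Sum.inl ()) → εB (fV v) = 0 := by
    rintro v ⟨i, hi⟩
    rw [hfV, hεB]
    refine Finset.prod_eq_zero (Finset.mem_univ i) ?_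
    have h15 : ε (rt (vec (v i))) ^ q = 0 := by
      rw [← map_pow, hrt]
      rcases hw : v i with u | α
      · cases u; exact absurd hw hi
      · exact hεvec0 α
    exact pow_eq_zero_iff hq0 |>.mp h15
  suffices hmain : ∀ (m : ℕ) (t : Finset (Fin n → Unit ⊕ ↥(Module.Basis.ofVectorSpaceIndex k ↥V)))
      (x : ↥(invariants ρ G)), t.card = m → εB ↑x = 0 →
      ((x : ⨂[k] _ : Fin n, A) = ∑ w ∈ t, phi w ↑x • eW w) →
      x ∈ Ideal.map (Subring.inclusion (invariants_antitone ρ hGG'))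
        (RingHom.ker (εB.toRingHom.comp (invariants ρ G').subtype)) by
    obtain ⟨cc, hcc⟩ := Finsupp.mem_span_range_iff_exists_finsupp.mp (hspanB ↑b)
    refine hmain cc.support.card cc.support b rfl hεb ?_
    have hφc : ∀ w, phi w (b : ⨂[k] _ : Fin n, A)
        = if w ∈ cc.support then cc w else 0 := by
      intro w
      conv_lhs => rw [← hcc]
      rw [Finsupp.sum, map_sum]
      simp only [map_smul, hphie, smul_eq_mul, mul_ite, mul_one, mul_zero]
      rw [Finset.sum_ite_eq]
    conv_lhs => rw [← hcc]
    rw [Finsupp.sum]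
    refine Finset.sum_congr rfl fun w hw => ?_
    rw [hφc w, if_pos hw]
  intro m
  induction m using Nat.strong_induction_on with
  | _ m IH =>
    intro t x hcard hεx hrep
    have hxinv : ∀ g ∈ G, ρ g (x : ⨂[k] _ : Fin n, A) = ↑x := x.2
    by_cases hzero : ∀ w ∈ t, phi w (x : ⨂[k] _ : Fin n, A) = 0
    · have hx0 : (x : ⨂[k] _ : Fin n, A) = 0 := by
        rw [hrep]
        exact Finset.sum_eq_zero fun w hw => by rw [hzero w hw, zero_smul]
      have hx00 : x = 0 := Subtype.ext hx0
      rw [hx00]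
      exact Ideal.zero_mem _
    push_neg at hzero
    obtain ⟨w0, hw0t, hw0⟩ := hzero
    have hcoeff0 : ∀ v, v ∉ t → phi v (x : ⨂[k] _ : Fin n, A) = 0 := by
      intro v hv
      conv_lhs => rw [hrep]
      rw [map_sum]
      simp only [map_smul, hphie, smul_eq_mul, mul_ite, mul_one, mul_zero]
      rw [Finset.sum_ite_eq, if_neg hv]
    have horb : ∀ g ∈ G, ∀ w, phi (w ∘ ⇑g) (x : ⨂[k] _ : Fin n, A) = phi w ↑x := by
      intro g hg w
      rw [← hphiequiv g w ↑x, hxinv g hg]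
    set O : Finset (Fin n → Unit ⊕ ↥(Module.Basis.ofVectorSpaceIndex k ↥V)) :=
      Finset.image (fun g : ↥G => w0 ∘ ⇑(g : Equiv.Perm (Fin n))) Finset.univ with hO
    have hOmem : ∀ v, v ∈ O ↔ ∃ g : ↥G, w0 ∘ ⇑(g : Equiv.Perm (Fin n)) = v := by
      intro v
      rw [hO, Finset.mem_image]
      simp
    have hw0O : w0 ∈ O := (hOmem w0).mpr ⟨1, by funext i; rfl⟩
    have hOconst : ∀ v ∈ O, phi v (x : ⨂[k] _ : Fin n, A) = phi w0 ↑x := by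
      intro v hv
      obtain ⟨g, rfl⟩ := (hOmem v).mp hv
      exact horb ↑g g.2 w0
    have hOt : O ⊆ t := by
      intro v hv
      by_contra hvt
      exact hw0 (by rw [← hOconst v hv, hcoeff0 v hvt])
    have hΛtriv : phi (fun _ => Sum.inl ()) (x : ⨂[k] _ : Fin n, A) = 0 := by
      by_cases h : (fun _ => Sum.inl ()) ∈ t
      · have h9 : εB (x : ⨂[k] _ : Fin n, A)
            = phi (fun _ => Sum.inl ()) (x : ⨂[k] _ : Fin n, A) := by
          conv_lhs => rw [hrep]
          rw [map_sum]
          simp only [map_smul, hεe, smul_eq_mul, mul_ite, mul_one, mul_zero]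
          rw [Finset.sum_ite_eq', if_pos h]
        rw [← h9]
        exact hεx
      · exact hcoeff0 _ h
    have hw0nt : ∃ i, w0 i ≠ Sum.inl () := by
      by_contra hno
      push_neg at hno
      exact hw0 (by rw [show w0 = (fun _ => Sum.inl ()) from funext hno]; exact hΛtriv)
    have hOnt : ∀ v ∈ O, ∃ i, v i ≠ Sum.inl () := by
      intro v hv
      obtain ⟨g, rfl⟩ := (hOmem v).mp hv
      obtain ⟨i0, hi0⟩ := hw0nt
      refine ⟨(g : Equiv.Perm (Fin n))⁻¹ i0, ?_⟩
      show w0 ((g : Equiv.Perm (Fin n)) ((g : Equiv.Perm (Fin n))⁻¹ i0)) ≠ Sum.inl ()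
      rwa [← Equiv.Perm.mul_apply, mul_inv_cancel, Equiv.Perm.one_apply]
    have hOcl : ∀ (g' : Equiv.Perm (Fin n)), g' ∈ G → ∀ v ∈ O, v ∘ ⇑g' ∈ O := by
      intro g' hg' v hv
      obtain ⟨h', rfl⟩ := (hOmem v).mp hv
      refine (hOmem _).mpr ⟨⟨↑h' * g', mul_mem h'.2 hg'⟩, ?_⟩
      funext i
      show w0 (((h' : Equiv.Perm (Fin n)) * g') i) = w0 ((h' : Equiv.Perm (Fin n)) (g' i))
      rw [Equiv.Perm.mul_apply]
    set F : ⨂[k] _ : Fin n, A := ∑ v ∈ O, fV v with hFdef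
    have hFinv : F ∈ invariants ρ G := by
      intro g hg
      rw [hFdef, map_sum]
      rw [Finset.sum_congr rfl fun v _ => hρf g v]
      refine Finset.sum_nbij' (fun v => v ∘ ⇑g⁻¹) (fun v => v ∘ ⇑g)
        (fun a ha => hOcl g⁻¹ (inv_mem hg) a ha) (fun a ha => hOcl g hg a ha)
        ?_ ?_ ?_
      · intro a _; funext i
        show a (g⁻¹ (g i)) = a i
        rw [← Equiv.Perm.mul_apply, inv_mul_cancel, Equiv.Perm.one_apply]
      · intro a _; funext i
        show a (g (g⁻¹ i)) = a i
        rw [← Equiv.Perm.mul_apply, mul_inv_cancel, Equiv.Perm.one_apply]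
      · intro a _; rfl
    have hεF : εB F = 0 := by
      rw [hFdef, map_sum]
      exact Finset.sum_eq_zero fun v hv => hεf v (hOnt v hv)
    have hFq : F ^ q = ∑ v ∈ O, eW v := by
      obtain ⟨e, he⟩ := hq
      rw [hFdef, he, sum_pow_char_pow]
      exact Finset.sum_congr rfl fun v _ => by rw [← he, hfq]
    have hpoly := poly_key ρ εB hl hGG' hρ ε hεB hq hrootB F hFinv hεF
    set lam : k := phi w0 ↑x with hlam
    have hscinv : algebraMap k (⨂[k] _ : Fin n, A) lam ∈ invariants ρ G :=
      fun g _ => AlgEquiv.commutes (ρ g) lam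
    set cmul : ↥(invariants ρ G) := ⟨algebraMap k _ lam, hscinv⟩ * ⟨F, hFinv⟩ ^ q with hcmul
    have hcmulmem : cmul ∈ Ideal.map (Subring.inclusion (invariants_antitone ρ hGG'))
        (RingHom.ker (εB.toRingHom.comp (invariants ρ G').subtype)) :=
      Ideal.mul_mem_left _ _ hpoly
    have hcmulcoe : (cmul : ⨂[k] _ : Fin n, A) = algebraMap k _ lam * F ^ q := by
      rw [hcmul]
      rfl
    set x' : ↥(invariants ρ G) := x - cmul with hx'
    have hx'coe : (x' : ⨂[k] _ : Fin n, A) = ↑x - algebraMap k _ lam * F ^ q := by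
      rw [hx']
      rw [← hcmulcoe]
      rfl
    have hεx' : εB (x' : ⨂[k] _ : Fin n, A) = 0 := by
      rw [hx'coe, map_sub, map_mul, map_pow, hεF, zero_pow hq0, mul_zero, sub_zero, hεx]
    have hphiFq : ∀ w, phi w (F ^ q) = if w ∈ O then 1 else 0 := by
      intro w
      rw [hFq, map_sum]
      simp only [hphie]
      rw [Finset.sum_ite_eq]
    have hphix' : ∀ w, phi w (x' : ⨂[k] _ : Fin n, A)
        = phi w ↑x - lam * (if w ∈ O then 1 else 0) := by
      intro w
      rw [hx'coe, map_sub, ← Algebra.smul_def, map_smul, smul_eq_mul, hphiFq]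
    have hrep' : (x' : ⨂[k] _ : Fin n, A) = ∑ w ∈ t \ O, phi w ↑x' • eW w := by
      have hOsum : ∑ v ∈ O, phi v (x : ⨂[k] _ : Fin n, A) • eW v
          = algebraMap k _ lam * F ^ q := by
        rw [hFq, Finset.mul_sum]
        refine Finset.sum_congr rfl fun v hv => ?_
        rw [hOconst v hv, Algebra.smul_def]
      have h10 : (x : ⨂[k] _ : Fin n, A)
          = ∑ w ∈ t \ O, phi w ↑x • eW w + algebraMap k _ lam * F ^ q := by
        rw [← hOsum, Finset.sum_sdiff hOt]
        exact hrep
      have h11' : ∀ w ∈ t \ O, phi w (x' : ⨂[k] _ : Fin n, A) • eW w = phi w ↑x • eW w := by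
        intro w hw
        rw [hphix' w, if_neg (Finset.mem_sdiff.mp hw).2, mul_zero, sub_zero]
      rw [Finset.sum_congr rfl h11', hx'coe]
      conv_lhs => rw [h10]
      rw [add_sub_cancel_right]
    have hcard' : (t \ O).card < m := by
      rw [← hcard]
      exact Finset.card_lt_card (Finset.sdiff_ssubset hOt ⟨w0, hw0O⟩)
    have hx'mem := IH _ hcard' (t \ O) x' rfl hεx' hrep'
    have hxeq : x = x' + cmul := by rw [hx']; ring
    rw [hxeq]
    exact Ideal.add_mem _ hx'mem hcmulmem

end Poly



/-- Let `k` be a field of characteristic `l`, `B = A^{⊗n}` with the permutation action of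
`l`-groups `G ⊆ G' ⊆ Σ_n` (with `A` having `l`-th roots of all elements), and suppose given a
commutative square of augmented rings with surjections `π' : R' → B^{G'}` and `π : R → B^G`,
`f : R' → R`, compatible with the augmentations, such that the kernel of `π` is nilpotent.
Then there is an integer `M` with `I_R^M ⊆ I_{R'}·R`, where `I_R`, `I_{R'}` are the augmentation
ideals. -/
theorem stmt15 (l n : ℕ) (hl : l.Prime) (k : Type*) [Field k] [CharP k l]
    (A : Type*) [CommRing A] [Algebra k A] (ε : A →ₐ[k] k)
    (hroots : ∀ a : A, ∃ b : A, b ^ l = a)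
    (G G' : Subgroup (Equiv.Perm (Fin n))) (hGG' : G ≤ G')
    (hG : IsPGroup l G) (hG' : IsPGroup l G')
    (ρ : Equiv.Perm (Fin n) →* ((⨂[k] _ : Fin n, A) ≃ₐ[k] ⨂[k] _ : Fin n, A))
    (hρ : ∀ (g : Equiv.Perm (Fin n)) (v : Fin n → A),
      ρ g (PiTensorProduct.tprod k v) = PiTensorProduct.tprod k fun i => v (g⁻¹ i))
    (εB : (⨂[k] _ : Fin n, A) →ₐ[k] k)
    (hεB : ∀ v : Fin n → A, εB (PiTensorProduct.tprod k v) = ∏ i, ε (v i))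
    (R R' : Type*) [CommRing R] [CommRing R']
    (εR : R →+* k) (εR' : R' →+* k)
    (π : R →+* ↥(invariants ρ G)) (π' : R' →+* ↥(invariants ρ G')) (f : R' →+* R)
    (hπ : Function.Surjective π) (hπ' : Function.Surjective π')
    (hsq : (Subring.inclusion (invariants_antitone ρ hGG')).comp π' = π.comp f)
    (hεR : (εB.toRingHom.comp (invariants ρ G).subtype).comp π = εR)
    (hεR' : (εB.toRingHom.comp (invariants ρ G').subtype).comp π' = εR')
    (N : ℕ) (hN : 0 < N) (hnil : (RingHom.ker π) ^ N = ⊥) :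
    ∃ M : ℕ, (RingHom.ker εR) ^ M ≤ Ideal.map f (RingHom.ker εR') := by
  classical
  refine ⟨N, ?_⟩
  set K' : Ideal R' := RingHom.ker εR' with hK'
  set JJ : Ideal R := Ideal.map f K' with hJJ
  -- the target ideal downstairs
  set DS : Ideal ↥(invariants ρ G) :=
    Ideal.map (Subring.inclusion (invariants_antitone ρ hGG'))
      (RingHom.ker (εB.toRingHom.comp (invariants ρ G').subtype)) with hDS
  have hDSmap : DS = Ideal.map π JJ := by
    rw [hDS, hJJ, Ideal.map_map, ← hsq, ← Ideal.map_map]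
    congr 1
    have h1 : K' = Ideal.comap π' (RingHom.ker (εB.toRingHom.comp (invariants ρ G').subtype)) := by
      ext y
      rw [hK', RingHom.mem_ker, Ideal.mem_comap, RingHom.mem_ker, ← hεR']
      rfl
    rw [h1, Ideal.map_comap_of_surjective π' hπ']
  have hstep : RingHom.ker εR ≤ JJ + RingHom.ker π := by
    intro x hx
    have hεπ : εB ↑(π x) = 0 := by
      have h2 : ((εB.toRingHom.comp (invariants ρ G).subtype).comp π) x = εR x := by rw [hεR]
      rw [RingHom.mem_ker] at hx
      rw [hx] at h2
      exact h2
    have hmem := key_mem ρ εB hl hGG' hG' hρ ε hroots hεB (π x) hεπ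
    rw [← hDS, hDSmap] at hmem
    obtain ⟨y, hy, hyx⟩ := (Ideal.mem_map_iff_of_surjective π hπ).mp hmem
    have h3 : x - y ∈ RingHom.ker π := by
      rw [RingHom.mem_ker, map_sub, hyx, sub_self]
    have h4 : x = y + (x - y) := by ring
    rw [h4, Submodule.add_eq_sup]
    exact Submodule.add_mem_sup hy h3
  calc RingHom.ker εR ^ N ≤ (JJ + RingHom.ker π) ^ N := Ideal.pow_right_mono hstep N
    _ ≤ JJ + (RingHom.ker π) ^ N := ideal_add_pow_le _ _ N
    _ = JJ := by rw [hnil, Submodule.add_eq_sup, sup_bot_eq]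
end

section
/- Let G be a finite l-group. Then the intersection ⋂_n ((l) + I_G)^n of the powers of the ideal (l) + I_G in the representation ring R[G] is the zero ideal; equivalently, R[G] ⊗ 𝔽_l is complete with respect to its augmentation ideal topology. -/
set_option synthInstance.maxHeartbeats 1000000
set_option maxHeartbeats 1000000

/-- The representation ring `R[G]` of a finite group `G` (over `ℂ`), realized as the character
ring: the subring of the function ring `G → ℂ` generated by the characters of all
finite-dimensional representations. -/
noncomputable def charRing (G : Type) [Group G] : Subring (G → ℂ) :=
  Subring.closure (Set.range fun V : FDRep ℂ G => V.character)

/-- The augmentation (dimension) ideal `I_G ⊆ R[G]`: the kernel of evaluation at the identity. -/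
noncomputable def augIdeal (G : Type) [Group G] : Ideal ↥(charRing G) :=
  RingHom.ker ((Pi.evalRingHom (fun _ : G => ℂ) (1 : G)).comp (charRing G).subtype)

open Polynomial


open Polynomial in
lemma matrix_root_pow_eq_one {n : Type*} [Fintype n] [DecidableEq n] (M : Matrix n n ℂ)
    (d : ℕ) (hM : M ^ d = 1) {μ : ℂ} (hμ : M.charpoly.IsRoot μ) : μ ^ d = 1 := by
  have hmap : (Matrix.charmatrix M).map (Polynomial.eval μ) = Matrix.diagonal (fun _ : n => μ) - M := by
    ext i j
    by_cases h : i = j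
    · subst h; simp [Matrix.charmatrix_apply, Matrix.diagonal_apply]
    · simp [Matrix.charmatrix_apply, Matrix.diagonal_apply, h]
  have hdet : (Matrix.diagonal (fun _ : n => μ) - M).det = 0 := by
    have h1 : (evalRingHom μ) (Matrix.charmatrix M).det = ((Matrix.charmatrix M).map (evalRingHom μ)).det :=
      RingHom.map_det _ _
    have h2 : (evalRingHom μ) (Matrix.charmatrix M).det = 0 := hμ
    rw [h2] at h1
    rw [← hmap]
    exact h1.symm
  obtain ⟨v, hv0, hv⟩ := (Matrix.exists_mulVec_eq_zero_iff).mpr hdet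
  have hMv : M.mulVec v = μ • v := by
    rw [Matrix.sub_mulVec] at hv
    have hdiag : (Matrix.diagonal (fun _ : n => μ)).mulVec v = μ • v := by
      ext i; simp [Matrix.mulVec_diagonal]
    rw [hdiag, sub_eq_zero] at hv
    exact hv.symm
  have hpow : ∀ k : ℕ, (M ^ k).mulVec v = μ ^ k • v := by
    intro k
    induction k with
    | zero => simp [Matrix.one_mulVec]
    | succ k ih =>
      rw [pow_succ', ← Matrix.mulVec_mulVec, ih, Matrix.mulVec_smul, hMv, smul_smul, pow_succ, mul_comm]
  have h1 : v = μ ^ d • v := by rw [← hpow, hM, Matrix.one_mulVec]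
  obtain ⟨i, hi⟩ := Function.ne_iff.mp hv0
  have : v i = μ ^ d * v i := congrFun h1 i
  have h2 : (μ ^ d - 1) * v i = 0 := by ring_nf; linear_combination -this
  rcases mul_eq_zero.mp h2 with h | h
  · exact sub_eq_zero.mp h
  · exact absurd h (by simpa using hi)


open Polynomial


lemma multiset_sum_aux {ζ : ℂ} (s : Multiset ℂ)
    (h : ∀ μ ∈ s, ∃ j : ℕ, ζ ^ j = μ) :
    s.sum ∈ Algebra.adjoin ℤ ({ζ} : Set ℂ) ∧
      ∃ a ∈ Algebra.adjoin ℤ ({ζ} : Set ℂ),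
        s.sum - (Multiset.card s : ℂ) = (ζ - 1) * a := by
  induction s using Multiset.induction_on with
  | empty => exact ⟨zero_mem _, 0, zero_mem _, by simp⟩
  | cons μ s ih =>
    obtain ⟨j, hj⟩ := h μ (Multiset.mem_cons_self μ s)
    obtain ⟨hs1, a, ha, ha2⟩ := ih (fun ν hν => h ν (Multiset.mem_cons_of_mem hν))
    have hζmem : ζ ∈ Algebra.adjoin ℤ ({ζ} : Set ℂ) := Algebra.self_mem_adjoin_singleton ℤ ζ
    have hμmem : μ ∈ Algebra.adjoin ℤ ({ζ} : Set ℂ) := hj ▸ pow_mem hζmem j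
    refine ⟨by simpa using add_mem hμmem hs1, (∑ i ∈ Finset.range j, ζ ^ i) + a,
      add_mem (sum_mem fun i _ => pow_mem hζmem i) ha, ?_⟩
    have hgeo : (∑ i ∈ Finset.range j, ζ ^ i) * (ζ - 1) = ζ ^ j - 1 := geom_sum_mul ζ j
    rw [Multiset.sum_cons, Multiset.card_cons]
    push_cast
    rw [mul_add]
    rw [← ha2, mul_comm (ζ - 1), hgeo, hj]
    ring

lemma trace_mem_adjoin {W : Type} [AddCommGroup W] [Module ℂ W] [FiniteDimensional ℂ W]
    (f : W →ₗ[ℂ] W) {d : ℕ} (hd : 0 < d) (hf : f ^ d = 1) {ζ : ℂ} (hζ : IsPrimitiveRoot ζ d) :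
    LinearMap.trace ℂ W f ∈ Algebra.adjoin ℤ ({ζ} : Set ℂ) ∧
      ∃ a ∈ Algebra.adjoin ℤ ({ζ} : Set ℂ),
        LinearMap.trace ℂ W f - (Module.finrank ℂ W : ℂ) = (ζ - 1) * a := by
  haveI : NeZero d := ⟨hd.ne'⟩
  set b := Module.finBasis ℂ W with hb
  set M := LinearMap.toMatrixAlgEquiv b f with hM
  have hMd : M ^ d = 1 := by
    have := congrArg (LinearMap.toMatrixAlgEquiv b) hf
    rwa [map_pow, map_one] at this
  have htr : LinearMap.trace ℂ W f = M.trace := LinearMap.trace_eq_matrix_trace ℂ b f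
  have hsum : M.trace = M.charpoly.roots.sum := Matrix.trace_eq_sum_roots_charpoly M
  have hsplits : M.charpoly.Splits := IsAlgClosed.splits _
  have hcard : (Multiset.card M.charpoly.roots : ℂ) = (Module.finrank ℂ W : ℂ) := by
    rw [splits_iff_card_roots.mp hsplits, Matrix.charpoly_natDegree_eq_dim, Fintype.card_fin]
  have hroots : ∀ μ ∈ M.charpoly.roots, ∃ j : ℕ, ζ ^ j = μ := by
    intro μ hμ
    have hroot : M.charpoly.IsRoot μ := (Polynomial.mem_roots'.mp hμ).2
    have := matrix_root_pow_eq_one M d hMd hroot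
    obtain ⟨j, _, hj⟩ := hζ.eq_pow_of_pow_eq_one this
    exact ⟨j, hj⟩
  obtain ⟨h1, a, ha, h2⟩ := multiset_sum_aux M.charpoly.roots hroots
  rw [htr, hsum]
  exact ⟨h1, a, ha, by rw [← hcard]; exact h2⟩




lemma char_vals {G : Type} [Group G] (g : G) {d : ℕ} (hd : 0 < d) (hgd : g ^ d = 1)
    {ζ : ℂ} (hζ : IsPrimitiveRoot ζ d) {x : G → ℂ} (hx : x ∈ charRing G) :
    (∃ m : ℤ, x 1 = (m : ℂ)) ∧ x g ∈ Algebra.adjoin ℤ ({ζ} : Set ℂ) ∧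
      ∃ a ∈ Algebra.adjoin ℤ ({ζ} : Set ℂ), x g - x 1 = (ζ - 1) * a := by
  refine Subring.closure_induction ?_ ?_ ?_ ?_ ?_ ?_ hx
  · rintro _ ⟨V, rfl⟩
    have hf : (V.ρ g) ^ d = 1 := by rw [← map_pow, hgd, map_one]
    obtain ⟨h1, a, ha, h2⟩ := trace_mem_adjoin (V.ρ g) hd hf hζ
    have hc1 : V.character 1 = ((Module.finrank ℂ V : ℤ) : ℂ) := by
      rw [FDRep.char_one]; push_cast; ring
    exact ⟨⟨_, hc1⟩, h1, a, ha, by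
      show V.character g - V.character 1 = (ζ - 1) * a
      rw [hc1]; push_cast; exact h2⟩
  · exact ⟨⟨0, by simp⟩, by simp only [Pi.zero_apply]; exact zero_mem _,
      0, zero_mem _, by simp⟩
  · exact ⟨⟨1, by simp⟩, by simp only [Pi.one_apply]; exact one_mem _,
      0, zero_mem _, by simp⟩
  · rintro x y hx hy ⟨⟨m, hm⟩, hxg, a, ha, hxa⟩ ⟨⟨m', hm'⟩, hyg, a', ha', hya⟩
    refine ⟨⟨m + m', by simp [hm, hm']⟩, by simpa using add_mem hxg hyg,
      a + a', add_mem ha ha', ?_⟩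
    simp only [Pi.add_apply]
    rw [mul_add, ← hxa, ← hya]; ring
  · rintro x hx ⟨⟨m, hm⟩, hxg, a, ha, hxa⟩
    refine ⟨⟨-m, by simp [hm]⟩, by simpa using neg_mem hxg, -a, neg_mem ha, ?_⟩
    simp only [Pi.neg_apply]
    rw [mul_neg, ← hxa]; ring
  · rintro x y hx hy ⟨⟨m, hm⟩, hxg, a, ha, hxa⟩ ⟨⟨m', hm'⟩, hyg, a', ha', hya⟩
    have hy1 : y 1 ∈ Algebra.adjoin ℤ ({ζ} : Set ℂ) := by
      rw [hm']; exact intCast_mem _ m'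
    refine ⟨⟨m * m', by simp [hm, hm']⟩, by simpa using mul_mem hxg hyg,
      x g * a' + a * y 1, add_mem (mul_mem hxg ha') (mul_mem ha hy1), ?_⟩
    simp only [Pi.mul_apply]
    have : x g * y g - x 1 * y 1 = x g * (y g - y 1) + (x g - x 1) * y 1 := by ring
    rw [this, hxa, hya]; ring


open Polynomial

lemma span_ne_top (l : ℕ) (hl : l.Prime) {d : ℕ} (hd : 0 < d) {j : ℕ} (hdlj : d = l ^ j)
    {ζ : ℂ} (hζ : IsPrimitiveRoot ζ d) :
    (Ideal.span {((l : ℕ) : ↥(Algebra.adjoin ℤ ({ζ} : Set ℂ))),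
      (⟨ζ, Algebra.self_mem_adjoin_singleton ℤ ζ⟩ - 1 : ↥(Algebra.adjoin ℤ ({ζ} : Set ℂ)))} :
      Ideal ↥(Algebra.adjoin ℤ ({ζ} : Set ℂ))) ≠ ⊤ := by
  haveI : Fact l.Prime := ⟨hl⟩
  haveI : Fact (1 < l) := ⟨hl.one_lt⟩
  set A := Algebra.adjoin ℤ ({ζ} : Set ℂ) with hA
  intro htop
  have h1 : (1 : ↥A) ∈ Ideal.span {((l : ℕ) : ↥A), (⟨ζ, Algebra.self_mem_adjoin_singleton ℤ ζ⟩ - 1 : ↥A)} := by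
    rw [htop]; trivial
  rw [Ideal.mem_span_pair] at h1
  obtain ⟨a, b, hab⟩ := h1
  have habC : (a : ℂ) * l + (b : ℂ) * (ζ - 1) = 1 := by
    have := congrArg (Subtype.val) hab
    push_cast at this
    convert this using 2
  obtain ⟨p, hp⟩ : ∃ p : ℤ[X], aeval ζ p = (a : ℂ) := by
    have h : (a : ℂ) ∈ Algebra.adjoin ℤ ({ζ} : Set ℂ) := a.2
    rwa [Algebra.adjoin_singleton_eq_range_aeval] at h
  obtain ⟨q, hq⟩ : ∃ q : ℤ[X], aeval ζ q = (b : ℂ) := by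
    have h : (b : ℂ) ∈ Algebra.adjoin ℤ ({ζ} : Set ℂ) := b.2
    rwa [Algebra.adjoin_singleton_eq_range_aeval] at h
  set r : ℤ[X] := C (l : ℤ) * p + (X - 1) * q - 1 with hr
  have haev : aeval ζ r = 0 := by
    rw [hr]
    simp only [map_sub, map_add, map_mul, aeval_C, aeval_X, map_one]
    rw [hp, hq]
    push_cast
    linear_combination habC
  have hint : IsIntegral ℤ ζ := hζ.isIntegral hd
  have hdvd : minpoly ℤ ζ ∣ r := minpoly.isIntegrallyClosed_dvd hint haev
  rw [← Polynomial.cyclotomic_eq_minpoly hζ hd] at hdvd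
  obtain ⟨s, hs⟩ := hdvd
  have hev := congrArg (Polynomial.eval₂ (Int.castRingHom (ZMod l)) 1) hs
  rw [Polynomial.eval₂_at_one, Polynomial.eval₂_at_one] at hev
  have hL : ((r.eval 1 : ℤ) : ZMod l) = -1 := by
    rw [hr]
    simp only [eval_sub, eval_add, eval_mul, eval_C, eval_X, eval_one, sub_self, zero_mul]
    push_cast
    simp [ZMod.natCast_self]
  have hcyc : (((cyclotomic d ℤ).eval 1 : ℤ) : ZMod l) = 0 := by
    rcases j with _ | j
    · simp only [pow_zero] at hdlj
      subst hdlj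
      simp [cyclotomic_one]
    · subst hdlj
      rw [eval_one_cyclotomic_prime_pow]
      simp [ZMod.natCast_self]
  rw [eval_mul] at hev
  simp only [map_mul, Int.coe_castRingHom] at hev
  rw [hL, hcyc, zero_mul] at hev
  exact one_ne_zero (neg_eq_zero.mp hev)







/-- Let `G` be a finite `l`-group.  Then the intersection `⋂_n ((l) + I_G)^n` of the powers of
the ideal `(l) + I_G` in the representation ring `R[G]` is the zero ideal. -/
theorem stmt19 (l : ℕ) (hl : l.Prime) (G : Type) [Group G] [Finite G]
    (hG : IsPGroup l G) :
    (⨅ n : ℕ, (Ideal.span {((l : ℕ) : ↥(charRing G))} ⊔ augIdeal G) ^ n : Ideal ↥(charRing G)) = ⊥ := by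
  rw [eq_bot_iff]
  intro x hx
  rw [Ideal.mem_bot]
  have hx' : ∀ n : ℕ, x ∈ (Ideal.span {((l : ℕ) : ↥(charRing G))} ⊔ augIdeal G) ^ n :=
    fun n => Ideal.mem_iInf.mp hx n
  apply Subtype.ext
  funext g
  show x.1 g = (0 : ℂ)
  -- set up
  obtain ⟨k, hk⟩ := hG g
  have hdvd : orderOf g ∣ l ^ k := orderOf_dvd_of_pow_eq_one hk
  obtain ⟨j, _, hdlj⟩ := (Nat.dvd_prime_pow hl).mp hdvd
  set d := orderOf g with hdd
  have hd : 0 < d := orderOf_pos g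
  have hgd : g ^ d = 1 := pow_orderOf_eq_one g
  obtain ⟨ζ, hζ⟩ : ∃ ζ : ℂ, IsPrimitiveRoot ζ d :=
    ⟨_, Complex.isPrimitiveRoot_exp d hd.ne'⟩
  set A := Algebra.adjoin ℤ ({ζ} : Set ℂ) with hA
  -- Noetherian
  have hfg : A.FG := ⟨{ζ}, by simp [hA]⟩
  haveI : Algebra.FiniteType ℤ ↥A := (Subalgebra.fg_iff_finiteType _).mp hfg
  haveI : IsNoetherianRing ↥A := Algebra.FiniteType.isNoetherianRing ℤ ↥A
  -- the evaluation homomorphism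
  have hmem : ∀ y : ↥(charRing G), y.1 g ∈ A :=
    fun y => (char_vals g hd hgd hζ y.2).2.1
  let φ : ↥(charRing G) →+* ↥A :=
    { toFun := fun y => ⟨y.1 g, hmem y⟩
      map_one' := rfl
      map_mul' := fun _ _ => rfl
      map_zero' := rfl
      map_add' := fun _ _ => rfl }
  let ζ' : ↥A := ⟨ζ, Algebra.self_mem_adjoin_singleton ℤ ζ⟩
  let Q : Ideal ↥A := Ideal.span {((l : ℕ) : ↥A), ζ' - 1}
  have hQtop : Q ≠ ⊤ := span_ne_top l hl hd hdlj hζ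
  -- J maps into Q
  have hmapJ : Ideal.map φ (Ideal.span {((l : ℕ) : ↥(charRing G))} ⊔ augIdeal G) ≤ Q := by
    rw [Ideal.map_sup]
    apply sup_le
    · rw [Ideal.map_span, Set.image_singleton]
      rw [Ideal.span_le]
      intro z hz
      rw [Set.mem_singleton_iff] at hz
      subst hz
      have : φ ((l : ℕ) : ↥(charRing G)) = ((l : ℕ) : ↥A) := map_natCast φ l
      rw [this]
      exact Ideal.subset_span (Set.mem_insert _ _)
    · rw [Ideal.map_le_iff_le_comap]
      intro y hy
      have hy1 : y.1 1 = 0 := by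
        have := RingHom.mem_ker.mp hy
        simpa using this
      obtain ⟨a, ha, heq⟩ := (char_vals g hd hgd hζ y.2).2.2
      rw [hy1, sub_zero] at heq
      have hφ : φ y = (ζ' - 1) * ⟨a, ha⟩ := by
        apply Subtype.ext
        exact heq
      show φ y ∈ Q
      rw [hφ]
      exact Ideal.mul_mem_right _ _ (Ideal.subset_span (Set.mem_insert_of_mem _ rfl))
  -- conclude via Krull
  have hxQ : ∀ n : ℕ, φ x ∈ Q ^ n := by
    intro n
    have h1 : φ x ∈ Ideal.map φ ((Ideal.span {((l : ℕ) : ↥(charRing G))} ⊔ augIdeal G) ^ n) :=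
      Ideal.mem_map_of_mem φ (hx' n)
    rw [Ideal.map_pow] at h1
    exact Ideal.pow_right_mono hmapJ n h1
  have hbot : φ x ∈ (⊥ : Ideal ↥A) := by
    rw [← Ideal.iInf_pow_eq_bot_of_isDomain Q hQtop]
    exact Ideal.mem_iInf.mpr hxQ
  have : φ x = 0 := Ideal.mem_bot.mp hbot
  exact congrArg Subtype.val this
end
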